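/- arXiv:1803.08755 — 4 statements merged into one kernel-verified Lean document; each statement's English description precedes it below -/
import Mathlib

section
/- There exist constants c₁, c₂ > 0 such that for all integers H ≥ 2, c₁·H²·log H ≤ D_4(2,2;H) ≤ c₂·H²·log H, where log denotes the natural logarithm. -/
open Polynomial

/-- The height of an integer polynomial is at most `H`. -/
def HeightLe (f : ℤ[X]) (H : ℕ) : Prop := ∀ i, |f.coeff i| ≤ (H : ℤ)

/-- `DMonic d m n H` is the number of monic integer polynomials of degree `d` and
height at most `H` that are a composition `g ∘ h` with `deg g = m`, `deg h = n`. -/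
noncomputable def DMonic (d m n : ℕ) (H : ℕ) : ℕ :=
  Nat.card {f : ℤ[X] // f.Monic ∧ f.natDegree = d ∧ HeightLe f H ∧
    ∃ g h : ℤ[X], g.natDegree = m ∧ h.natDegree = n ∧ f = g.comp h}

section Aux
open Finset

noncomputable def Fq (p v w : ℤ) : ℤ[X] := X^4 + C (2*p)*X^3 + C (p^2+v)*X^2 + C (p*v)*X + C w

lemma Fq_coeff (p v w : ℤ) (n : ℕ) : (Fq p v w).coeff n =
    if n = 4 then 1 else if n = 3 then 2*p else if n = 2 then p^2+v else
    if n = 1 then p*v else if n = 0 then w else 0 := by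
  simp only [Fq, coeff_add, coeff_C_mul, coeff_X_pow, coeff_X, coeff_C, mul_ite, mul_one, mul_zero]
  rcases n with _|_|_|_|_|n <;> norm_num
  split_ifs <;> first | (exfalso; omega) | norm_num

lemma Fq_natDegree (p v w : ℤ) : (Fq p v w).natDegree = 4 := by
  have h1 : (Fq p v w).coeff 4 = 1 := by rw [Fq_coeff]; norm_num
  apply le_antisymm
  · apply natDegree_le_iff_coeff_eq_zero.mpr
    intro n hn
    rw [Fq_coeff]
    have : n ≠ 4 ∧ n ≠ 3 ∧ n ≠ 2 ∧ n ≠ 1 ∧ n ≠ 0 := by omega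
    simp [this.1, this.2.1, this.2.2.1, this.2.2.2.1, this.2.2.2.2]
  · exact le_natDegree_of_ne_zero (by rw [h1]; norm_num)

lemma Fq_monic (p v w : ℤ) : (Fq p v w).Monic := by
  unfold Monic leadingCoeff
  rw [Fq_natDegree, Fq_coeff]; norm_num


lemma natDegree_q (v w : ℤ) : (X^2 + C v * X + C w : ℤ[X]).natDegree = 2 := by
  rw [show (X^2 + C v * X + C w : ℤ[X]) = C 1 * X^2 + C v * X + C w by rw [C_1]; ring]
  exact natDegree_quadratic one_ne_zero

lemma Fq_decomp (p v w : ℤ) : ∃ g h : ℤ[X], g.natDegree = 2 ∧ h.natDegree = 2 ∧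
    Fq p v w = g.comp h := by
  refine ⟨X^2 + C v * X + C w, X^2 + C p * X + C 0, natDegree_q v w, natDegree_q p 0, ?_⟩
  simp only [Fq, add_comp, mul_comp, pow_comp, C_comp, X_comp, C_0, add_zero, C_add, C_mul, C_pow,
    map_ofNat]
  ring

lemma quad_expand (q : ℤ[X]) (hq : q.natDegree ≤ 2) :
    q = C (q.coeff 2) * X^2 + C (q.coeff 1) * X + C (q.coeff 0) := by
  ext n
  simp only [coeff_add, coeff_C_mul, coeff_X_pow, coeff_X, coeff_C, mul_ite, mul_one, mul_zero]
  rcases n with _|_|_|n <;> norm_num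
  exact coeff_eq_zero_of_natDegree_lt (by omega)

lemma comp_key (g1 g0 h2 h1 h0 : ℤ) (he : h2 = 1 ∨ h2 = -1) :
    (C 1 * X^2 + C g1 * X + C g0).comp (C h2 * X^2 + C h1 * X + C h0) =
      Fq (h2*h1) (h2*(2*h0+g1)) (h0^2 + g1*h0 + g0) := by
  rcases he with h | h <;> subst h <;>
    simp only [Fq, add_comp, mul_comp, pow_comp, C_comp, X_comp, C_1, C_neg, one_mul, C_add,
      C_mul, C_pow, map_ofNat] <;> ring

lemma exists_pvw (f g h : ℤ[X]) (hf : f.Monic)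
    (hg : g.natDegree = 2) (hh : h.natDegree = 2) (he : f = g.comp h) :
    ∃ p v w : ℤ, f = Fq p v w := by
  have hlc : g.leadingCoeff * h.leadingCoeff ^ g.natDegree = 1 := by
    rw [← leadingCoeff_comp (by rw [hh]; norm_num), ← he]; exact hf
  rw [hg] at hlc
  have hgl : g.leadingCoeff = g.coeff 2 := by rw [leadingCoeff, hg]
  have hhl : h.leadingCoeff = h.coeff 2 := by rw [leadingCoeff, hh]
  rw [hgl, hhl] at hlc
  have hdvd : h.coeff 2 ∣ 1 := Dvd.dvd.trans (dvd_pow_self _ two_ne_zero) ⟨g.coeff 2, by linarith⟩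
  have he1 : h.coeff 2 = 1 ∨ h.coeff 2 = -1 := Int.isUnit_iff.mp (isUnit_of_dvd_one hdvd)
  have hg2 : g.coeff 2 = 1 := by rcases he1 with h1 | h1 <;> rw [h1] at hlc <;> linarith
  exact ⟨_, _, _, by
    rw [he, quad_expand g hg.le, hg2, quad_expand h hh.le]
    exact comp_key _ _ _ _ _ he1⟩


lemma Fq_inj : Function.Injective (fun x : (ℤ × ℤ) × ℤ => Fq x.1.1 x.1.2 x.2) := by
  rintro ⟨⟨p, v⟩, w⟩ ⟨⟨p', v'⟩, w'⟩ hid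
  simp only at hid
  have h3 := congrArg (fun q : ℤ[X] => q.coeff 3) hid
  have h2 := congrArg (fun q : ℤ[X] => q.coeff 2) hid
  have h0 := congrArg (fun q : ℤ[X] => q.coeff 0) hid
  simp only [Fq_coeff] at h3 h2 h0
  norm_num at h3 h2 h0
  have hp : p = p' := by omega
  subst hp
  have hv : v = v' := by nlinarith
  simp_all

lemma height_bounds {f : ℤ[X]} {H : ℕ} (hH : HeightLe f H) {p v w : ℤ} (hf : f = Fq p v w) :
    |p| ≤ (H:ℤ) ∧ |v| ≤ (H:ℤ) ∧ |p*v| ≤ (H:ℤ) ∧ |w| ≤ (H:ℤ) ∧ |2*p| ≤ (H:ℤ) ∧ |p^2+v| ≤ (H:ℤ) := by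
  have h3 := hH 3; have h2 := hH 2; have h1 := hH 1; have h0 := hH 0
  rw [hf, Fq_coeff] at h3 h2 h1 h0
  norm_num at h3 h2 h1 h0
  have habs : |2*p| = 2*|p| := by rw [abs_mul]; norm_num
  rw [← habs] at h3; rw [← abs_mul] at h1
  refine ⟨by rw [habs] at h3; linarith [abs_nonneg p], ?_, h1, h0, h3, h2⟩
  rcases eq_or_ne p 0 with hp | hp
  · subst hp; simpa using h2
  · have h1' : |p| * |v| ≤ (H:ℤ) := by rw [← abs_mul]; exact h1
    nlinarith [abs_nonneg v, Int.one_le_abs hp]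


abbrev SP (H : ℕ) := {f : ℤ[X] // f.Monic ∧ f.natDegree = 4 ∧ HeightLe f H ∧
    ∃ g h : ℤ[X], g.natDegree = 2 ∧ h.natDegree = 2 ∧ f = g.comp h}

noncomputable def Bx (H : ℕ) : Finset ℤ := Finset.Icc (-(H:ℤ)) H

noncomputable def Tset (H : ℕ) : Finset ((ℤ × ℤ) × ℤ) :=
  ((Bx H ×ˢ Bx H).filter fun q => |q.1 * q.2| ≤ (H:ℤ)) ×ˢ Bx H

lemma sp_repr {H : ℕ} (f : SP H) : ∃ x : (ℤ × ℤ) × ℤ, f.1 = Fq x.1.1 x.1.2 x.2 ∧ x ∈ Tset H := by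
  obtain ⟨f, hm, hd, hht, g, h, hg, hh, he⟩ := f
  obtain ⟨p, v, w, hf⟩ := exists_pvw f g h hm hg hh he
  obtain ⟨b1, b2, b3, b4, _, _⟩ := height_bounds hht hf
  refine ⟨((p, v), w), hf, ?_⟩
  simp only [Tset, Bx, mem_product, mem_filter, mem_Icc]
  constructor
  · exact ⟨⟨⟨by linarith [abs_le.mp b1], by linarith [abs_le.mp b1]⟩,
      by linarith [abs_le.mp b2], by linarith [abs_le.mp b2]⟩, b3⟩
  · exact ⟨by linarith [abs_le.mp b4], by linarith [abs_le.mp b4]⟩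

noncomputable def phi {H : ℕ} (f : SP H) : {x // x ∈ Tset H} :=
  ⟨(sp_repr f).choose, (sp_repr f).choose_spec.2⟩

lemma phi_inj {H : ℕ} : Function.Injective (phi (H := H)) := by
  intro f f' heq
  have h1 := (sp_repr f).choose_spec.1
  have h2 := (sp_repr f').choose_spec.1
  have : (sp_repr f).choose = (sp_repr f').choose := congrArg Subtype.val heq
  apply Subtype.ext
  rw [h1, h2, this]

instance spFinite (H : ℕ) : Finite (SP H) := Finite.of_injective _ phi_inj

lemma DMonic_le_Tcard (H : ℕ) : DMonic 4 2 2 H ≤ (Tset H).card := by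
  rw [show DMonic 4 2 2 H = Nat.card (SP H) from rfl]
  have := Nat.card_le_card_of_injective _ (phi_inj (H := H))
  rwa [Nat.card_eq_finsetCard] at this

lemma Bx_card (H : ℕ) : (Bx H).card = 2*H+1 := by
  rw [Bx, Int.card_Icc]
  omega

noncomputable def Pset (H : ℕ) : Finset (ℤ × ℤ) :=
  (Bx H ×ˢ Bx H).filter fun q => |q.1 * q.2| ≤ (H:ℤ)

lemma Tset_card (H : ℕ) : (Tset H).card = (Pset H).card * (2*H+1) := by
  rw [Tset, card_product, Bx_card, Pset]

lemma Pset_card_le (H : ℕ) :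
    (Pset H).card ≤ ∑ p ∈ Bx H, (2*(H / max 1 p.natAbs) + 1) := by
  have hsub : Pset H ⊆ (Bx H).biUnion (fun p =>
      {p} ×ˢ Finset.Icc (-((H / max 1 p.natAbs : ℕ):ℤ)) ((H / max 1 p.natAbs : ℕ):ℤ)) := by
    rintro ⟨p, v⟩ hpv
    simp only [Pset, mem_filter, mem_product, Bx, mem_Icc] at hpv
    obtain ⟨⟨⟨hp1, hp2⟩, hv1, hv2⟩, hpv⟩ := hpv
    simp only [mem_biUnion, mem_product, mem_singleton, mem_Icc, Bx]
    refine ⟨p, by simp [mem_Icc, hp1, hp2], rfl, ?_⟩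
    have hnat : v.natAbs ≤ H / max 1 p.natAbs := by
      rcases Nat.eq_zero_or_pos p.natAbs with h0 | h0
      · simp only [h0]
        norm_num
        omega
      · rw [max_eq_right h0, Nat.le_div_iff_mul_le h0]
        have : (↑(v.natAbs * p.natAbs) : ℤ) ≤ (H:ℤ) := by
          push_cast
          rw [← abs_mul, mul_comm]
          exact hpv
        exact_mod_cast this
    omega
  calc (Pset H).card ≤ _ := card_le_card hsub
    _ ≤ ∑ p ∈ Bx H, ({p} ×ˢ Finset.Icc (-((H / max 1 p.natAbs : ℕ):ℤ)) ((H / max 1 p.natAbs : ℕ):ℤ)).card :=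
        card_biUnion_le
    _ ≤ _ := by
        apply sum_le_sum
        intro p _
        rw [card_product, card_singleton, one_mul, Int.card_Icc]
        omega

lemma sum_natAbs_le {M : ℕ} (t : ℕ → ℕ) :
    ∑ p ∈ Bx M, t p.natAbs ≤ 2 * ∑ k ∈ Finset.range (M+1), t k := by
  have hsub : Bx M ⊆ (Finset.range (M+1)).image (Nat.cast : ℕ → ℤ) ∪
      (Finset.range (M+1)).image (fun k : ℕ => -(k:ℤ)) := by
    intro p hp
    simp only [Bx, mem_Icc] at hp
    simp only [mem_union, mem_image, mem_range]
    rcases le_or_gt 0 p with h0 | h0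
    · exact Or.inl ⟨p.natAbs, by omega, by omega⟩
    · exact Or.inr ⟨p.natAbs, by omega, by omega⟩
  calc ∑ p ∈ Bx M, t p.natAbs ≤ _ := sum_le_sum_of_subset hsub
    _ ≤ ∑ p ∈ (Finset.range (M+1)).image (Nat.cast : ℕ → ℤ), t p.natAbs +
        ∑ p ∈ (Finset.range (M+1)).image (fun k : ℕ => -(k:ℤ)), t p.natAbs := by
        have := Finset.sum_union_inter (s₁ := (Finset.range (M+1)).image (Nat.cast : ℕ → ℤ))
          (s₂ := (Finset.range (M+1)).image (fun k : ℕ => -(k:ℤ))) (f := fun p : ℤ => t p.natAbs)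
        omega
    _ ≤ _ := by
        rw [sum_image (by intro a _ b _ hab; exact_mod_cast hab),
          sum_image (by intro a _ b _ hab; exact Nat.cast_injective (neg_injective hab))]
        simp only [Int.natAbs_natCast, Int.natAbs_neg]
        omega

lemma sum_inv_max (H : ℕ) :
    ∑ k ∈ Finset.range (H+1), (1:ℝ)/(max 1 k : ℕ) ≤ 2 + Real.log H := by
  rw [Finset.sum_range_succ']
  have h0 : ((max 1 0 : ℕ) : ℝ) = 1 := by norm_num
  rw [h0]
  have hstep : ∀ i ∈ Finset.range H, (1:ℝ)/((max 1 (i+1) : ℕ):ℝ) = ((i:ℝ)+1)⁻¹ := by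
    intro i _
    rw [max_eq_right (by omega)]
    push_cast
    rw [one_div]
  rw [Finset.sum_congr rfl hstep]
  have : ∑ i ∈ Finset.range H, ((i:ℝ)+1)⁻¹ = ((harmonic H : ℚ) : ℝ) := by
    rw [harmonic]
    push_cast
    rfl
  rw [this, div_one]
  have := harmonic_le_one_add_log H
  linarith

lemma sum_t_le (H : ℕ) :
    ((∑ k ∈ Finset.range (H+1), (2*(H / max 1 k) + 1) : ℕ) : ℝ) ≤
      ((H:ℝ)+1) + 2*(H:ℝ)*(2 + Real.log H) := by
  have h1 : ∀ k ∈ Finset.range (H+1), ((2*(H / max 1 k) + 1 : ℕ) : ℝ) ≤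
      2*(H:ℝ)*((1:ℝ)/(max 1 k : ℕ)) + 1 := by
    intro k _
    have hm : 0 < ((max 1 k : ℕ):ℝ) := by positivity
    have hd : ((H / max 1 k : ℕ) : ℝ) ≤ (H:ℝ)/((max 1 k : ℕ):ℝ) := by
      rw [le_div_iff₀ hm]
      exact_mod_cast Nat.div_mul_le_self H (max 1 k)
    have hc : ((2*(H / max 1 k) + 1 : ℕ) : ℝ) = 2*((H / max 1 k : ℕ):ℝ) + 1 := by
      push_cast; ring
    have hr : 2*(H:ℝ)*((1:ℝ)/((max 1 k : ℕ):ℝ)) = 2*((H:ℝ)/((max 1 k : ℕ):ℝ)) := by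
      ring
    rw [hc, hr]
    linarith
  have hS := sum_inv_max H
  have hH0 : (0:ℝ) ≤ (H:ℝ) := Nat.cast_nonneg H
  calc ((∑ k ∈ Finset.range (H+1), (2*(H / max 1 k) + 1) : ℕ) : ℝ)
      = ∑ k ∈ Finset.range (H+1), ((2*(H / max 1 k) + 1 : ℕ) : ℝ) := by push_cast; rfl
    _ ≤ ∑ k ∈ Finset.range (H+1), (2*(H:ℝ)*((1:ℝ)/(max 1 k : ℕ)) + 1) := Finset.sum_le_sum h1
    _ = 2*(H:ℝ) * (∑ k ∈ Finset.range (H+1), (1:ℝ)/(max 1 k : ℕ)) + ((H:ℝ)+1) := by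
        rw [Finset.sum_add_distrib, ← Finset.mul_sum]
        simp
    _ ≤ ((H:ℝ)+1) + 2*(H:ℝ)*(2 + Real.log H) := by nlinarith

lemma DMonic_upper (H : ℕ) (hH : 2 ≤ H) :
    (DMonic 4 2 2 H : ℝ) ≤ 50 * (H:ℝ)^2 * Real.log H := by
  have hcard : DMonic 4 2 2 H ≤ (2 * ∑ k ∈ Finset.range (H+1), (2*(H / max 1 k) + 1)) * (2*H+1) := by
    calc DMonic 4 2 2 H ≤ (Tset H).card := DMonic_le_Tcard H
      _ = (Pset H).card * (2*H+1) := Tset_card H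
      _ ≤ _ := by
          apply Nat.mul_le_mul_right
          exact le_trans (Pset_card_le H) (sum_natAbs_le (M := H) (fun k => 2*(H/max 1 k)+1))
  have hc : (DMonic 4 2 2 H : ℝ) ≤ (2 * ((((H:ℝ)+1) + 2*(H:ℝ)*(2 + Real.log H)))) * (2*(H:ℝ)+1) := by
    calc (DMonic 4 2 2 H : ℝ)
        ≤ ((2 * ∑ k ∈ Finset.range (H+1), (2*(H / max 1 k) + 1)) * (2*H+1) : ℕ) := by
          exact_mod_cast hcard
      _ = 2 * ((∑ k ∈ Finset.range (H+1), (2*(H / max 1 k) + 1) : ℕ) : ℝ) * (2*(H:ℝ)+1) := by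
          push_cast; ring
      _ ≤ _ := by
          have := sum_t_le H
          have h1 : (0:ℝ) ≤ 2*(H:ℝ)+1 := by positivity
          nlinarith
  have hL : (0.693:ℝ) ≤ Real.log H := by
    have h2 : (0.693:ℝ) ≤ Real.log 2 := by
      have := Real.log_two_gt_d9
      linarith
    have : Real.log 2 ≤ Real.log H := by
      apply Real.log_le_log (by norm_num)
      exact_mod_cast hH
    linarith
  have hH2 : (2:ℝ) ≤ (H:ℝ) := by exact_mod_cast hH
  nlinarith [sq_nonneg ((H:ℝ) - 2), Real.log_nonneg (by linarith : (1:ℝ) ≤ (H:ℝ))]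

def msq (H : ℕ) : ℕ := Nat.sqrt (H / 2)

noncomputable def Lset (H : ℕ) : Finset ((ℤ × ℤ) × ℤ) :=
  ((Finset.Icc 1 (msq H)).biUnion fun p : ℕ =>
    {((p:ℤ))} ×ˢ Finset.Icc (1:ℤ) ((H/(2*p) : ℕ):ℤ)) ×ˢ Bx H

lemma Lset_mem {H : ℕ} {x : (ℤ × ℤ) × ℤ} (hx : x ∈ Lset H) :
    ∃ p : ℕ, 1 ≤ p ∧ p ≤ msq H ∧ x.1.1 = (p:ℤ) ∧ 1 ≤ x.1.2 ∧ x.1.2 ≤ ((H/(2*p) : ℕ):ℤ) ∧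
      |x.2| ≤ (H:ℤ) := by
  simp only [Lset, mem_product, mem_biUnion, mem_Icc, mem_singleton, Bx] at hx
  obtain ⟨⟨p, ⟨hp1, hp2⟩, h1, h2, h3⟩, hw1, hw2⟩ := hx
  exact ⟨p, hp1, hp2, h1, h2, h3, abs_le.mpr ⟨hw1, hw2⟩⟩

lemma Lheight {H : ℕ} {x : (ℤ × ℤ) × ℤ} (hx : x ∈ Lset H) :
    HeightLe (Fq x.1.1 x.1.2 x.2) H := by
  obtain ⟨p, hp1, hp2, hxp, hv1, hv2, hw⟩ := Lset_mem hx
  -- nat facts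
  have hsq : msq H * msq H ≤ H / 2 := by
    have := Nat.sqrt_le' (H / 2); simpa [msq, pow_two] using this
  have hpp : p * p ≤ H / 2 := le_trans (Nat.mul_le_mul hp2 hp2) hsq
  have hple : p ≤ H / 2 := hp2.trans (Nat.sqrt_le_self _)
  have h2p : 2 * p ≤ H := by omega
  have hdiv2 : H / (2*p) ≤ H / 2 := Nat.div_le_div_left (by omega : 2 ≤ 2*p) (by omega : 0 < 2)
  have hHpos : 2 ≤ H := by omega
  have hmul : p * (H / (2*p)) ≤ H := by
    have := Nat.div_mul_le_self H (2*p)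
    nlinarith
  intro i
  rw [Fq_coeff]
  have hv2' : x.1.2 ≤ ((H/2 : ℕ):ℤ) := le_trans hv2 (by exact_mod_cast hdiv2)
  split_ifs
  · simp; omega
  · -- |2 * p| ≤ H
    rw [hxp, abs_of_nonneg (by positivity)]
    push_cast
    omega
  · -- |p^2 + v| ≤ H
    rw [hxp, abs_of_nonneg (by positivity)]
    have h1 : ((p:ℤ))^2 ≤ ((H/2 : ℕ):ℤ) := by
      have : ((p*p : ℕ):ℤ) ≤ ((H/2:ℕ):ℤ) := by exact_mod_cast hpp
      push_cast at this ⊢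
      nlinarith
    have h2 : ((H/2:ℕ):ℤ) + ((H/2:ℕ):ℤ) ≤ (H:ℤ) := by
      have : H/2 + H/2 ≤ H := by omega
      exact_mod_cast this
    linarith
  · -- |p * v| ≤ H
    rw [hxp, abs_of_nonneg (by positivity)]
    calc (p:ℤ) * x.1.2 ≤ (p:ℤ) * ((H/(2*p) : ℕ):ℤ) := by
          apply mul_le_mul_of_nonneg_left hv2 (by positivity)
      _ = ((p * (H/(2*p)) : ℕ):ℤ) := by push_cast; ring
      _ ≤ (H:ℤ) := by exact_mod_cast hmul
  · exact hw
  · simp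

noncomputable def psi {H : ℕ} (x : {x // x ∈ Lset H}) : SP H :=
  ⟨Fq x.1.1.1 x.1.1.2 x.1.2, Fq_monic _ _ _, Fq_natDegree _ _ _, Lheight x.2, Fq_decomp _ _ _⟩

lemma psi_inj {H : ℕ} : Function.Injective (psi (H := H)) := by
  intro x y hxy
  have := Fq_inj (congrArg Subtype.val hxy)
  exact Subtype.ext this

lemma Lcard_le_DMonic (H : ℕ) : (Lset H).card ≤ DMonic 4 2 2 H := by
  rw [show DMonic 4 2 2 H = Nat.card (SP H) from rfl]
  have := Nat.card_le_card_of_injective _ (psi_inj (H := H))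
  rwa [Nat.card_eq_finsetCard] at this

lemma Lset_card (H : ℕ) :
    (Lset H).card = (∑ p ∈ Finset.Icc 1 (msq H), H/(2*p)) * (2*H+1) := by
  rw [Lset, card_product, Bx_card]
  congr 1
  rw [card_biUnion]
  · apply Finset.sum_congr rfl
    intro p _
    rw [card_product, card_singleton, one_mul, Int.card_Icc, add_sub_cancel_right,
      Int.toNat_natCast]
  · intro a _ b _ hab
    simp only [disjoint_left, mem_product, mem_singleton]
    rintro ⟨x, y⟩ ⟨h1, -⟩ ⟨h2, -⟩
    exact hab (by exact_mod_cast h1 ▸ h2)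

lemma DMonic_pos (H : ℕ) (hH : 2 ≤ H) : 1 ≤ DMonic 4 2 2 H := by
  rw [show DMonic 4 2 2 H = Nat.card (SP H) from rfl]
  have hne : Nonempty (SP H) := by
    refine ⟨⟨Fq 0 0 0, Fq_monic _ _ _, Fq_natDegree _ _ _, ?_, Fq_decomp _ _ _⟩⟩
    intro i
    rw [Fq_coeff]
    split_ifs <;> simp <;> omega
  exact Nat.one_le_iff_ne_zero.mpr (Nat.card_ne_zero.mpr ⟨hne, spFinite H⟩)

lemma sum_lower (H : ℕ) :
    (H:ℝ)/2 * Real.log ((msq H : ℝ)+1) - msq H ≤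
      ((∑ p ∈ Finset.Icc 1 (msq H), H/(2*p) : ℕ) : ℝ) := by
  set m := msq H with hm
  have hterm : ∀ p ∈ Finset.Icc 1 m, (H:ℝ)/2 * (1/(p:ℝ)) - 1 ≤ ((H/(2*p) : ℕ):ℝ) := by
    intro p hp
    simp only [Finset.mem_Icc] at hp
    have hp0 : 0 < p := hp.1
    have hnat : H < 2*p*(H/(2*p)) + 2*p := by
      have h1 := Nat.div_add_mod H (2*p)
      have h2 : H % (2*p) < 2*p := Nat.mod_lt H (by omega)
      omega
    have hreal : (H:ℝ) < 2*(p:ℝ)*((H/(2*p) : ℕ):ℝ) + 2*(p:ℝ) := by exact_mod_cast hnat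
    have hppos : (0:ℝ) < (p:ℝ) := by exact_mod_cast hp0
    have e1 : (H:ℝ)/2 * (1/(p:ℝ)) = (H:ℝ)/(2*(p:ℝ)) := by ring
    have key : (H:ℝ)/2 * (1/(p:ℝ)) ≤ ((H/(2*p) : ℕ):ℝ) + 1 := by
      rw [e1, div_le_iff₀ (by positivity : (0:ℝ) < 2*(p:ℝ))]
      nlinarith
    linarith
  have hlog : Real.log ((m:ℝ)+1) ≤ ((harmonic m : ℚ):ℝ) := by
    have := log_add_one_le_harmonic m
    push_cast at this ⊢
    exact this
  have hharm : ∑ p ∈ Finset.Icc 1 m, (1:ℝ)/(p:ℝ) = ((harmonic m : ℚ):ℝ) := by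
    rw [harmonic_eq_sum_Icc]
    push_cast
    simp [one_div]
  have hH2 : (0:ℝ) ≤ (H:ℝ)/2 := by positivity
  calc (H:ℝ)/2 * Real.log ((m:ℝ)+1) - m
      ≤ (H:ℝ)/2 * ((harmonic m : ℚ):ℝ) - m := by nlinarith
    _ = ∑ p ∈ Finset.Icc 1 m, ((H:ℝ)/2 * (1/(p:ℝ))) - m := by
        rw [← Finset.mul_sum, hharm]
    _ = ∑ p ∈ Finset.Icc 1 m, ((H:ℝ)/2 * (1/(p:ℝ)) - 1) := by
        rw [Finset.sum_sub_distrib]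
        simp [Nat.card_Icc]
    _ ≤ ∑ p ∈ Finset.Icc 1 m, ((H/(2*p) : ℕ):ℝ) := Finset.sum_le_sum hterm
    _ = _ := by push_cast; rfl

lemma DMonic_lower (H : ℕ) (hH : 16 ≤ H) :
    (H:ℝ)^2 * Real.log H / 10 ≤ (DMonic 4 2 2 H : ℝ) := by
  set m := msq H with hmdef
  set l2 := Real.log 2 with hl2def
  set L := Real.log H with hLdef
  have hH16 : (16:ℝ) ≤ (H:ℝ) := by exact_mod_cast hH
  have hl2a : (0.6931:ℝ) ≤ l2 := by
    have := Real.log_two_gt_d9; rw [hl2def]; linarith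
  have hl2b : l2 ≤ (0.6932:ℝ) := by
    have := Real.log_two_lt_d9; rw [hl2def]; linarith
  have hL16 : 4*l2 ≤ L := by
    have h1 : Real.log 16 ≤ L := by
      rw [hLdef]; exact Real.log_le_log (by norm_num) hH16
    have h2 : Real.log 16 = 4*l2 := by
      rw [hl2def, show (16:ℝ) = 2^4 by norm_num, Real.log_pow]
      push_cast; ring
    linarith
  have hLlb : (2.772:ℝ) ≤ L := by nlinarith
  -- m bounds
  have hmm : (m:ℝ)*(m:ℝ) ≤ (H:ℝ)/2 := by
    have h1 : m * m ≤ H / 2 := by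
      have := Nat.sqrt_le' (H / 2)
      simpa [hmdef, msq, pow_two] using this
    have h2 : ((m*m : ℕ):ℝ) ≤ ((H/2 : ℕ):ℝ) := by exact_mod_cast h1
    have h3 : ((H/2 : ℕ):ℝ) ≤ (H:ℝ)/2 := by
      rw [le_div_iff₀ (by norm_num : (0:ℝ) < 2)]
      exact_mod_cast Nat.div_mul_le_self H 2
    push_cast at h2
    linarith
  have hm4 : (m:ℝ) ≤ (H:ℝ)/4 := by nlinarith [Nat.cast_nonneg (α := ℝ) m]
  have hm2 : (H:ℝ)/2 ≤ ((m:ℝ)+1)^2 := by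
    have h1 : H/2 < (m+1)*(m+1) := by
      have := Nat.lt_succ_sqrt' (H/2)
      simpa [hmdef, msq, pow_two, Nat.succ_eq_add_one] using this
    have h2 : ((H/2 : ℕ):ℝ) + 1 ≤ (((m+1)*(m+1) : ℕ):ℝ) := by exact_mod_cast h1
    have h3 : (H:ℝ)/2 - 1 ≤ ((H/2:ℕ):ℝ) := by
      have : H ≤ 2*(H/2) + 1 := by omega
      have h4 : (H:ℝ) ≤ 2*((H/2:ℕ):ℝ) + 1 := by exact_mod_cast this
      linarith
    push_cast at h2
    nlinarith
  have hlogm : (L - l2)/2 ≤ Real.log ((m:ℝ)+1) := by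
    have hpos : (0:ℝ) < (H:ℝ)/2 := by linarith
    have h1 : Real.log ((H:ℝ)/2) ≤ Real.log (((m:ℝ)+1)^2) :=
      Real.log_le_log hpos hm2
    have h2 : Real.log (((m:ℝ)+1)^2) = 2 * Real.log ((m:ℝ)+1) := by
      rw [Real.log_pow]; push_cast; ring
    have h3 : Real.log ((H:ℝ)/2) = L - l2 := by
      rw [hLdef, hl2def, Real.log_div (by linarith) (by norm_num)]
    linarith
  -- cardinality chain
  have hDn : (Lset H).card ≤ DMonic 4 2 2 H := Lcard_le_DMonic H
  have hD : (((∑ p ∈ Finset.Icc 1 m, H/(2*p) : ℕ) : ℝ)) * (2*(H:ℝ)+1) ≤ (DMonic 4 2 2 H : ℝ) := by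
    have := Lset_card H
    have hcast : ((Lset H).card : ℝ) = ((∑ p ∈ Finset.Icc 1 m, H/(2*p) : ℕ) : ℝ) * (2*(H:ℝ)+1) := by
      rw [this]; push_cast; ring
    rw [← hcast]
    exact_mod_cast hDn
  have hS := sum_lower H
  rw [← hmdef] at hS
  have hA : (H:ℝ)/2 * ((L - l2)/2) - (H:ℝ)/4 ≤ ((∑ p ∈ Finset.Icc 1 m, H/(2*p) : ℕ) : ℝ) := by
    have hmono : (H:ℝ)/2 * ((L-l2)/2) ≤ (H:ℝ)/2 * Real.log ((m:ℝ)+1) := by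
      apply mul_le_mul_of_nonneg_left hlogm (by positivity)
    linarith
  have hApos : (0:ℝ) ≤ (H:ℝ)/2 * ((L - l2)/2) - (H:ℝ)/4 := by nlinarith
  have h2H : (0:ℝ) ≤ 2*(H:ℝ)+1 := by linarith
  calc (H:ℝ)^2 * L / 10
      ≤ ((H:ℝ)/2 * ((L - l2)/2) - (H:ℝ)/4) * (2*(H:ℝ)+1) := by nlinarith
    _ ≤ ((∑ p ∈ Finset.Icc 1 m, H/(2*p) : ℕ) : ℝ) * (2*(H:ℝ)+1) := by
        apply mul_le_mul_of_nonneg_right hA h2H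
    _ ≤ _ := hD


end Aux

theorem stmt_1 :
    ∃ c₁ c₂ : ℝ, 0 < c₁ ∧ 0 < c₂ ∧ ∀ H : ℕ, 2 ≤ H →
      c₁ * (H : ℝ) ^ 2 * Real.log H ≤ (DMonic 4 2 2 H : ℝ) ∧
      (DMonic 4 2 2 H : ℝ) ≤ c₂ * (H : ℝ) ^ 2 * Real.log H := by
  refine ⟨1/1000, 50, by norm_num, by norm_num, fun H hH => ⟨?_, ?_⟩⟩
  · rcases le_or_gt 16 H with h16 | h16
    · have := DMonic_lower H h16
      have hL : 0 ≤ Real.log H := Real.log_nonneg (by exact_mod_cast Nat.one_le_of_lt hH)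
      have hH0 : (0:ℝ) ≤ (H:ℝ) := Nat.cast_nonneg H
      nlinarith
    · have hD : (1:ℝ) ≤ (DMonic 4 2 2 H : ℝ) := by exact_mod_cast DMonic_pos H hH
      have hHle : (H:ℝ) ≤ 15 := by exact_mod_cast Nat.lt_succ_iff.mp h16
      have hH0 : (2:ℝ) ≤ (H:ℝ) := by exact_mod_cast hH
      have hLle : Real.log H ≤ Real.log 16 := Real.log_le_log (by linarith) (by linarith)
      have hlog16 : Real.log 16 ≤ 2.7728 := by
        rw [show (16:ℝ) = 2^4 by norm_num, Real.log_pow]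
        have := Real.log_two_lt_d9
        push_cast
        nlinarith
      have hL0 : 0 ≤ Real.log H := Real.log_nonneg (by linarith)
      nlinarith
  · exact DMonic_upper H hH
end

section
/- Let d ≥ 4 be an integer and let m, n be integers with m ≥ 2, n ≥ 2 and d = mn. If m(m-1) ≤ 2(n-2), then there exists a constant c > 0 (depending only on d) such that for all integers H ≥ 2, D_d(m,n;H) ≤ c·H^{(m+1)/2 + (n-1)/m}, where the exponent (m+1)/2 + (n-1)/m is a real number. -/
open Polynomial

noncomputable section DAux
namespace DAux
open Polynomial Finset

def ht (p : ℤ[X]) : ℕ := (Finset.range (p.natDegree + 1)).sup fun i => (p.coeff i).natAbs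

lemma natAbs_coeff_le_ht (p : ℤ[X]) (i : ℕ) : (p.coeff i).natAbs ≤ ht p := by
  rcases le_or_gt i p.natDegree with hi | hi
  · exact Finset.le_sup (f := fun i => (p.coeff i).natAbs) (Finset.mem_range.mpr (Nat.lt_succ_of_le hi))
  · simp [Polynomial.coeff_eq_zero_of_natDegree_lt hi]

lemma ht_le_iff {p : ℤ[X]} {W : ℕ} : ht p ≤ W ↔ ∀ i, (p.coeff i).natAbs ≤ W := by
  constructor
  · exact fun h i => le_trans (natAbs_coeff_le_ht p i) h
  · intro h
    exact Finset.sup_le fun i _ => h i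

lemma heightLe_iff {p : ℤ[X]} {H : ℕ} : HeightLe p H ↔ ht p ≤ H := by
  rw [ht_le_iff]
  unfold HeightLe
  constructor <;> intro h i <;> have := h i <;>
    [skip; rw [Int.abs_eq_natAbs]] <;> [rw [Int.abs_eq_natAbs] at this; skip] <;> omega

lemma ht_C (a : ℤ) : ht (C a) = a.natAbs := by
  simp [ht]

lemma one_le_ht_of_monic {p : ℤ[X]} (hp : p.Monic) : 1 ≤ ht p := by
  have := natAbs_coeff_le_ht p p.natDegree
  rwa [show p.coeff p.natDegree = 1 from hp, Int.natAbs_one] at this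

lemma natAbs_sum_le (s : Finset (ℕ × ℕ)) (f : ℕ × ℕ → ℤ) :
    (s.sum f).natAbs ≤ s.sum (fun i => (f i).natAbs) := by
  have h := Finset.abs_sum_le_sum_abs f s
  simp only [Int.abs_eq_natAbs] at h
  exact_mod_cast h

lemma ht_add_le (p q : ℤ[X]) : ht (p + q) ≤ ht p + ht q := by
  rw [ht_le_iff]
  intro i
  calc ((p + q).coeff i).natAbs = (p.coeff i + q.coeff i).natAbs := by rw [Polynomial.coeff_add]
    _ ≤ (p.coeff i).natAbs + (q.coeff i).natAbs := Int.natAbs_add_le _ _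
    _ ≤ ht p + ht q := Nat.add_le_add (natAbs_coeff_le_ht p i) (natAbs_coeff_le_ht q i)

lemma ht_neg (p : ℤ[X]) : ht (-p) = ht p := by
  unfold ht
  simp

lemma ht_sub_le (p q : ℤ[X]) : ht (p - q) ≤ ht p + ht q := by
  rw [sub_eq_add_neg]
  simpa [ht_neg] using ht_add_le p (-q)

lemma ht_C_mul_le (a : ℤ) (p : ℤ[X]) : ht (C a * p) ≤ a.natAbs * ht p := by
  rw [ht_le_iff]
  intro i
  rw [Polynomial.coeff_C_mul, Int.natAbs_mul]
  exact Nat.mul_le_mul_left _ (natAbs_coeff_le_ht p i)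

lemma ht_mul_le (p q : ℤ[X]) : ht (p * q) ≤ (p.natDegree + 1) * ht p * ht q := by
  rw [ht_le_iff]
  intro i
  rw [Polynomial.coeff_mul]
  calc (∑ x ∈ Finset.HasAntidiagonal.antidiagonal i, p.coeff x.1 * q.coeff x.2).natAbs
      ≤ ∑ x ∈ Finset.HasAntidiagonal.antidiagonal i, (p.coeff x.1 * q.coeff x.2).natAbs :=
        natAbs_sum_le _ _
    _ ≤ ∑ x ∈ Finset.HasAntidiagonal.antidiagonal i, (if x.1 ≤ p.natDegree then ht p * ht q else 0) := by
        apply Finset.sum_le_sum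
        intro x _
        by_cases hx : x.1 ≤ p.natDegree
        · simp only [hx, if_true, Int.natAbs_mul]
          exact Nat.mul_le_mul (natAbs_coeff_le_ht p _) (natAbs_coeff_le_ht q _)
        · simp [Polynomial.coeff_eq_zero_of_natDegree_lt (by omega : p.natDegree < x.1)]
    _ ≤ (p.natDegree + 1) * (ht p * ht q) := by
        rw [Finset.sum_ite, Finset.sum_const, Finset.sum_const]
        simp only [smul_eq_mul, mul_zero, add_zero]
        apply Nat.mul_le_mul_right
        have hcard : #(Finset.filter (fun x => x.1 ≤ p.natDegree) (Finset.HasAntidiagonal.antidiagonal i))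
            ≤ #(Finset.range (p.natDegree + 1)) := by
          apply Finset.card_le_card_of_injOn (fun x => x.1)
          · intro x hx
            simp only [Finset.coe_filter, Set.mem_setOf_eq, Finset.mem_filter] at hx
            exact Finset.mem_range.mpr (Nat.lt_succ_of_le hx.2)
          · intro x hx y hy hxy
            simp only [Finset.coe_filter, Set.mem_setOf_eq, Finset.HasAntidiagonal.mem_antidiagonal] at hx hy
            have : x.1 = y.1 := hxy
            have : x.2 = y.2 := by omega
            exact Prod.ext hxy this
        simpa using hcard
    _ = (p.natDegree + 1) * ht p * ht q := by ring

lemma ht_pow_le (p : ℤ[X]) (k : ℕ) : ht (p ^ k) ≤ ((p.natDegree + 1) * ht p) ^ k := by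
  induction k with
  | zero => simp [ht, Polynomial.coeff_one]
  | succ k ih =>
    calc ht (p ^ (k+1)) = ht (p * p ^ k) := by rw [pow_succ, mul_comm]
      _ ≤ (p.natDegree + 1) * ht p * ht (p ^ k) := ht_mul_le _ _
      _ ≤ (p.natDegree + 1) * ht p * ((p.natDegree + 1) * ht p) ^ k :=
          Nat.mul_le_mul_left _ ih
      _ = ((p.natDegree + 1) * ht p) ^ (k+1) := by rw [pow_succ]; ring


noncomputable def L2 (p : ℂ[X]) : ℝ := ∑ i ∈ p.support, ‖p.coeff i‖ ^ 2

lemma L2_eq_sum_range (p : ℂ[X]) {N : ℕ} (h : p.natDegree < N) :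
    L2 p = ∑ i ∈ Finset.range N, ‖p.coeff i‖ ^ 2 := by
  unfold L2
  apply Finset.sum_subset
  · intro i hi
    exact Finset.mem_range.mpr (lt_of_le_of_lt (Polynomial.le_natDegree_of_mem_supp i hi) h)
  · intro i _ hi
    rw [Polynomial.notMem_support_iff.mp hi]
    simp

lemma L2_nonneg (p : ℂ[X]) : 0 ≤ L2 p :=
  Finset.sum_nonneg fun j _ => by positivity

lemma sq_norm_coeff_le_L2 (p : ℂ[X]) (i : ℕ) : ‖p.coeff i‖ ^ 2 ≤ L2 p := by
  by_cases hi : i ∈ p.support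
  · exact Finset.single_le_sum (f := fun j => ‖p.coeff j‖ ^ 2) (fun j _ => by positivity) hi
  · rw [Polynomial.notMem_support_iff.mp hi]
    simpa using L2_nonneg p

lemma normSq_helper (a x y : ℂ) :
    ‖x - a*y‖^2 - ‖(starRingEnd ℂ a)*x - y‖^2 = (1 - ‖a‖^2) * (‖x‖^2 - ‖y‖^2) := by
  have e : ∀ z : ℂ, ‖z‖^2 = Complex.normSq z := fun z => by
    rw [Complex.sq_norm]
  simp only [e]
  simp only [Complex.normSq_apply, Complex.sub_re, Complex.sub_im, Complex.mul_re,
    Complex.mul_im, Complex.conj_re, Complex.conj_im]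
  ring

lemma flip_L2 (a : ℂ) (q : ℂ[X]) :
    L2 ((X - C a) * q) = L2 ((C (starRingEnd ℂ a) * X - 1) * q) := by
  by_cases hq : q = 0
  · simp [hq, L2]
  set b := starRingEnd ℂ a with hb
  set N := q.natDegree + 1 with hN
  have hqN : q.coeff N = 0 := coeff_eq_zero_of_natDegree_lt (by omega)
  have hd1 : ((X - C a) * q).natDegree < N + 1 := by
    apply lt_of_le_of_lt (Polynomial.natDegree_mul_le)
    have h1 : (X - C a).natDegree = 1 := Polynomial.natDegree_X_sub_C a
    omega
  have hd2 : ((C b * X - 1) * q).natDegree < N + 1 := by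
    apply lt_of_le_of_lt (Polynomial.natDegree_mul_le)
    have h1 : (C b * X - 1).natDegree ≤ 1 := by
      apply le_trans (Polynomial.natDegree_sub_le _ _)
      have h2 : (C b * X).natDegree ≤ 1 := by
        apply le_trans (Polynomial.natDegree_mul_le)
        simp
      simpa using h2
    omega
  rw [L2_eq_sum_range _ hd1, L2_eq_sum_range _ hd2,
      Finset.sum_range_succ' _ N, Finset.sum_range_succ' _ N]
  have c1 : ∀ i, ((X - C a) * q).coeff (i+1) = q.coeff i - a * q.coeff (i+1) := fun i => by
    rw [sub_mul, Polynomial.coeff_sub, Polynomial.coeff_X_mul, Polynomial.coeff_C_mul]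
  have c10 : ((X - C a) * q).coeff 0 = -(a * q.coeff 0) := by
    rw [sub_mul, Polynomial.coeff_sub, Polynomial.mul_coeff_zero, Polynomial.coeff_X_zero,
        Polynomial.coeff_C_mul, zero_mul, zero_sub]
  have c2 : ∀ i, ((C b * X - 1) * q).coeff (i+1) = b * q.coeff i - q.coeff (i+1) := fun i => by
    rw [sub_mul, Polynomial.coeff_sub, one_mul, mul_assoc, Polynomial.coeff_C_mul,
        Polynomial.coeff_X_mul]
  have c20 : ((C b * X - 1) * q).coeff 0 = -(q.coeff 0) := by
    rw [sub_mul, Polynomial.coeff_sub, one_mul, mul_assoc, Polynomial.mul_coeff_zero,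
        Polynomial.coeff_C_zero, Polynomial.mul_coeff_zero, Polynomial.coeff_X_zero, zero_mul,
        mul_zero, zero_sub]
  simp only [c1, c10, c2, c20, norm_neg]
  have key : ∀ i ∈ Finset.range N, ‖q.coeff i - a * q.coeff (i+1)‖^2
      = ‖b * q.coeff i - q.coeff (i+1)‖^2
        + (1 - ‖a‖^2) * (‖q.coeff i‖^2 - ‖q.coeff (i+1)‖^2) := by
    intro i _
    have h := normSq_helper a (q.coeff i) (q.coeff (i+1))
    rw [← hb] at h
    linarith
  rw [Finset.sum_congr rfl key, Finset.sum_add_distrib, ← Finset.mul_sum,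
      Finset.sum_range_sub' (fun i => ‖q.coeff i‖^2) N, hqN]
  simp only [norm_mul, norm_zero, mul_pow]
  ring

noncomputable def mx (r : ℂ) : ℝ := max 1 ‖r‖

noncomputable def Mm (p : ℂ[X]) : ℝ := ‖p.leadingCoeff‖ * ((p.roots.map mx).prod)

lemma one_le_prod_mx (S : Multiset ℂ) : 1 ≤ (S.map mx).prod := by
  apply Multiset.one_le_prod
  intro x hx
  rcases Multiset.mem_map.mp hx with ⟨r, _, rfl⟩
  exact le_max_left _ _

lemma prod_mx_nonneg (S : Multiset ℂ) : 0 ≤ (S.map mx).prod :=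
  le_trans zero_le_one (one_le_prod_mx S)

lemma Mm_nonneg (p : ℂ[X]) : 0 ≤ Mm p :=
  mul_nonneg (norm_nonneg _) (prod_mx_nonneg _)

lemma Mm_mul (p q : ℂ[X]) (hp : p ≠ 0) (hq : q ≠ 0) : Mm (p * q) = Mm p * Mm q := by
  unfold Mm
  rw [Polynomial.leadingCoeff_mul, norm_mul, Polynomial.roots_mul (mul_ne_zero hp hq),
      Multiset.map_add, Multiset.prod_add]
  ring

noncomputable def fl (r : ℂ) : ℂ[X] := if 1 < ‖r‖ then C (starRingEnd ℂ r) * X - 1 else X - C r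

lemma conj_ne_zero {r : ℂ} (h : 1 < ‖r‖) : (starRingEnd ℂ) r ≠ 0 := by
  intro h0
  have h1 : ‖(starRingEnd ℂ) r‖ = ‖r‖ := RCLike.norm_conj r
  rw [h0, norm_zero] at h1
  rw [← h1] at h
  linarith

lemma CX_sub_one_natDegree {c : ℂ} (hc : c ≠ 0) : (C c * X - 1).natDegree = 1 := by
  have h1 : (C c * X - 1) = C c * X - C 1 := by simp
  rw [h1, Polynomial.natDegree_sub_C, Polynomial.natDegree_C_mul_X _ hc]

lemma CX_sub_one_leadingCoeff {c : ℂ} (hc : c ≠ 0) : (C c * X - 1).leadingCoeff = c := by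
  rw [Polynomial.leadingCoeff, CX_sub_one_natDegree hc, Polynomial.coeff_sub,
      Polynomial.coeff_C_mul, Polynomial.coeff_X_one, Polynomial.coeff_one]
  simp

lemma fl_natDegree (r : ℂ) : (fl r).natDegree = 1 := by
  unfold fl
  split
  · exact CX_sub_one_natDegree (conj_ne_zero (by assumption))
  · exact Polynomial.natDegree_X_sub_C r

lemma fl_leadingCoeff (r : ℂ) :
    (fl r).leadingCoeff = if 1 < ‖r‖ then (starRingEnd ℂ) r else 1 := by
  unfold fl
  split
  · exact CX_sub_one_leadingCoeff (conj_ne_zero (by assumption))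
  · exact Polynomial.monic_X_sub_C r

lemma fl_leadingCoeff_ne_zero (r : ℂ) : (fl r).leadingCoeff ≠ 0 := by
  rw [fl_leadingCoeff]
  split
  · exact conj_ne_zero (by assumption)
  · exact one_ne_zero

lemma norm_fl_leadingCoeff (r : ℂ) : ‖(fl r).leadingCoeff‖ = mx r := by
  rw [fl_leadingCoeff]
  unfold mx
  split
  · rw [RCLike.norm_conj]
    exact (max_eq_right (le_of_lt (by assumption))).symm
  · rw [norm_one]
    exact (max_eq_left (le_of_not_gt (by assumption))).symm

lemma norm_mprod (S : Multiset ℂ) : ‖S.prod‖ = (S.map (fun z => ‖z‖)).prod := by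
  induction S using Multiset.induction with
  | empty => simp
  | cons a S ih => simp [norm_mul, ih]

lemma move_L2 (r : ℂ) (q : ℂ[X]) : L2 (fl r * q) = L2 ((X - C r) * q) := by
  unfold fl
  split
  · exact (flip_L2 r q).symm
  · rfl

lemma prodswap (S : Multiset ℂ) : ∀ q : ℂ[X],
    L2 ((S.map fl).prod * q) = L2 ((S.map (fun r => X - C r)).prod * q) := by
  induction S using Multiset.induction with
  | empty => intro q; rfl
  | cons a S ih =>
    intro q
    rw [Multiset.map_cons, Multiset.prod_cons, Multiset.map_cons, Multiset.prod_cons]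
    calc L2 (fl a * (S.map fl).prod * q)
        = L2 ((S.map fl).prod * (fl a * q)) := by rw [show fl a * (S.map fl).prod * q
            = (S.map fl).prod * (fl a * q) by ring]
      _ = L2 ((S.map (fun r => X - C r)).prod * (fl a * q)) := ih _
      _ = L2 (fl a * ((S.map (fun r => X - C r)).prod * q)) := by rw [show
            (S.map (fun r => X - C r)).prod * (fl a * q)
            = fl a * ((S.map (fun r => X - C r)).prod * q) by ring]
      _ = L2 ((X - C a) * ((S.map (fun r => X - C r)).prod * q)) := move_L2 _ _
      _ = L2 ((X - C a) * (S.map (fun r => X - C r)).prod * q) := by rw [mul_assoc]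

theorem landau (p : ℂ[X]) : Mm p ^ 2 ≤ L2 p := by
  by_cases hp : p = 0
  · simp [hp, Mm, L2]
  have hsp : p = C p.leadingCoeff * (p.roots.map fun a => X - C a).prod :=
    (IsAlgClosed.splits p).eq_prod_roots
  set F := C p.leadingCoeff * (p.roots.map fl).prod with hF
  have hL : L2 F = L2 p := by
    rw [hF]
    calc L2 (C p.leadingCoeff * (p.roots.map fl).prod)
        = L2 ((p.roots.map fl).prod * C p.leadingCoeff) := by rw [mul_comm]
      _ = L2 ((p.roots.map (fun r => X - C r)).prod * C p.leadingCoeff) := prodswap _ _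
      _ = L2 p := by rw [mul_comm, ← hsp]
  have hprodlc : (((p.roots.map fl)).map Polynomial.leadingCoeff).prod ≠ 0 := by
    apply Multiset.prod_ne_zero
    intro h0
    rcases Multiset.mem_map.mp h0 with ⟨w, hw, hw0⟩
    rcases Multiset.mem_map.mp hw with ⟨r, _, rfl⟩
    exact fl_leadingCoeff_ne_zero r hw0
  have hQdeg : ((p.roots.map fl).prod).natDegree = Multiset.card p.roots := by
    rw [Polynomial.natDegree_multiset_prod' _ hprodlc, Multiset.map_map]
    simp [fl_natDegree]
  have hQlc : ((p.roots.map fl).prod).leadingCoeff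
      = ((p.roots.map fl).map Polynomial.leadingCoeff).prod :=
    Polynomial.leadingCoeff_multiset_prod' _ hprodlc
  have hMm : ‖F.coeff (Multiset.card p.roots)‖ = Mm p := by
    rw [hF, Polynomial.coeff_C_mul, ← hQdeg, ← Polynomial.leadingCoeff, hQlc, norm_mul]
    unfold Mm
    congr 1
    rw [Multiset.map_map, norm_mprod, Multiset.map_map]
    apply congrArg
    apply Multiset.map_congr rfl
    intro r _
    exact norm_fl_leadingCoeff r
  calc Mm p ^ 2 = ‖F.coeff (Multiset.card p.roots)‖ ^ 2 := by rw [hMm]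
    _ ≤ L2 F := sq_norm_coeff_le_L2 _ _
    _ = L2 p := hL

lemma prod_norm_nonneg (t : Multiset ℂ) : 0 ≤ (t.map (fun z => ‖z‖)).prod := by
  induction t using Multiset.induction with
  | empty => simp
  | cons a t ih => simp only [Multiset.map_cons, Multiset.prod_cons]; positivity

lemma prod_map_norm_le_prod_mx (t : Multiset ℂ) :
    (t.map (fun z => ‖z‖)).prod ≤ (t.map mx).prod := by
  induction t using Multiset.induction with
  | empty => simp
  | cons a t ih =>
    simp only [Multiset.map_cons, Multiset.prod_cons]
    exact mul_le_mul (le_max_right 1 ‖a‖) ih (prod_norm_nonneg t)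
      (le_trans zero_le_one (le_max_left _ _))

lemma prod_mx_mono {t S : Multiset ℂ} (h : t ≤ S) : (t.map mx).prod ≤ (S.map mx).prod := by
  rcases Multiset.le_iff_exists_add.mp h with ⟨u, rfl⟩
  rw [Multiset.map_add, Multiset.prod_add]
  nth_rewrite 1 [← mul_one ((t.map mx).prod)]
  exact mul_le_mul_of_nonneg_left (one_le_prod_mx u) (prod_mx_nonneg t)

lemma norm_esymm_le (S : Multiset ℂ) (i : ℕ) :
    ‖S.esymm i‖ ≤ (2 : ℝ) ^ (Multiset.card S) * (S.map mx).prod := by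
  unfold Multiset.esymm
  have h2 : ∀ x ∈ ((S.powersetCard i).map Multiset.prod).map (fun z => ‖z‖),
      x ≤ (S.map mx).prod := by
    intro x hx
    rcases Multiset.mem_map.mp hx with ⟨z, hz, rfl⟩
    rcases Multiset.mem_map.mp hz with ⟨t, ht, rfl⟩
    have htS : t ≤ S := (Multiset.mem_powersetCard.mp ht).1
    calc ‖t.prod‖ = (t.map (fun z => ‖z‖)).prod := norm_mprod t
      _ ≤ (t.map mx).prod := prod_map_norm_le_prod_mx t
      _ ≤ (S.map mx).prod := prod_mx_mono htS
  have h3 := Multiset.sum_le_card_nsmul _ _ h2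
  have h4 : Multiset.card (((S.powersetCard i).map Multiset.prod).map (fun z => ‖z‖))
      = (Multiset.card S).choose i := by
    rw [Multiset.card_map, Multiset.card_map, Multiset.card_powersetCard]
  have h5 : (Multiset.card S).choose i ≤ 2 ^ Multiset.card S := by
    rcases le_or_gt i (Multiset.card S) with h | h
    · calc (Multiset.card S).choose i
          ≤ ∑ j ∈ Finset.range (Multiset.card S + 1), (Multiset.card S).choose j :=
            Finset.single_le_sum (fun j _ => Nat.zero_le _) (Finset.mem_range.mpr (by omega))
        _ = 2 ^ Multiset.card S := Nat.sum_range_choose _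
    · rw [Nat.choose_eq_zero_of_lt h]; exact Nat.zero_le _
  calc ‖((S.powersetCard i).map Multiset.prod).sum‖
      ≤ (((S.powersetCard i).map Multiset.prod).map (fun z => ‖z‖)).sum :=
        norm_multiset_sum_le _
    _ ≤ ((Multiset.card S).choose i : ℕ) • ((S.map mx).prod) := by rw [← h4]; exact h3
    _ = ((Multiset.card S).choose i : ℝ) * ((S.map mx).prod) := by
        rw [nsmul_eq_mul]
    _ ≤ (2 : ℝ) ^ (Multiset.card S) * (S.map mx).prod := by
        apply mul_le_mul_of_nonneg_right _ (prod_mx_nonneg S)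
        exact_mod_cast h5

lemma card_roots_eq (w : ℂ[X]) : Multiset.card w.roots = w.natDegree := by
  have h := (IsAlgClosed.splits w).natDegree_eq_card_roots
  exact h.symm

lemma coeff_le_Mm (w : ℂ[X]) (hw : w.Monic) (j : ℕ) :
    ‖w.coeff j‖ ≤ 2 ^ w.natDegree * Mm w := by
  have hroots : Multiset.card w.roots = w.natDegree := card_roots_eq w
  rcases le_or_gt j w.natDegree with hj | hj
  · rw [Polynomial.coeff_eq_esymm_roots_of_card hroots hj, hw.leadingCoeff, one_mul, norm_mul,
        norm_pow, norm_neg, norm_one, one_pow, one_mul]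
    have h := norm_esymm_le w.roots (w.natDegree - j)
    rw [hroots] at h
    unfold Mm
    rw [hw.leadingCoeff, norm_one, one_mul]
    exact h
  · rw [Polynomial.coeff_eq_zero_of_natDegree_lt hj, norm_zero]
    exact mul_nonneg (by positivity) (Mm_nonneg w)

lemma perfactor {h : ℤ[X]} (hh : h.Monic) (h1 : 1 ≤ h.natDegree) (h0 : h.coeff 0 = 0) (s : ℂ) :
    (ht h : ℝ) ≤ 2 ^ h.natDegree * Mm (h.map (Int.castRingHom ℂ) - C s) := by
  set hc := h.map (Int.castRingHom ℂ) with hhc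
  have hcm : hc.Monic := hh.map _
  have hcd : hc.natDegree = h.natDegree := hh.natDegree_map _
  set w := hc - C s with hwdef
  have hwm : w.Monic := by
    rw [hwdef, sub_eq_add_neg]
    apply hcm.add_of_left
    have hcs : (-C s).degree ≤ 0 := by rw [degree_neg]; exact Polynomial.degree_C_le
    have hpos : 0 < hc.degree := by
      rw [← Polynomial.natDegree_pos_iff_degree_pos]
      omega
    exact lt_of_le_of_lt hcs hpos
  have hwd : w.natDegree = h.natDegree := by rw [hwdef, Polynomial.natDegree_sub_C, hcd]
  obtain ⟨j, hjmem, hjeq⟩ := Finset.exists_mem_eq_sup (Finset.range (h.natDegree + 1))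
    (⟨0, by simp⟩) (fun i => (h.coeff i).natAbs)
  have hteq : ht h = (h.coeff j).natAbs := hjeq
  have hjn : j ≤ h.natDegree := by
    have := Finset.mem_range.mp hjmem; omega
  have hj1 : 1 ≤ j := by
    by_contra hj0
    have hj00 : j = 0 := by omega
    have : ht h = 0 := by rw [hteq, hj00, h0]; simp
    have h2 := one_le_ht_of_monic hh
    omega
  rcases eq_or_lt_of_le hjn with hjtop | hjlt
  · have hth : ht h = 1 := by
      rw [hteq, hjtop, show h.coeff h.natDegree = 1 from hh, Int.natAbs_one]
    rw [hth]
    have hMm1 : 1 ≤ Mm w := by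
      unfold Mm
      rw [hwm.leadingCoeff, norm_one, one_mul]
      exact one_le_prod_mx _
    have h2n : (1:ℝ) ≤ 2 ^ h.natDegree := one_le_pow₀ (by norm_num)
    push_cast
    nlinarith [hMm1, h2n]
  · have hwj : w.coeff j = ((h.coeff j : ℤ) : ℂ) := by
      rw [hwdef, Polynomial.coeff_sub, Polynomial.coeff_C, if_neg (by omega), sub_zero, hhc,
          Polynomial.coeff_map]
      rfl
    have hnorm : ‖w.coeff j‖ = (ht h : ℝ) := by
      rw [hwj, Complex.norm_intCast, hteq, Nat.cast_natAbs, Int.cast_abs]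
    calc (ht h : ℝ) = ‖w.coeff j‖ := hnorm.symm
      _ ≤ 2 ^ w.natDegree * Mm w := coeff_le_Mm w hwm j
      _ = 2 ^ h.natDegree * Mm w := by rw [hwd]

lemma Mm_C_mul_prod (c : ℂ) (hc : c ≠ 0) (S : Multiset ℂ[X]) (hS : ∀ p ∈ S, p ≠ 0) :
    Mm (C c * S.prod) = ‖c‖ * (S.map Mm).prod := by
  induction S using Multiset.induction with
  | empty => simp [Mm, Polynomial.leadingCoeff_C, Polynomial.roots_C]
  | cons a S ih =>
    have ha : a ≠ 0 := hS a (Multiset.mem_cons_self a S)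
    have hCc : (C c : ℂ[X]) ≠ 0 := by simpa using hc
    have hSne : S.prod ≠ 0 := Multiset.prod_ne_zero
      (fun h0 => hS 0 (Multiset.mem_cons_of_mem h0) rfl)
    have hprodne : C c * S.prod ≠ 0 := mul_ne_zero hCc hSne
    rw [Multiset.prod_cons, show C c * (a * S.prod) = a * (C c * S.prod) by ring,
        Mm_mul a _ ha hprodne, ih (fun p hp => hS p (Multiset.mem_cons_of_mem hp)),
        Multiset.map_cons, Multiset.prod_cons]
    ring

lemma mprod_le_mprod (S : Multiset ℂ) (f g : ℂ → ℝ) (h0 : ∀ x ∈ S, 0 ≤ f x)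
    (hle : ∀ x ∈ S, f x ≤ g x) : (S.map f).prod ≤ (S.map g).prod := by
  induction S using Multiset.induction with
  | empty => simp
  | cons a S ih =>
    simp only [Multiset.map_cons, Multiset.prod_cons]
    have hfprod : 0 ≤ (S.map f).prod := by
      apply Multiset.prod_nonneg
      intro x hx
      rcases Multiset.mem_map.mp hx with ⟨r, hr, rfl⟩
      exact h0 r (Multiset.mem_cons_of_mem hr)
    exact mul_le_mul (hle a (Multiset.mem_cons_self a S))
      (ih (fun x hx => h0 x (Multiset.mem_cons_of_mem hx))
          (fun x hx => hle x (Multiset.mem_cons_of_mem hx)))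
      hfprod
      (le_trans (h0 a (Multiset.mem_cons_self a S)) (hle a (Multiset.mem_cons_self a S)))

lemma key (h u : ℤ[X]) (hh : h.Monic) (h1 : 1 ≤ h.natDegree) (h0 : h.coeff 0 = 0)
    (hu : u ≠ 0) :
    u.leadingCoeff.natAbs * ht h ^ u.natDegree
      ≤ 2 ^ (h.natDegree * u.natDegree) * (h.natDegree * u.natDegree + 1) * ht (u.comp h) := by
  set n := h.natDegree with hn
  set k := u.natDegree with hk
  set B := ht h with hB
  have hcast : Function.Injective (Int.castRingHom ℂ) := fun x y hxy => Int.cast_injective hxy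
  set uc := u.map (Int.castRingHom ℂ) with huc
  set hc := h.map (Int.castRingHom ℂ) with hhc
  have hucne : uc ≠ 0 := by
    rw [huc, Ne, Polynomial.map_eq_zero_iff hcast]; exact hu
  have hucdeg : uc.natDegree = k := Polynomial.natDegree_map_eq_of_injective hcast u
  have huclc : uc.leadingCoeff = ((u.leadingCoeff : ℤ) : ℂ) := by
    rw [Polynomial.leadingCoeff, hucdeg, huc, Polynomial.coeff_map, hk]
    rfl
  have huclcne : uc.leadingCoeff ≠ 0 := by
    rw [huclc]
    exact_mod_cast Polynomial.leadingCoeff_ne_zero.mpr hu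
  have hsplit := (IsAlgClosed.splits uc).eq_prod_roots
  have hcard : Multiset.card uc.roots = k := by rw [card_roots_eq uc, hucdeg]
  have hfactor_deg : ∀ s : ℂ, (hc - C s).natDegree = n := fun s => by
    rw [Polynomial.natDegree_sub_C, hhc, hh.natDegree_map]
  have hfactor_ne : ∀ s : ℂ, hc - C s ≠ 0 := by
    intro s h0'
    have h2 := hfactor_deg s
    rw [h0', Polynomial.natDegree_zero] at h2
    omega
  have hcomp : (u.comp h).map (Int.castRingHom ℂ)
      = C uc.leadingCoeff * ((uc.roots.map (fun s => hc - C s)).prod) := by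
    rw [Polynomial.map_comp, ← huc, ← hhc]
    conv_lhs => rw [hsplit]
    rw [Polynomial.mul_comp, Polynomial.C_comp, Polynomial.multiset_prod_comp, Multiset.map_map]
    congr 2
    apply Multiset.map_congr rfl
    intro s _
    simp [Polynomial.sub_comp]
  have hMmcomp : Mm ((u.comp h).map (Int.castRingHom ℂ))
      = ‖uc.leadingCoeff‖ * ((uc.roots.map (fun s => Mm (hc - C s))).prod) := by
    rw [hcomp, Mm_C_mul_prod _ huclcne _ (by
      intro p hp
      rcases Multiset.mem_map.mp hp with ⟨s, _, rfl⟩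
      exact hfactor_ne s)]
    rw [Multiset.map_map]
    rfl
  -- lower bound for the product
  have hBle : ∀ s ∈ uc.roots, (B : ℝ) ≤ 2 ^ n * Mm (hc - C s) := by
    intro s _
    exact perfactor hh h1 h0 s
  have hprod_lb : (B : ℝ) ^ k ≤ 2 ^ (n * k) * ((uc.roots.map (fun s => Mm (hc - C s))).prod) := by
    have h2 := mprod_le_mprod uc.roots (fun _ => (B : ℝ)) (fun s => 2 ^ n * Mm (hc - C s))
      (fun x _ => by positivity) hBle
    have h3 : ((uc.roots.map (fun _ => (B : ℝ))).prod) = (B : ℝ) ^ k := by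
      rw [Multiset.map_const', Multiset.prod_replicate, hcard]
    have h4 : ((uc.roots.map (fun s => 2 ^ n * Mm (hc - C s))).prod)
        = 2 ^ (n * k) * ((uc.roots.map (fun s => Mm (hc - C s))).prod) := by
      rw [Multiset.prod_map_mul]
      congr 1
      rw [Multiset.map_const', Multiset.prod_replicate, hcard, ← pow_mul]
    rw [h3] at h2
    rw [← h4]
    exact h2
  -- upper bound via landau
  set P := Mm ((u.comp h).map (Int.castRingHom ℂ)) with hP
  have hcompdeg : ((u.comp h).map (Int.castRingHom ℂ)).natDegree = k * n := by
    rw [Polynomial.natDegree_map_eq_of_injective hcast, Polynomial.natDegree_comp]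
  have hL2 : L2 ((u.comp h).map (Int.castRingHom ℂ))
      ≤ (k * n + 1) * (ht (u.comp h) : ℝ) ^ 2 := by
    rw [L2_eq_sum_range _ (show ((u.comp h).map (Int.castRingHom ℂ)).natDegree < k*n+1 by omega)]
    calc ∑ i ∈ Finset.range (k*n+1), ‖((u.comp h).map (Int.castRingHom ℂ)).coeff i‖ ^ 2
        ≤ ∑ i ∈ Finset.range (k*n+1), (ht (u.comp h) : ℝ) ^ 2 := by
          apply Finset.sum_le_sum
          intro i _
          rw [Polynomial.coeff_map]
          simp only [eq_intCast]
          have h5 : ‖(((u.comp h).coeff i : ℤ) : ℂ)‖ ≤ (ht (u.comp h) : ℝ) := by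
            rw [Complex.norm_intCast, ← Int.cast_abs]
            have := natAbs_coeff_le_ht (u.comp h) i
            rw [Int.abs_eq_natAbs]
            exact_mod_cast this
          exact pow_le_pow_left₀ (norm_nonneg _) h5 2
        _ = (k * n + 1) * (ht (u.comp h) : ℝ) ^ 2 := by
          rw [Finset.sum_const, Finset.card_range, nsmul_eq_mul]
          push_cast
          ring
  have hPub : P ^ 2 ≤ (k * n + 1) * (ht (u.comp h) : ℝ) ^ 2 :=
    le_trans (landau _) hL2
  -- combine
  have hlcnorm : ‖uc.leadingCoeff‖ = (u.leadingCoeff.natAbs : ℝ) := by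
    rw [huclc, Complex.norm_intCast, Nat.cast_natAbs, Int.cast_abs]
  have hx : (u.leadingCoeff.natAbs : ℝ) * (B : ℝ) ^ k ≤ 2 ^ (n * k) * P := by
    calc (u.leadingCoeff.natAbs : ℝ) * (B : ℝ) ^ k
        ≤ (u.leadingCoeff.natAbs : ℝ) * (2 ^ (n * k) * ((uc.roots.map (fun s => Mm (hc - C s))).prod)) := by
          apply mul_le_mul_of_nonneg_left hprod_lb (by positivity)
      _ = 2 ^ (n * k) * (‖uc.leadingCoeff‖ * ((uc.roots.map (fun s => Mm (hc - C s))).prod)) := by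
          rw [hlcnorm]; ring
      _ = 2 ^ (n * k) * P := by rw [hMmcomp]
  have hPnn : 0 ≤ P := Mm_nonneg _
  have hxnn : (0:ℝ) ≤ (u.leadingCoeff.natAbs : ℝ) * (B : ℝ) ^ k := by positivity
  have hsq : ((u.leadingCoeff.natAbs : ℝ) * (B : ℝ) ^ k) ^ 2
      ≤ (2 ^ (n * k) * ((k * n + 1) : ℝ) * (ht (u.comp h) : ℝ)) ^ 2 := by
    calc ((u.leadingCoeff.natAbs : ℝ) * (B : ℝ) ^ k) ^ 2
        ≤ (2 ^ (n * k) * P) ^ 2 := pow_le_pow_left₀ hxnn hx 2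
      _ = (2 ^ (n * k)) ^ 2 * P ^ 2 := by ring
      _ ≤ (2 ^ (n * k)) ^ 2 * ((k * n + 1) * (ht (u.comp h) : ℝ) ^ 2) := by
          apply mul_le_mul_of_nonneg_left hPub (by positivity)
      _ ≤ (2 ^ (n * k)) ^ 2 * (((k * n + 1) : ℝ) ^ 2 * (ht (u.comp h) : ℝ) ^ 2) := by
          apply mul_le_mul_of_nonneg_left _ (by positivity)
          apply mul_le_mul_of_nonneg_right _ (by positivity)
          have hkn0 : (0:ℝ) ≤ (k:ℝ) * n := by positivity
          nlinarith
      _ = (2 ^ (n * k) * ((k * n + 1) : ℝ) * (ht (u.comp h) : ℝ)) ^ 2 := by ring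
  have hfinal : (u.leadingCoeff.natAbs : ℝ) * (B : ℝ) ^ k
      ≤ 2 ^ (n * k) * ((k * n + 1) : ℝ) * (ht (u.comp h) : ℝ) := by
    have hynn : (0:ℝ) ≤ 2 ^ (n * k) * ((k * n + 1) : ℝ) * (ht (u.comp h) : ℝ) := by positivity
    exact (pow_le_pow_iff_left₀ hxnn hynn two_ne_zero).mp hsq
  rw [← @Nat.cast_le ℝ]
  push_cast
  calc (u.leadingCoeff.natAbs : ℝ) * (B : ℝ) ^ k
      ≤ 2 ^ (n * k) * ((k * n + 1) : ℝ) * (ht (u.comp h) : ℝ) := hfinal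
    _ = 2 ^ (n * k) * ((n : ℝ) * (k : ℝ) + 1) * (ht (u.comp h) : ℝ) := by ring

/-! ### Crude bounds and finiteness -/

def Rc (E P : ℕ) : ℕ → ℕ → ℕ
  | 0, W => W
  | j+1, W => max (Rc E P j (W + E * W * P)) (E * W)

lemma Rc_mono (E P : ℕ) : ∀ j, ∀ {W W' : ℕ}, W ≤ W' → Rc E P j W ≤ Rc E P j W' := by
  intro j
  induction j with
  | zero => intro W W' h; exact h
  | succ j ih =>
    intro W W' h
    simp only [Rc]
    apply max_le_max
    · exact ih (Nat.add_le_add h (Nat.mul_le_mul_right P (Nat.mul_le_mul_left E h)))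
    · exact Nat.mul_le_mul_left E h

lemma ht_le_max_lead_erase (u : ℤ[X]) :
    ht u ≤ max u.leadingCoeff.natAbs (ht u.eraseLead) := by
  rw [ht_le_iff]
  intro i
  by_cases hi : i = u.natDegree
  · rw [hi]
    exact le_max_left _ _
  · rw [← Polynomial.eraseLead_coeff_of_ne i hi]
    exact le_trans (natAbs_coeff_le_ht _ _) (le_max_right _ _)

lemma crude (h : ℤ[X]) (hh : h.Monic) (h1 : 1 ≤ h.natDegree) (h0 : h.coeff 0 = 0)
    (J : ℕ) (E P : ℕ) (hE : 2 ^ (h.natDegree * J) * (h.natDegree * J + 1) ≤ E)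
    (hP : ((h.natDegree + 1) * ht h) ^ J ≤ P) :
    ∀ j, j ≤ J → ∀ u : ℤ[X], u.natDegree ≤ j → ∀ W, ht (u.comp h) ≤ W →
      ht u ≤ Rc E P j W := by
  have hB1 : 1 ≤ ht h := one_le_ht_of_monic hh
  have hbase : 1 ≤ (h.natDegree + 1) * ht h := by nlinarith
  intro j
  induction j with
  | zero =>
    intro _ u hu W hW
    have hC : u = C (u.coeff 0) := Polynomial.eq_C_of_natDegree_le_zero hu
    have hcu : u.comp h = u := by rw [hC, Polynomial.C_comp]
    rw [← hcu]
    exact hW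
  | succ j ih =>
    intro hjJ u hu W hW
    by_cases hcase : u.natDegree ≤ j
    · calc ht u ≤ Rc E P j W := ih (by omega) u hcase W hW
        _ ≤ Rc E P j (W + E * W * P) := Rc_mono E P j (by omega)
        _ ≤ Rc E P (j+1) W := le_max_left _ _
    · have hdeg : u.natDegree = j + 1 := by omega
      have hune : u ≠ 0 := by
        intro h0'
        rw [h0', Polynomial.natDegree_zero] at hdeg
        omega
      have hEk : 2 ^ (h.natDegree * u.natDegree) * (h.natDegree * u.natDegree + 1) ≤ E := by
        apply le_trans _ hE
        apply Nat.mul_le_mul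
        · exact Nat.pow_le_pow_right (by norm_num) (Nat.mul_le_mul_left _ (by omega))
        · have : h.natDegree * u.natDegree ≤ h.natDegree * J :=
            Nat.mul_le_mul_left _ (by omega)
          omega
      have hlc : u.leadingCoeff.natAbs ≤ E * W := by
        have hkey := key h u hh h1 h0 hune
        have hBpow : 1 ≤ ht h ^ u.natDegree := Nat.one_le_pow _ _ hB1
        calc u.leadingCoeff.natAbs = u.leadingCoeff.natAbs * 1 := by ring
          _ ≤ u.leadingCoeff.natAbs * ht h ^ u.natDegree := Nat.mul_le_mul_left _ hBpow
          _ ≤ 2 ^ (h.natDegree * u.natDegree) * (h.natDegree * u.natDegree + 1)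
              * ht (u.comp h) := hkey
          _ ≤ E * W := Nat.mul_le_mul hEk hW
      have hrepr : u.eraseLead = u - C u.leadingCoeff * X ^ u.natDegree :=
        eq_sub_of_add_eq (Polynomial.eraseLead_add_C_mul_X_pow u)
      have hhpow : ht (h ^ u.natDegree) ≤ P := by
        apply le_trans (ht_pow_le h u.natDegree)
        apply le_trans _ hP
        exact Nat.pow_le_pow_right hbase (by omega)
      have herase_comp : ht (u.eraseLead.comp h) ≤ W + E * W * P := by
        rw [hrepr, Polynomial.sub_comp, Polynomial.mul_comp, Polynomial.C_comp,
            Polynomial.pow_comp, Polynomial.X_comp]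
        apply le_trans (ht_sub_le _ _)
        apply Nat.add_le_add hW
        calc ht (C u.leadingCoeff * h ^ u.natDegree)
            ≤ u.leadingCoeff.natAbs * ht (h ^ u.natDegree) := ht_C_mul_le _ _
          _ ≤ (E * W) * P := Nat.mul_le_mul hlc hhpow
          _ = E * W * P := rfl
      have herase_deg : u.eraseLead.natDegree ≤ j := by
        have := Polynomial.eraseLead_natDegree_le u
        omega
      have herase := ih (by omega) u.eraseLead herase_deg (W + E * W * P) herase_comp
      calc ht u ≤ max u.leadingCoeff.natAbs (ht u.eraseLead) := ht_le_max_lead_erase u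
        _ ≤ max (E * W) (Rc E P j (W + E * W * P)) := max_le_max hlc herase
        _ = Rc E P (j+1) W := by simp only [Rc]; exact max_comm _ _

lemma finite_poly_box (N R : ℕ) : {p : ℤ[X] | p.natDegree ≤ N ∧ ht p ≤ R}.Finite := by
  apply Set.Finite.of_finite_image (f := fun p => fun i : Fin (N+1) => p.coeff (i : ℕ))
  · apply Set.Finite.subset (Set.Finite.pi (t := fun _ : Fin (N+1) => Set.Icc (-(R:ℤ)) R)
      (fun _ => Set.finite_Icc _ _))
    rintro v ⟨p, ⟨_, hht⟩, rfl⟩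
    rw [Set.mem_univ_pi]
    intro i
    show p.coeff (i : ℕ) ∈ Set.Icc (-(R:ℤ)) R
    rw [Set.mem_Icc]
    have h1 := natAbs_coeff_le_ht p (i : ℕ)
    have h2 : (p.coeff (i:ℕ)).natAbs ≤ R := le_trans h1 hht
    omega
  · intro p hp q hq hpq
    apply Polynomial.ext
    intro i
    rcases le_or_gt i N with hi | hi
    · have := congrFun hpq ⟨i, by omega⟩
      simpa using this
    · rw [Polynomial.coeff_eq_zero_of_natDegree_lt (lt_of_le_of_lt hp.1 hi),
          Polynomial.coeff_eq_zero_of_natDegree_lt (lt_of_le_of_lt hq.1 hi)]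

/-! ### Normalization -/

lemma g_monic_of {f g h : ℤ[X]} (hf : f.Monic) (hfe : f = g.comp h) (hh : h.Monic)
    (hn0 : h.natDegree ≠ 0) : g.Monic := by
  have hcomp := Polynomial.leadingCoeff_comp (p := g) (q := h) hn0
  rw [hh.leadingCoeff, one_pow, mul_one] at hcomp
  unfold Polynomial.Monic
  rw [← hcomp, ← hfe]
  exact hf

lemma normalize2 {f g h : ℤ[X]} {m n : ℕ} (hf : f.Monic) (hm : 1 ≤ m) (hn : 1 ≤ n)
    (hg : g.natDegree = m) (hh : h.natDegree = n) (hhm : h.Monic) (hfe : f = g.comp h) :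
    ∃ g' h' : ℤ[X], g'.Monic ∧ h'.Monic ∧ g'.natDegree = m ∧ h'.natDegree = n ∧
      h'.coeff 0 = 0 ∧ f = g'.comp h' := by
  have hn0 : h.natDegree ≠ 0 := by omega
  set c := h.coeff 0 with hc
  have hfe' : f = (g.comp (X + C c)).comp (h - C c) := by
    rw [Polynomial.comp_assoc, Polynomial.add_comp, Polynomial.X_comp, Polynomial.C_comp,
        sub_add_cancel, ← hfe]
  have hh'm : (h - C c).Monic := by
    unfold Polynomial.Monic
    rw [Polynomial.leadingCoeff, Polynomial.natDegree_sub_C, Polynomial.coeff_sub,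
        Polynomial.coeff_C, if_neg hn0, sub_zero]
    exact hhm
  have hd' : (h - C c).natDegree = n := by rw [Polynomial.natDegree_sub_C, hh]
  refine ⟨g.comp (X + C c), h - C c,
    g_monic_of hf hfe' hh'm (by rw [hd']; omega), hh'm, ?_, hd', ?_, hfe'⟩
  · rw [Polynomial.natDegree_comp, Polynomial.natDegree_X_add_C, mul_one, hg]
  · rw [Polynomial.coeff_sub, Polynomial.coeff_C, if_pos rfl, ← hc, sub_self]

lemma normalize {f g h : ℤ[X]} {m n : ℕ} (hf : f.Monic) (hm : 1 ≤ m) (hn : 1 ≤ n)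
    (hg : g.natDegree = m) (hh : h.natDegree = n) (hfe : f = g.comp h) :
    ∃ g' h' : ℤ[X], g'.Monic ∧ h'.Monic ∧ g'.natDegree = m ∧ h'.natDegree = n ∧
      h'.coeff 0 = 0 ∧ f = g'.comp h' := by
  have hn0 : h.natDegree ≠ 0 := by omega
  have hlcf : (1:ℤ) = g.leadingCoeff * h.leadingCoeff ^ g.natDegree := by
    rw [← hf.leadingCoeff, hfe]
    exact Polynomial.leadingCoeff_comp hn0
  have hunit : IsUnit h.leadingCoeff := by
    apply isUnit_of_dvd_one
    obtain ⟨k, hk⟩ : ∃ k, g.natDegree = k + 1 := ⟨g.natDegree - 1, by omega⟩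
    refine ⟨g.leadingCoeff * h.leadingCoeff ^ k, ?_⟩
    rw [hlcf, hk, pow_succ]
    ring
  rcases Int.isUnit_iff.mp hunit with he | he
  · exact normalize2 hf hm hn hg hh (by unfold Polynomial.Monic; exact he) hfe
  · have hmh : (-h).Monic := by
      unfold Polynomial.Monic
      rw [Polynomial.leadingCoeff_neg, he, neg_neg]
    have hfe2 : f = (g.comp (-X)).comp (-h) := by
      rw [Polynomial.comp_assoc, Polynomial.neg_comp, Polynomial.X_comp, neg_neg, ← hfe]
    exact normalize2 hf hm hn
      (by rw [Polynomial.natDegree_comp, Polynomial.natDegree_neg, Polynomial.natDegree_X,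
              mul_one, hg])
      (by rw [Polynomial.natDegree_neg, hh]) hmh hfe2

/-! ### Lattice box counting -/

lemma int_finset_card_le (V : Finset ℤ) (A : ℕ)
    (hV : ∀ a ∈ V, ∀ b ∈ V, (a - b).natAbs ≤ A) : V.card ≤ A + 1 := by
  rcases V.eq_empty_or_nonempty with rfl | hne
  · simp
  · have hmin := V.min'_mem hne
    have hsub : V ⊆ Finset.Icc (V.min' hne) (V.min' hne + A) := by
      intro a ha
      rw [Finset.mem_Icc]
      have h1 := V.min'_le a ha
      have h2 := hV a ha (V.min' hne) hmin
      omega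
    calc V.card ≤ (Finset.Icc (V.min' hne) (V.min' hne + A)).card :=
          Finset.card_le_card hsub
      _ = A + 1 := by rw [Int.card_Icc]; omega

lemma lattice_box : ∀ (J : ℕ) (V : Finset ℤ[X]) (A : ℕ → ℕ),
    (∀ v ∈ V, ∀ w ∈ V, v ≠ w → (v - w).natDegree < J) →
    (∀ v ∈ V, ∀ w ∈ V, v ≠ w → ((v - w).leadingCoeff).natAbs ≤ A ((v - w).natDegree)) →
    V.card ≤ ∏ k ∈ Finset.range J, (A k + 1) := by
  intro J
  induction J with
  | zero =>
    intro V A hdeg _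
    simp only [Finset.range_zero, Finset.prod_empty]
    by_contra hc
    push_neg at hc
    rw [Finset.one_lt_card] at hc
    obtain ⟨v, hv, w, hw, hvw⟩ := hc
    exact absurd (hdeg v hv w hw hvw) (by omega)
  | succ J ih =>
    intro V A hdeg hbd
    classical
    have hmaps : ∀ v ∈ V, v.coeff J ∈ V.image (fun v => v.coeff J) := fun v hv =>
      Finset.mem_image_of_mem _ hv
    rw [Finset.card_eq_sum_card_fiberwise hmaps]
    have hfib : ∀ a ∈ V.image (fun v => v.coeff J),
        (V.filter (fun v => v.coeff J = a)).card ≤ ∏ k ∈ Finset.range J, (A k + 1) := by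
      intro a _
      apply ih
      · intro v hv w hw hvw
        rw [Finset.mem_filter] at hv hw
        have hlt := hdeg v hv.1 w hw.1 hvw
        have hcJ : (v - w).coeff J = 0 := by
          rw [Polynomial.coeff_sub, hv.2, hw.2, sub_self]
        have hvw0 : v - w ≠ 0 := sub_ne_zero.mpr hvw
        rcases lt_or_eq_of_le (Nat.lt_succ_iff.mp hlt) with h | h
        · exact h
        · exfalso
          apply hvw0
          apply Polynomial.leadingCoeff_eq_zero.mp
          rw [Polynomial.leadingCoeff, h, hcJ]
      · intro v hv w hw hvw
        rw [Finset.mem_filter] at hv hw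
        exact hbd v hv.1 w hw.1 hvw
    calc ∑ a ∈ V.image (fun v => v.coeff J), (V.filter (fun v => v.coeff J = a)).card
        ≤ ∑ _a ∈ V.image (fun v => v.coeff J), ∏ k ∈ Finset.range J, (A k + 1) :=
          Finset.sum_le_sum hfib
      _ = (V.image (fun v => v.coeff J)).card * ∏ k ∈ Finset.range J, (A k + 1) := by
          rw [Finset.sum_const, smul_eq_mul]
      _ ≤ (A J + 1) * ∏ k ∈ Finset.range J, (A k + 1) := by
          apply Nat.mul_le_mul_right
          apply int_finset_card_le
          intro a ha b hb
          rcases Finset.mem_image.mp ha with ⟨v, hv, rfl⟩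
          rcases Finset.mem_image.mp hb with ⟨w, hw, rfl⟩
          by_cases hc0 : v.coeff J = w.coeff J
          · rw [hc0]; simp
          · have hvw : v ≠ w := fun h => hc0 (by rw [h])
            have hdegJ : (v - w).natDegree = J := by
              have h1 : (v - w).coeff J ≠ 0 := by
                rw [Polynomial.coeff_sub]
                exact sub_ne_zero.mpr hc0
              have h2 := hdeg v hv w hw hvw
              have h3 : J ≤ (v - w).natDegree := Polynomial.le_natDegree_of_ne_zero h1
              omega
            have hb2 := hbd v hv w hw hvw
            rw [hdegJ] at hb2
            rw [show v.coeff J - w.coeff J = (v - w).leadingCoeff by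
              rw [Polynomial.leadingCoeff, hdegJ, Polynomial.coeff_sub]]
            exact hb2
      _ = ∏ k ∈ Finset.range (J+1), (A k + 1) := by
          rw [Finset.prod_range_succ]; ring

/-! ### Level counting -/

lemma pow_succ_sub_le (x y : ℕ) (h : y ≤ x) :
    ∀ j, x ^ (j+1) ≤ y ^ (j+1) + (j+1) * (x - y) * x ^ j := by
  intro j
  induction j with
  | zero => norm_num; omega
  | succ j ih =>
    have hxy : x = y + (x - y) := by omega
    calc x ^ (j+2) = x * x ^ (j+1) := by ring
      _ ≤ x * (y ^ (j+1) + (j+1) * (x - y) * x ^ j) := Nat.mul_le_mul_left x ih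
      _ = x * y ^ (j+1) + (j+1) * (x - y) * x ^ (j+1) := by ring
      _ = y ^ (j+2) + (x - y) * y ^ (j+1) + (j+1) * (x - y) * x ^ (j+1) := by
          nth_rewrite 1 [hxy]
          ring
      _ ≤ y ^ (j+2) + (x - y) * x ^ (j+1) + (j+1) * (x - y) * x ^ (j+1) := by
          have := Nat.pow_le_pow_left h (j+1)
          nlinarith
      _ = y ^ (j+2) + (j+2) * (x - y) * x ^ (j+1) := by ring

lemma level_count {n : ℕ} (hn : 2 ≤ n) (HF : Finset ℤ[X])
    (hHF : ∀ h ∈ HF, h.Monic ∧ h.natDegree = n ∧ h.coeff 0 = 0) (b : ℕ) (hb : 1 ≤ b) :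
    (HF.filter (fun h => ht h = b)).card ≤ 2 * n * 3 ^ (n-2) * b ^ (n-2) := by
  classical
  set enc : ℤ[X] → (Fin (n-1) → ℤ) := fun h => fun i => h.coeff ((i:ℕ)+1) with henc
  set V := HF.filter (fun h => ht h = b) with hV
  have hmem : ∀ h ∈ V, h.Monic ∧ h.natDegree = n ∧ h.coeff 0 = 0 ∧ ht h = b := by
    intro h hh
    rw [hV, Finset.mem_filter] at hh
    obtain ⟨h1, h2⟩ := hh
    exact ⟨(hHF h h1).1, (hHF h h1).2.1, (hHF h h1).2.2, h2⟩
  have hinj : Set.InjOn enc V := by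
    intro p hp q hq hpq
    obtain ⟨hpm, hpd, hp0, _⟩ := hmem p (by exact_mod_cast hp)
    obtain ⟨hqm, hqd, hq0, _⟩ := hmem q (by exact_mod_cast hq)
    apply Polynomial.ext
    intro i
    rcases Nat.eq_zero_or_pos i with rfl | hi
    · rw [hp0, hq0]
    rcases lt_trichotomy i n with hlt | heq | hgt
    · have hi1 : i - 1 < n - 1 := by omega
      have h6 := congrFun hpq ⟨i - 1, hi1⟩
      simp only [henc] at h6
      rw [show i - 1 + 1 = i from by omega] at h6
      exact h6
    · subst heq
      rw [show p.coeff i = 1 from by rw [← hpd]; exact hpm.coeff_natDegree,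
          show q.coeff i = 1 from by rw [← hqd]; exact hqm.coeff_natDegree]
    · rw [Polynomial.coeff_eq_zero_of_natDegree_lt (by omega : p.natDegree < i),
          Polynomial.coeff_eq_zero_of_natDegree_lt (by omega : q.natDegree < i)]
  have hcard : V.card = (V.image enc).card := (Finset.card_image_of_injOn hinj).symm
  set big := Fintype.piFinset (fun _ : Fin (n-1) => Finset.Icc (-(b:ℤ)) b) with hbig
  have hsubbig : V.image enc ⊆ big := by
    intro v hv
    rcases Finset.mem_image.mp hv with ⟨h, hh, rfl⟩
    obtain ⟨_, _, _, hb'⟩ := hmem h hh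
    rw [hbig, Fintype.mem_piFinset]
    intro i
    rw [Finset.mem_Icc]
    have h7 := natAbs_coeff_le_ht h ((i:ℕ)+1)
    rw [hb'] at h7
    simp only [henc]
    omega
  have hbigcard : big.card = (2*b+1)^(n-1) := by
    rw [hbig, Fintype.card_piFinset]
    simp only [Int.card_Icc]
    rw [Finset.prod_const, Finset.card_univ, Fintype.card_fin]
    congr 1
    omega
  rcases eq_or_lt_of_le hb with hb1 | hb2
  · have h5 : V.card ≤ (2*b+1)^(n-1) :=
      hcard ▸ le_trans (Finset.card_le_card hsubbig) (le_of_eq hbigcard)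
    rw [← hb1] at h5 ⊢
    calc V.card ≤ 3^(n-1) := by norm_num at h5; exact h5
      _ = 3 * 3^(n-2) := by
          rw [← pow_succ']
          congr 1
          omega
      _ ≤ 2*n*3^(n-2) * 1^(n-2) := by
          rw [one_pow, mul_one]
          exact Nat.mul_le_mul_right _ (by omega)
  · set small := Fintype.piFinset (fun _ : Fin (n-1) => Finset.Icc (-(b:ℤ)+1) ((b:ℤ)-1))
      with hsmall
    have hss : small ⊆ big := by
      rw [hsmall, hbig]
      apply Fintype.piFinset_subset
      intro a
      apply Finset.Icc_subset_Icc <;> omega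
    have hsubsd : V.image enc ⊆ big \ small := by
      intro v hv
      rw [Finset.mem_sdiff]
      refine ⟨hsubbig hv, ?_⟩
      rcases Finset.mem_image.mp hv with ⟨h, hh, rfl⟩
      obtain ⟨hm, hd, h0, hb'⟩ := hmem h hh
      obtain ⟨j, hjmem, hjeq⟩ := Finset.exists_mem_eq_sup (Finset.range (h.natDegree + 1))
        ⟨0, by simp⟩ (fun i => (h.coeff i).natAbs)
      have hjb : (h.coeff j).natAbs = b := by rw [← hjeq]; exact hb'
      have hj0 : j ≠ 0 := by
        intro hj0
        rw [hj0, h0] at hjb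
        simp at hjb
        omega
      have hjn : j ≠ n := by
        intro hjn
        rw [hjn, ← hd, hm.coeff_natDegree] at hjb
        simp at hjb
        omega
      have hjlt : j - 1 < n - 1 := by
        have := Finset.mem_range.mp hjmem
        rw [hd] at this
        omega
      intro hvs
      rw [hsmall, Fintype.mem_piFinset] at hvs
      have h8 := hvs ⟨j - 1, hjlt⟩
      rw [Finset.mem_Icc] at h8
      simp only [henc] at h8
      rw [show j - 1 + 1 = j from by omega] at h8
      omega
    have hsmallcard : small.card = (2*b-1)^(n-1) := by
      rw [hsmall, Fintype.card_piFinset]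
      simp only [Int.card_Icc]
      rw [Finset.prod_const, Finset.card_univ, Fintype.card_fin]
      congr 1
      omega
    have hsd : (big \ small).card = (2*b+1)^(n-1) - (2*b-1)^(n-1) := by
      rw [Finset.card_sdiff_of_subset hss, hbigcard, hsmallcard]
    have harith : (2*b+1)^(n-1) - (2*b-1)^(n-1) ≤ 2*n*3^(n-2)*b^(n-2) := by
      have h1 := pow_succ_sub_le (2*b+1) (2*b-1) (by omega) (n-2)
      rw [show n - 2 + 1 = n - 1 from by omega, show 2*b+1 - (2*b-1) = 2 from by omega] at h1
      have h3 : (2*b+1)^(n-2) ≤ 3^(n-2)*b^(n-2) := by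
        rw [← mul_pow]
        exact Nat.pow_le_pow_left (by omega) _
      have h4 : (n-1)*2 ≤ 2*n := by omega
      calc (2*b+1)^(n-1) - (2*b-1)^(n-1) ≤ (n-1)*2*(2*b+1)^(n-2) := by omega
        _ ≤ (2*n)*(3^(n-2)*b^(n-2)) := Nat.mul_le_mul h4 h3
        _ = 2*n*3^(n-2)*b^(n-2) := by ring
    calc V.card ≤ (big \ small).card :=
          hcard ▸ Finset.card_le_card hsubsd
      _ ≤ 2*n*3^(n-2)*b^(n-2) := by rw [hsd]; exact harith

lemma main_count {m n : ℕ} (hm : 2 ≤ m) (hn : 2 ≤ n) (hcond : m * (m-1) ≤ 2*(n-2))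
    (H : ℕ) (hH : 2 ≤ H) (β : ℕ)
    (hβ : ∀ b : ℕ, b ^ m ≤ (2^(n*m)*(n*m+1)) * H → b ≤ β) :
    DMonic (m*n) m n H ≤
      2*n*3^(n-2) * (3 * (2^(n*m)*(n*m+1)) * H)^m * β ^ (n - 1 - m*(m-1)/2) := by
  classical
  set C1 := 2^(n*m)*(n*m+1) with hC1
  set M := m*(m-1)/2 with hM
  have hMle : M ≤ n - 2 := by
    obtain ⟨k, hk⟩ := Nat.even_mul_succ_self (m-1)
    have hk2 : m * (m - 1) = k + k := by
      rw [show m = (m-1) + 1 from by omega] at hk ⊢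
      rw [mul_comm] at hk
      exact hk
    omega
  set PP : Set (ℤ[X] × ℤ[X]) := {p | p.1.Monic ∧ p.1.natDegree = m ∧ p.2.Monic ∧
    p.2.natDegree = n ∧ p.2.coeff 0 = 0 ∧ ht (p.1.comp p.2) ≤ H} with hPdef
  have hhtbd : ∀ p ∈ PP, ht p.2 ^ m ≤ C1 * H ∧ 1 ≤ ht p.2 := by
    intro p hp
    simp only [hPdef, Set.mem_setOf_eq] at hp
    obtain ⟨h1m, h1d, h2m, h2d, h20, hht⟩ := hp
    have hB1 : 1 ≤ ht p.2 := one_le_ht_of_monic h2m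
    refine ⟨?_, hB1⟩
    have hkey := key p.2 p.1 h2m (by omega) h20 h1m.ne_zero
    rw [h1d, h2d, h1m.leadingCoeff, Int.natAbs_one, one_mul] at hkey
    calc ht p.2 ^ m ≤ 2^(n*m)*(n*m+1) * ht (p.1.comp p.2) := hkey
      _ ≤ C1 * H := by rw [hC1]; exact Nat.mul_le_mul_left _ hht
  have hfin : PP.Finite := by
    apply Set.Finite.subset (Set.Finite.prod
      (finite_poly_box m (Rc C1 (((n+1) * (C1*H))^m) m H)) (finite_poly_box n (C1*H)))
    intro p hp
    obtain ⟨hBm, hB1⟩ := hhtbd p hp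
    simp only [hPdef, Set.mem_setOf_eq] at hp
    obtain ⟨h1m, h1d, h2m, h2d, h20, hht⟩ := hp
    have hhtp2 : ht p.2 ≤ C1 * H := le_trans (Nat.le_self_pow (by omega) _) hBm
    constructor
    · constructor
      · exact le_of_eq h1d
      · apply crude p.2 h2m (by omega) h20 m C1 (((n+1) * (C1*H))^m) ?_ ?_ m le_rfl p.1
          (le_of_eq h1d) H hht
        · rw [h2d, hC1]
        · apply Nat.pow_le_pow_left
          rw [h2d]
          exact Nat.mul_le_mul_left _ hhtp2
    · exact ⟨le_of_eq h2d, hhtp2⟩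
  have hstep1 : DMonic (m*n) m n H ≤ Nat.card PP := by
    haveI := hfin.to_subtype
    have hex : ∀ x : {f : ℤ[X] // f.Monic ∧ f.natDegree = m*n ∧ HeightLe f H ∧
        ∃ g h : ℤ[X], g.natDegree = m ∧ h.natDegree = n ∧ f = g.comp h},
        ∃ y : PP, (x : ℤ[X]) = (y : ℤ[X] × ℤ[X]).1.comp (y : ℤ[X] × ℤ[X]).2 := by
      rintro ⟨f, hfm, hfd, hfH, g, h, hg, hh, hfe⟩
      obtain ⟨g', h', hg'm, hh'm, hg'd, hh'd, h0', hfe'⟩ :=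
        normalize hfm (by omega) (by omega) hg hh hfe
      refine ⟨⟨(g', h'), ?_⟩, hfe'⟩
      simp only [hPdef, Set.mem_setOf_eq]
      refine ⟨hg'm, hg'd, hh'm, hh'd, h0', ?_⟩
      rw [← hfe']
      exact heightLe_iff.mp hfH
    have hinj : Function.Injective (fun x => (hex x).choose) := by
      intro x y hxy
      have hxy' : (hex x).choose = (hex y).choose := hxy
      apply Subtype.ext
      rw [(hex x).choose_spec, (hex y).choose_spec, hxy']
    exact Nat.card_le_card_of_injective _ hinj
  set PF := hfin.toFinset with hPF
  have hcardP : Nat.card PP = PF.card := by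
    rw [Nat.card_coe_set_eq, Set.ncard_eq_toFinset_card _ hfin]
  set HFin := PF.image Prod.snd with hHFin
  have hfiber : PF.card = ∑ h ∈ HFin, (PF.filter (fun p => p.2 = h)).card :=
    Finset.card_eq_sum_card_fiberwise (fun x hx => Finset.mem_image_of_mem _ hx)
  have hHmem : ∀ h ∈ HFin, h.Monic ∧ h.natDegree = n ∧ h.coeff 0 = 0 ∧ 1 ≤ ht h ∧
      ht h ^ m ≤ C1 * H := by
    intro h hh
    rcases Finset.mem_image.mp hh with ⟨p, hp, rfl⟩
    have hpP : p ∈ PP := (Set.Finite.mem_toFinset hfin).mp hp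
    obtain ⟨hBm, hB1⟩ := hhtbd p hpP
    simp only [hPdef, Set.mem_setOf_eq] at hpP
    obtain ⟨h1m, h1d, h2m, h2d, h20, hht⟩ := hpP
    exact ⟨h2m, h2d, h20, hB1, hBm⟩
  have hfibbd : ∀ h ∈ HFin, (PF.filter (fun p => p.2 = h)).card * (ht h)^M ≤ (3*C1*H)^m := by
    intro h hh
    obtain ⟨hhm, hhd, hh0, hB1, hBm⟩ := hHmem h hh
    set Gs := (PF.filter (fun p => p.2 = h)).image Prod.fst with hGs
    have hgcard : (PF.filter (fun p => p.2 = h)).card = Gs.card := by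
      rw [hGs, Finset.card_image_of_injOn]
      intro p hp q hq hpq
      rw [Finset.mem_coe, Finset.mem_filter] at hp hq
      exact Prod.ext hpq (by rw [hp.2, hq.2])
    have hGmem : ∀ g ∈ Gs, g.Monic ∧ g.natDegree = m ∧ ht (g.comp h) ≤ H := by
      intro g hg
      rcases Finset.mem_image.mp hg with ⟨p, hp, rfl⟩
      rw [Finset.mem_filter] at hp
      have hpP := (Set.Finite.mem_toFinset hfin).mp hp.1
      simp only [hPdef, Set.mem_setOf_eq] at hpP
      obtain ⟨h1m, h1d, _, _, _, hht⟩ := hpP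
      rw [hp.2] at hht
      exact ⟨h1m, h1d, hht⟩
    have hdegs : ∀ v ∈ Gs, ∀ w ∈ Gs, v ≠ w → (v - w).natDegree < m := by
      intro v hv w hw hvw
      obtain ⟨hvm, hvd, _⟩ := hGmem v hv
      obtain ⟨hwm, hwd, _⟩ := hGmem w hw
      have hdeq : v.degree = w.degree := by
        rw [Polynomial.degree_eq_natDegree hvm.ne_zero,
            Polynomial.degree_eq_natDegree hwm.ne_zero, hvd, hwd]
      have hlt := Polynomial.degree_sub_lt hdeq hvm.ne_zero
        (by rw [hvm.leadingCoeff, hwm.leadingCoeff])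
      have h2 : (v - w).natDegree < v.natDegree :=
        Polynomial.natDegree_lt_natDegree (sub_ne_zero.mpr hvw) hlt
      omega
    have hbds : ∀ v ∈ Gs, ∀ w ∈ Gs, v ≠ w →
        ((v - w).leadingCoeff).natAbs ≤ (2*C1*H) / (ht h)^((v - w).natDegree) := by
      intro v hv w hw hvw
      obtain ⟨hvm, hvd, hvh⟩ := hGmem v hv
      obtain ⟨hwm, hwd, hwh⟩ := hGmem w hw
      have hu0 : v - w ≠ 0 := sub_ne_zero.mpr hvw
      have hkey := key h (v - w) hhm (by omega) hh0 hu0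
      have hdlt : (v - w).natDegree < m := hdegs v hv w hw hvw
      have hcomp2 : ht ((v - w).comp h) ≤ 2*H := by
        rw [Polynomial.sub_comp]
        have := ht_sub_le (v.comp h) (w.comp h)
        omega
      have hfac : 2 ^ (h.natDegree * (v - w).natDegree) * (h.natDegree * (v - w).natDegree + 1)
          ≤ C1 := by
        rw [hhd, hC1]
        apply Nat.mul_le_mul
        · exact Nat.pow_le_pow_right (by norm_num) (Nat.mul_le_mul_left _ (by omega))
        · have h10 : n * (v - w).natDegree ≤ n * m :=
            Nat.mul_le_mul_left n (le_of_lt hdlt)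
          exact Nat.add_le_add_right h10 1
      rw [Nat.le_div_iff_mul_le (pow_pos (by omega) _)]
      calc ((v - w).leadingCoeff).natAbs * (ht h)^((v - w).natDegree)
          ≤ 2 ^ (h.natDegree * (v - w).natDegree) * (h.natDegree * (v - w).natDegree + 1)
            * ht ((v - w).comp h) := hkey
        _ ≤ C1 * (2*H) := Nat.mul_le_mul hfac hcomp2
        _ = 2*C1*H := by ring
    have hlb := lattice_box m Gs (fun k => (2*C1*H) / (ht h)^k) hdegs hbds
    have hAB : ∀ k ∈ Finset.range m, ((2*C1*H)/(ht h)^k + 1) * (ht h)^k ≤ 3*C1*H := by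
      intro k hk
      rw [Finset.mem_range] at hk
      have hBk : (ht h)^k ≤ C1*H := by
        calc (ht h)^k ≤ (ht h)^m := Nat.pow_le_pow_right hB1 (le_of_lt hk)
          _ ≤ C1*H := hBm
      have hdm := Nat.div_mul_le_self (2*C1*H) ((ht h)^k)
      calc ((2*C1*H)/(ht h)^k + 1) * (ht h)^k
          = (2*C1*H)/(ht h)^k * (ht h)^k + (ht h)^k := by ring
        _ ≤ 2*C1*H + C1*H := Nat.add_le_add hdm hBk
        _ = 3*C1*H := by ring
    calc (PF.filter (fun p => p.2 = h)).card * (ht h)^M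
        = Gs.card * (ht h)^M := by rw [hgcard]
      _ ≤ (∏ k ∈ Finset.range m, ((2*C1*H)/(ht h)^k + 1)) * (ht h)^M :=
          Nat.mul_le_mul_right _ hlb
      _ = (∏ k ∈ Finset.range m, ((2*C1*H)/(ht h)^k + 1)) *
            ∏ k ∈ Finset.range m, (ht h)^k := by
          congr 1
          rw [Finset.prod_pow_eq_pow_sum, Finset.sum_range_id, ← hM]
      _ = ∏ k ∈ Finset.range m, (((2*C1*H)/(ht h)^k + 1) * (ht h)^k) :=
          (Finset.prod_mul_distrib).symm
      _ ≤ ∏ k ∈ Finset.range m, (3*C1*H) := Finset.prod_le_prod' hAB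
      _ = (3*C1*H)^m := by rw [Finset.prod_const, Finset.card_range]
  set BF := HFin.image ht with hBF
  have hsum1 : ∑ h ∈ HFin, (PF.filter (fun p => p.2 = h)).card
      = ∑ b ∈ BF, ∑ h ∈ HFin.filter (fun h => ht h = b),
        (PF.filter (fun p => p.2 = h)).card :=
    (Finset.sum_fiberwise_of_maps_to (fun h hh => Finset.mem_image_of_mem _ hh) _).symm
  have hinner : ∀ b ∈ BF, ∑ h ∈ HFin.filter (fun h => ht h = b),
      (PF.filter (fun p => p.2 = h)).card
      ≤ (2*n*3^(n-2)) * b^(n-2-M) * (3*C1*H)^m := by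
    intro b hb
    rcases Finset.mem_image.mp hb with ⟨h0, hh0, rfl⟩
    obtain ⟨_, _, _, hB1, hBm⟩ := hHmem h0 hh0
    have hbound_each : ∀ h ∈ HFin.filter (fun h => ht h = ht h0),
        (PF.filter (fun p => p.2 = h)).card ≤ (3*C1*H)^m / (ht h0)^M := by
      intro h hh
      rw [Finset.mem_filter] at hh
      have h9 := hfibbd h hh.1
      rw [hh.2] at h9
      rw [Nat.le_div_iff_mul_le (pow_pos (by omega) _)]
      exact h9
    calc ∑ h ∈ HFin.filter (fun h => ht h = ht h0), (PF.filter (fun p => p.2 = h)).card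
        ≤ ∑ _h ∈ HFin.filter (fun h => ht h = ht h0), (3*C1*H)^m / (ht h0)^M :=
          Finset.sum_le_sum hbound_each
      _ = (HFin.filter (fun h => ht h = ht h0)).card * ((3*C1*H)^m / (ht h0)^M) := by
          rw [Finset.sum_const, smul_eq_mul]
      _ ≤ (2*n*3^(n-2) * (ht h0)^(n-2)) * ((3*C1*H)^m / (ht h0)^M) := by
          apply Nat.mul_le_mul_right
          exact level_count hn HFin
            (fun h hh => ⟨(hHmem h hh).1, (hHmem h hh).2.1, (hHmem h hh).2.2.1⟩) (ht h0) hB1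
      _ ≤ (2*n*3^(n-2)) * (ht h0)^(n-2-M) * (3*C1*H)^m := by
          have hsplit : (ht h0)^(n-2) = (ht h0)^(n-2-M) * (ht h0)^M := by
            rw [← pow_add]
            congr 1
            omega
          have hdm : (ht h0)^M * ((3*C1*H)^m / (ht h0)^M) ≤ (3*C1*H)^m := by
            rw [mul_comm]
            exact Nat.div_mul_le_self _ _
          calc 2*n*3^(n-2) * (ht h0)^(n-2) * ((3*C1*H)^m / (ht h0)^M)
              = 2*n*3^(n-2) * (ht h0)^(n-2-M) * ((ht h0)^M * ((3*C1*H)^m / (ht h0)^M)) := by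
                rw [hsplit]; ring
            _ ≤ 2*n*3^(n-2) * (ht h0)^(n-2-M) * (3*C1*H)^m := Nat.mul_le_mul_left _ hdm
  have hBFsub : BF ⊆ Finset.Icc 1 β := by
    intro b hb
    rcases Finset.mem_image.mp hb with ⟨h0, hh0, rfl⟩
    obtain ⟨_, _, _, hB1, hBm⟩ := hHmem h0 hh0
    rw [Finset.mem_Icc]
    exact ⟨hB1, hβ _ hBm⟩
  have hsumb : ∑ b ∈ BF, b^(n-2-M) ≤ β^(n-1-M) := by
    calc ∑ b ∈ BF, b^(n-2-M) ≤ ∑ b ∈ Finset.Icc 1 β, b^(n-2-M) :=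
          Finset.sum_le_sum_of_subset hBFsub
      _ ≤ ∑ _b ∈ Finset.Icc 1 β, β^(n-2-M) :=
          Finset.sum_le_sum (fun b hb => Nat.pow_le_pow_left (Finset.mem_Icc.mp hb).2 _)
      _ = (Finset.Icc 1 β).card * β^(n-2-M) := by rw [Finset.sum_const, smul_eq_mul]
      _ = β * β^(n-2-M) := by rw [Nat.card_Icc]; norm_num
      _ = β^(n-1-M) := by rw [← pow_succ']; congr 1; omega
  calc DMonic (m*n) m n H ≤ Nat.card PP := hstep1
    _ = PF.card := hcardP
    _ = ∑ h ∈ HFin, (PF.filter (fun p => p.2 = h)).card := hfiber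
    _ = ∑ b ∈ BF, ∑ h ∈ HFin.filter (fun h => ht h = b),
          (PF.filter (fun p => p.2 = h)).card := hsum1
    _ ≤ ∑ b ∈ BF, (2*n*3^(n-2)) * b^(n-2-M) * (3*C1*H)^m := Finset.sum_le_sum hinner
    _ = (2*n*3^(n-2)) * (3*C1*H)^m * ∑ b ∈ BF, b^(n-2-M) := by
        rw [Finset.mul_sum]
        apply Finset.sum_congr rfl
        intro b _
        ring
    _ ≤ (2*n*3^(n-2)) * (3*C1*H)^m * β^(n-1-M) := Nat.mul_le_mul_left _ hsumb
    _ = 2*n*3^(n-2) * (3 * C1 * H)^m * β ^ (n - 1 - M) := by ring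

lemma final_real {m n CL C1 M : ℕ} (hm : 2 ≤ m) (hn : 2 ≤ n) (hMeq : 2*M = m*(m-1))
    (hMle : M ≤ n-2) (H : ℕ) (hH : 2 ≤ H) (D : ℕ)
    (hD : D ≤ CL * (3*C1*H)^m * (Nat.floor (((C1*H : ℕ):ℝ) ^ ((1:ℝ)/m)))^(n-1-M)) :
    (D:ℝ) ≤ ((CL:ℝ) * ((3*C1:ℕ):ℝ)^m * (C1:ℝ) ^ ((((n-1-M : ℕ)):ℝ)/m)) *
      (H : ℝ) ^ (((m : ℝ) + 1) / 2 + ((n : ℝ) - 1) / m) := by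
  have hm0 : (m:ℝ) ≠ 0 := Nat.cast_ne_zero.mpr (by omega)
  have hX : (0:ℝ) < (H:ℝ) := by
    have : (0:ℕ) < H := by omega
    exact_mod_cast this
  have hC1nn : (0:ℝ) ≤ (C1:ℝ) := Nat.cast_nonneg _
  set e2 : ℕ := n - 1 - M with he2
  have hfl : ((Nat.floor (((C1*H:ℕ):ℝ) ^ ((1:ℝ)/m))):ℝ) ≤ ((C1*H:ℕ):ℝ) ^ ((1:ℝ)/m) :=
    Nat.floor_le (Real.rpow_nonneg (by positivity) _)
  have hcast : (D:ℝ) ≤ (CL:ℝ) * ((3*C1*H:ℕ):ℝ)^m *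
      ((Nat.floor (((C1*H : ℕ):ℝ) ^ ((1:ℝ)/m)) : ℕ):ℝ)^e2 := by
    exact_mod_cast hD
  have h3 : (D:ℝ) ≤ (CL:ℝ) * ((3*C1*H:ℕ):ℝ)^m * (((C1*H:ℕ):ℝ) ^ ((1:ℝ)/m))^e2 := by
    apply le_trans hcast
    apply mul_le_mul_of_nonneg_left _ (by positivity)
    exact pow_le_pow_left₀ (by positivity) hfl e2
  have hA : (((C1*H:ℕ):ℝ) ^ ((1:ℝ)/m))^e2
      = (C1:ℝ)^((e2:ℝ)/m) * (H:ℝ)^((e2:ℝ)/m) := by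
    rw [← Real.rpow_natCast (((C1*H:ℕ):ℝ) ^ ((1:ℝ)/m)) e2,
        ← Real.rpow_mul (by positivity)]
    rw [show (1:ℝ)/m * (e2:ℕ) = (e2:ℝ)/m from by ring]
    push_cast
    rw [Real.mul_rpow hC1nn (le_of_lt hX)]
  have hB : ((3*C1*H:ℕ):ℝ)^m = ((3*C1:ℕ):ℝ)^m * (H:ℝ)^m := by
    push_cast
    rw [← mul_pow]
  rw [hA, hB] at h3
  have hXm : (H:ℝ)^m * (H:ℝ)^((e2:ℝ)/m) = (H:ℝ)^((m:ℝ) + (e2:ℝ)/m) := by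
    rw [← Real.rpow_natCast (H:ℝ) m, ← Real.rpow_add hX]
  have hexp : (m:ℝ) + (e2:ℝ)/m = ((m : ℝ) + 1) / 2 + ((n : ℝ) - 1) / m := by
    have hMr : (2:ℝ) * M = (m:ℝ) * ((m:ℝ) - 1) := by
      have h4 : ((2*M : ℕ):ℝ) = ((m*(m-1) : ℕ):ℝ) := Nat.cast_inj.mpr hMeq
      push_cast at h4
      rw [Nat.cast_sub (by omega : 1 ≤ m)] at h4
      · push_cast at h4
        linarith [h4]
    have he2r : (e2:ℝ) = (n:ℝ) - 1 - (M:ℝ) := by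
      rw [he2]
      rw [Nat.cast_sub (by omega : M ≤ n - 1), Nat.cast_sub (by omega : 1 ≤ n)]
      push_cast
      ring
    rw [he2r]
    field_simp
    ring_nf
    nlinarith [hMr]
  calc (D:ℝ) ≤ (CL:ℝ) * (((3*C1:ℕ):ℝ)^m * (H:ℝ)^m) *
        ((C1:ℝ)^((e2:ℝ)/m) * (H:ℝ)^((e2:ℝ)/m)) := h3
    _ = ((CL:ℝ) * ((3*C1:ℕ):ℝ)^m * (C1:ℝ)^((e2:ℝ)/m)) *
        ((H:ℝ)^m * (H:ℝ)^((e2:ℝ)/m)) := by ring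
    _ = ((CL:ℝ) * ((3*C1:ℕ):ℝ)^m * (C1:ℝ)^((e2:ℝ)/m)) *
        (H:ℝ)^((m:ℝ) + (e2:ℝ)/m) := by rw [hXm]
    _ = _ := by rw [hexp]

end DAux

theorem stmt_3 (d m n : ℕ) (hd : 4 ≤ d) (hm : 2 ≤ m) (hn : 2 ≤ n) (hmn : d = m * n)
    (hcond : m * (m - 1) ≤ 2 * (n - 2)) :
    ∃ c : ℝ, 0 < c ∧ ∀ H : ℕ, 2 ≤ H →
      (DMonic d m n H : ℝ) ≤ c * (H : ℝ) ^ (((m : ℝ) + 1) / 2 + ((n : ℝ) - 1) / m) := by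
  classical
  open DAux in
  have hMeq : 2 * (m*(m-1)/2) = m*(m-1) := by
    obtain ⟨k, hk⟩ := Nat.even_mul_succ_self (m-1)
    have hk2 : m * (m - 1) = k + k := by
      rw [show m = (m-1) + 1 from by omega] at hk ⊢
      rw [mul_comm] at hk
      exact hk
    omega
  have hMle : m*(m-1)/2 ≤ n - 2 := by omega
  refine ⟨((2*n*3^(n-2) : ℕ):ℝ) * ((3*(2^(n*m)*(n*m+1)) : ℕ):ℝ)^m *
    ((2^(n*m)*(n*m+1) : ℕ):ℝ) ^ ((((n-1-(m*(m-1)/2) : ℕ)):ℝ)/m), ?_, ?_⟩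
  · apply mul_pos (mul_pos ?_ ?_) ?_
    · have : 0 < 2*n*3^(n-2) := by positivity
      exact_mod_cast this
    · have : 0 < 3*(2^(n*m)*(n*m+1)) := by positivity
      apply pow_pos
      exact_mod_cast this
    · apply Real.rpow_pos_of_pos
      have : 0 < 2^(n*m)*(n*m+1) := by positivity
      exact_mod_cast this
  · intro H hH
    have hm0 : (m:ℝ) ≠ 0 := Nat.cast_ne_zero.mpr (by omega)
    set C1 : ℕ := 2^(n*m)*(n*m+1) with hC1
    set β : ℕ := Nat.floor (((C1*H : ℕ):ℝ) ^ ((1:ℝ)/m)) with hβdef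
    have hβle : ∀ b : ℕ, b ^ m ≤ C1*H → b ≤ β := by
      intro b hb
      apply Nat.le_floor
      have h1 : ((b:ℝ)^(m:ℕ)) ≤ ((C1*H : ℕ):ℝ) := by exact_mod_cast hb
      have h2 : (b:ℝ) = ((b:ℝ)^(m:ℕ)) ^ ((1:ℝ)/m) := by
        rw [← Real.rpow_natCast (b:ℝ) m, ← Real.rpow_mul (by positivity)]
        rw [mul_one_div, div_self hm0, Real.rpow_one]
      rw [h2]
      exact Real.rpow_le_rpow (by positivity) h1 (by positivity)
    have hmain := DAux.main_count hm hn hcond H hH β hβle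
    rw [hmn]
    exact DAux.final_real hm hn hMeq hMle H hH _ hmain



end DAux
end

section
/- There exist constants c₁, c₂ > 0 such that for all integers H ≥ 2, c₁·H²·log H ≤ D_4(H) ≤ c₂·H²·log H, where D_4(H) is the number of decomposable monic polynomials in ℤ[x] of degree 4 and height at most H, and log denotes the natural logarithm. -/
open Polynomial

/-- A polynomial is decomposable if it is a composition of two polynomials of degree `≥ 2`. -/
def Decomposable (f : ℤ[X]) : Prop :=
  ∃ g h : ℤ[X], 2 ≤ g.natDegree ∧ 2 ≤ h.natDegree ∧ f = g.comp h

/-- `DdMonic d H` is the number of decomposable monic integer polynomials of degree `d`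
and height at most `H`. -/
noncomputable def DdMonic (d : ℕ) (H : ℕ) : ℕ :=
  Nat.card {f : ℤ[X] // f.Monic ∧ f.natDegree = d ∧ HeightLe f H ∧ Decomposable f}

section AuxStmt4

noncomputable def canon (b r s : ℤ) : ℤ[X] :=
  X^4 + C (2*b) * X^3 + C (b^2+r) * X^2 + C (b*r) * X + C s

lemma canon_eq_comp (b r s : ℤ) :
    canon b r s = (X^2 + C r * X + C s).comp (X^2 + C b * X) := by
  simp only [canon, add_comp, mul_comp, pow_comp, X_comp, C_comp, C_mul, C_add, C_pow, map_ofNat]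
  ring

lemma canon_coeff (b r s : ℤ) (n : ℕ) : (canon b r s).coeff n =
    if n = 0 then s else if n = 1 then b*r else if n = 2 then b^2+r
    else if n = 3 then 2*b else if n = 4 then 1 else 0 := by
  simp only [canon, coeff_add, coeff_C_mul, coeff_X_pow, coeff_C, coeff_X]
  rcases n with _|_|_|_|_|n <;> norm_num <;> split_ifs <;> omega

lemma canon_monic (b r s : ℤ) : (canon b r s).Monic := by
  unfold canon
  rw [add_assoc, add_assoc, add_assoc]
  apply monic_X_pow_add
  apply lt_of_le_of_lt (degree_add_le _ _) (max_lt ?_ ?_)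
  · exact lt_of_le_of_lt (degree_C_mul_X_pow_le _ _) (by norm_num)
  apply lt_of_le_of_lt (degree_add_le _ _) (max_lt ?_ ?_)
  · exact lt_of_le_of_lt (degree_C_mul_X_pow_le _ _) (by norm_num)
  apply lt_of_le_of_lt (degree_add_le _ _) (max_lt ?_ ?_)
  · exact lt_of_le_of_lt (degree_C_mul_X_le _) (by norm_num)
  · exact lt_of_le_of_lt (degree_C_le) (by norm_num)

lemma canon_natDegree (b r s : ℤ) : (canon b r s).natDegree = 4 := by
  have hle : (canon b r s).natDegree ≤ 4 := by
    apply natDegree_le_iff_coeff_eq_zero.2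
    intro n hn
    rw [canon_coeff]
    simp only [if_neg, show n ≠ 0 by omega, show n ≠ 1 by omega, show n ≠ 2 by omega,
      show n ≠ 3 by omega, show n ≠ 4 by omega]
    simp_all
  by_contra hne
  have : (canon b r s).coeff 4 = 0 := coeff_eq_zero_of_natDegree_lt (by omega)
  rw [canon_coeff] at this
  norm_num at this

lemma monic_quad_eq (p : ℤ[X]) (hm : p.Monic) (hd : p.natDegree = 2) :
    p = X^2 + C (p.coeff 1) * X + C (p.coeff 0) := by
  have h2 : p.coeff 2 = 1 := by
    have := hm.coeff_natDegree
    rwa [hd] at this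
  ext n
  simp only [coeff_add, coeff_C_mul, coeff_X_pow, coeff_C, coeff_X]
  rcases n with _|_|_|n
  · norm_num
  · norm_num
  · simpa using h2
  · have := coeff_eq_zero_of_natDegree_lt (show p.natDegree < n+3 by omega)
    simp [this]

lemma quad_monic (a c : ℤ) : (X^2 + C a * X + C c : ℤ[X]).Monic := by
  rw [add_assoc]
  apply monic_X_pow_add
  apply lt_of_le_of_lt (degree_add_le _ _) (max_lt ?_ ?_)
  · exact lt_of_le_of_lt (degree_C_mul_X_le _) (by norm_num)
  · exact lt_of_le_of_lt (degree_C_le) (by norm_num)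

lemma quad_natDegree (a c : ℤ) : (X^2 + C a * X + C c : ℤ[X]).natDegree = 2 := by
  refine le_antisymm ?_ (le_natDegree_of_ne_zero ?_)
  · refine (natDegree_add_le _ _).trans (max_le ((natDegree_add_le _ _).trans (max_le ?_ ?_)) ?_)
    · simp
    · exact (natDegree_C_mul_le _ _).trans (by simp)
    · simp
  · simp only [coeff_add, coeff_C_mul, coeff_X_pow, coeff_C, coeff_X]
    norm_num

lemma comp_of_monics (g h f : ℤ[X]) (hg : g.Monic) (hh : h.Monic)
    (hg2 : g.natDegree = 2) (hh2 : h.natDegree = 2) (hf : f = g.comp h) :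
    ∃ b r s : ℤ, f = canon b r s := by
  obtain ⟨u, v, hg'⟩ : ∃ u v, g = X^2 + C u * X + C v := ⟨_, _, monic_quad_eq g hg hg2⟩
  obtain ⟨p, q, hh'⟩ : ∃ p q, h = X^2 + C p * X + C q := ⟨_, _, monic_quad_eq h hh hh2⟩
  refine ⟨p, u + 2*q, q^2 + u*q + v, ?_⟩
  rw [hf, hg', hh']
  simp only [canon, add_comp, mul_comp, pow_comp, X_comp, C_comp, C_add, C_mul, C_pow, map_ofNat]
  ring

lemma decomp_to_canon (f : ℤ[X]) (hm : f.Monic) (hd : f.natDegree = 4)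
    (hdec : Decomposable f) : ∃ b r s : ℤ, f = canon b r s := by
  obtain ⟨g, h, hg2, hh2, rfl⟩ := hdec
  have hh0 : h.natDegree ≠ 0 := by omega
  have hdeg : g.natDegree * h.natDegree = 4 := by rw [← natDegree_comp]; exact hd
  have hg : g.natDegree = 2 := by nlinarith
  have hh : h.natDegree = 2 := by
    rw [hg] at hdeg; omega
  have hlc : g.leadingCoeff * h.leadingCoeff ^ 2 = 1 := by
    have h1 := leadingCoeff_comp (p := g) hh0
    rw [hg] at h1
    rw [← h1]; exact hm
  have hunit : IsUnit h.leadingCoeff :=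
    IsUnit.of_mul_eq_one (h.leadingCoeff * g.leadingCoeff) (by ring_nf; linear_combination hlc)
  rcases Int.isUnit_iff.mp hunit with h1 | h1
  · have hgm : g.Monic := by
      have : g.leadingCoeff = 1 := by rw [h1] at hlc; simpa using hlc
      exact this
    have hhm : h.Monic := h1
    exact comp_of_monics g h _ hgm hhm hg hh rfl
  · have hXdeg : (-X : ℤ[X]).natDegree = 1 := by simp
    have hglc : g.leadingCoeff = 1 := by rw [h1] at hlc; simpa using hlc
    have hgm : (g.comp (-X)).Monic := by
      unfold Monic
      rw [leadingCoeff_comp (by rw [hXdeg]; omega), hg]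
      simp [leadingCoeff_neg, hglc]
    have hhm : (-h).Monic := by
      unfold Monic
      rw [leadingCoeff_neg, h1]; norm_num
    have hgd : (g.comp (-X)).natDegree = 2 := by rw [natDegree_comp, hXdeg, hg]
    have hhd : (-h).natDegree = 2 := by rw [natDegree_neg]; exact hh
    refine comp_of_monics _ _ _ hgm hhm hgd hhd ?_
    rw [comp_assoc]
    simp [neg_comp, X_comp]

noncomputable def TS (H : ℕ) : Finset (ℤ × ℤ × ℤ) :=
  ((Finset.Icc (-(H:ℤ)) H) ×ˢ (Finset.Icc (-(2*(H:ℤ)^2)) (2*(H:ℤ)^2)) ×ˢ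
      (Finset.Icc (-(H:ℤ)) H)).filter
    (fun x => |2*x.1| ≤ (H:ℤ) ∧ |x.1^2+x.2.1| ≤ (H:ℤ) ∧ |x.1*x.2.1| ≤ (H:ℤ) ∧ |x.2.2| ≤ (H:ℤ))

lemma mem_TS {H : ℕ} (hH : 2 ≤ H) {x : ℤ × ℤ × ℤ} : x ∈ TS H ↔
    |2*x.1| ≤ (H:ℤ) ∧ |x.1^2+x.2.1| ≤ (H:ℤ) ∧ |x.1*x.2.1| ≤ (H:ℤ) ∧ |x.2.2| ≤ (H:ℤ) := by
  obtain ⟨b, r, s⟩ := x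
  simp only [TS, Finset.mem_filter, Finset.mem_product, Finset.mem_Icc]
  constructor
  · tauto
  · rintro ⟨h1, h2, h3, h4⟩
    have hb := abs_le.mp h1
    have hr := abs_le.mp h2
    have hs := abs_le.mp h4
    have hH1 : (1:ℤ) ≤ (H:ℤ) := by exact_mod_cast Nat.one_le_of_lt hH
    have hbsq : b^2 ≤ (H:ℤ)^2 := by nlinarith
    refine ⟨⟨⟨by omega, by omega⟩, ⟨by nlinarith, by nlinarith⟩, hs⟩, h1, h2, h3, h4⟩

lemma DdMonic_eq_card (H : ℕ) (hH : 2 ≤ H) : DdMonic 4 H = (TS H).card := by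
  rw [DdMonic, ← Nat.card_eq_finsetCard]
  refine (Nat.card_congr (Equiv.ofBijective
    (fun x : {y // y ∈ TS H} => (⟨canon x.1.1 x.1.2.1 x.1.2.2, ?_, ?_, ?_, ?_⟩ :
      {f : ℤ[X] // f.Monic ∧ f.natDegree = 4 ∧ HeightLe f H ∧ Decomposable f}))
    ⟨?_, ?_⟩)).symm
  · exact canon_monic _ _ _
  · exact canon_natDegree _ _ _
  · obtain ⟨h1, h2, h3, h4⟩ := (mem_TS hH).mp x.2
    intro i
    rw [canon_coeff]
    have hH1 : (1:ℤ) ≤ (H:ℤ) := by exact_mod_cast Nat.one_le_of_lt hH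
    split_ifs <;> simp_all
  · exact ⟨X^2 + C x.1.2.1 * X + C x.1.2.2, X^2 + C x.1.1 * X + C 0,
      by rw [quad_natDegree], by rw [quad_natDegree],
      by rw [map_zero, add_zero, canon_eq_comp]⟩
  · rintro ⟨⟨b, r, s⟩, hx⟩ ⟨⟨b', r', s'⟩, hy⟩ hxy
    have he : canon b r s = canon b' r' s' := congrArg Subtype.val hxy
    have e3 := congrArg (fun p => p.coeff 3) he
    have e2 := congrArg (fun p => p.coeff 2) he
    have e0 := congrArg (fun p => p.coeff 0) he
    simp only [canon_coeff] at e3 e2 e0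
    norm_num at e3 e2 e0
    have hb : b = b' := by omega
    subst hb
    have hr : r = r' := by nlinarith
    subst hr
    simp [e0]
  · rintro ⟨f, hm, hd, hht, hdec⟩
    obtain ⟨b, r, s, rfl⟩ := decomp_to_canon f hm hd hdec
    have h3 := hht 3; have h2 := hht 2; have h1 := hht 1; have h0 := hht 0
    simp only [canon_coeff] at h3 h2 h1 h0
    norm_num at h3 h2 h1 h0
    exact ⟨⟨(b, r, s), (mem_TS hH).mpr ⟨by simpa [abs_mul] using h3, h2, by simpa [abs_mul] using h1, h0⟩⟩, rfl⟩

noncomputable def LB (H : ℕ) : Finset (ℤ × ℤ × ℤ) :=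
  (Finset.Icc 1 (Nat.sqrt (H/2))).biUnion (fun n =>
    {((n:ℤ))} ×ˢ (Finset.Icc (1:ℤ) ((H:ℤ)/(2*n))) ×ˢ (Finset.Icc (-(H:ℤ)) (H:ℤ)))

lemma LB_subset (H : ℕ) (hH : 2 ≤ H) : LB H ⊆ TS H := by
  intro x hx
  simp only [LB, Finset.mem_biUnion, Finset.mem_product, Finset.mem_singleton,
    Finset.mem_Icc] at hx
  obtain ⟨n, ⟨hn1, hn2⟩, hb, ⟨hr1, hr2⟩, hs1, hs2⟩ := hx
  obtain ⟨b, r, s⟩ := x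
  simp only at hb hr1 hr2 hs1 hs2
  subst hb
  have hnn : (1:ℤ) ≤ (n:ℤ) := by exact_mod_cast hn1
  have hsq : 2 * (n:ℤ)^2 ≤ (H:ℤ) := by
    have h1 : n * n ≤ H / 2 := le_trans (Nat.mul_le_mul hn2 hn2) (Nat.sqrt_le _)
    have h3 : 2 * (n * n) ≤ H := by omega
    have h4 := (Nat.cast_le (α := ℤ)).mpr h3
    push_cast at h4
    nlinarith
  have hq : ((H:ℤ)/(2*n)) * (2*n) ≤ (H:ℤ) := Int.ediv_mul_le _ (by positivity)
  have h2n : 2 * (n:ℤ) ≤ (H:ℤ) := by nlinarith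
  rw [mem_TS hH]
  refine ⟨?_, ?_, ?_, abs_le.mpr ⟨hs1, hs2⟩⟩
  · rw [abs_of_nonneg (by positivity)]
    nlinarith
  · rw [abs_of_nonneg (by nlinarith)]
    nlinarith
  · rw [abs_of_nonneg (by nlinarith)]
    nlinarith

lemma LB_card (H : ℕ) : (LB H).card =
    ∑ n ∈ Finset.Icc 1 (Nat.sqrt (H/2)), ((H:ℤ)/(2*n)).toNat * (2*H+1) := by
  rw [LB, Finset.card_biUnion]
  · refine Finset.sum_congr rfl fun n _ => ?_
    rw [Finset.card_product, Finset.card_product, Finset.card_singleton, Int.card_Icc,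
      Int.card_Icc, one_mul, show (H:ℤ)/(2*(n:ℤ)) + 1 - 1 = (H:ℤ)/(2*n) by ring,
      show (H:ℤ) + 1 - -(H:ℤ) = 2*(H:ℤ)+1 by ring]
    congr 1
  · intro x _ y _ hxy
    simp only [Finset.disjoint_left, Finset.mem_product, Finset.mem_singleton]
    rintro a ⟨ha1, -⟩ ⟨ha2, -⟩
    exact hxy (by exact_mod_cast ha1 ▸ ha2)

lemma lower_bound (H : ℕ) (hH : 2 ≤ H) :
    (H:ℝ)^2 * Real.log H / 8 ≤ ((TS H).card : ℝ) := by
  set B := Nat.sqrt (H/2) with hBdef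
  have hB1 : 1 ≤ B := Nat.sqrt_pos.mpr (by omega)
  have hcard : (LB H).card ≤ (TS H).card := Finset.card_le_card (LB_subset H hH)
  have hHR : (0:ℝ) < H := by exact_mod_cast (by omega : 0 < H)
  have hsum : (H:ℝ)^2/2 * ∑ n ∈ Finset.Icc 1 B, ((n:ℝ))⁻¹ ≤ ((LB H).card : ℝ) := by
    rw [LB_card, Nat.cast_sum, Finset.mul_sum]
    refine Finset.sum_le_sum fun n hn => ?_
    simp only [Finset.mem_Icc] at hn
    have hn1 : (1:ℤ) ≤ (n:ℤ) := by exact_mod_cast hn.1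
    have hnR : (0:ℝ) < n := by exact_mod_cast hn.1
    set q : ℤ := (H:ℤ)/(2*(n:ℤ)) with hqdef
    have hq0 : 0 ≤ q := Int.ediv_nonneg (by positivity) (by positivity)
    have h2nH : 2*n ≤ H := by
      have hnn : n*n ≤ H/2 := le_trans (Nat.mul_le_mul hn.2 hn.2) (Nat.sqrt_le _)
      have hm : n ≤ n*n := Nat.le_mul_of_pos_left n (by omega)
      omega
    have hq1 : 1 ≤ q := by
      rw [hqdef, Int.le_ediv_iff_mul_le (by positivity)]
      have : (2*n : ℤ) ≤ (H:ℤ) := by exact_mod_cast h2nH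
      linarith
    have h4 : (H:ℤ) ≤ 4*n*q := by
      have h1 := Int.mul_ediv_add_emod (H:ℤ) (2*(n:ℤ))
      have h2 := Int.emod_lt_of_pos (H:ℤ) (show (0:ℤ) < 2*(n:ℤ) by positivity)
      nlinarith
    have h5 : (H:ℤ) ≤ 4*n*(q.toNat:ℤ) := by rwa [Int.toNat_of_nonneg hq0]
    have hqR : (H:ℝ) ≤ 4*n*(q.toNat:ℝ) := by exact_mod_cast h5
    have ht : (H:ℝ)/(4*n) ≤ (q.toNat:ℝ) := by
      rw [div_le_iff₀ (by positivity)]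
      linarith
    push_cast
    calc (H:ℝ)^2/2 * ((n:ℝ))⁻¹ = ((H:ℝ)/(4*n)) * (2*H) := by field_simp; ring
    _ ≤ (q.toNat:ℝ) * (2*H) := mul_le_mul_of_nonneg_right ht (by positivity)
    _ ≤ (q.toNat:ℝ) * (2*H+1) := by
        have : (0:ℝ) ≤ (q.toNat:ℝ) := by positivity
        nlinarith
  have hharm : Real.log (B+1) ≤ ∑ n ∈ Finset.Icc 1 B, ((n:ℝ))⁻¹ := by
    have h1 := log_add_one_le_harmonic B
    have h2 : ((harmonic B : ℚ) : ℝ) = ∑ n ∈ Finset.Icc 1 B, ((n:ℝ))⁻¹ := by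
      rw [harmonic_eq_sum_Icc]; push_cast; rfl
    rw [h2] at h1
    push_cast at h1
    exact h1
  have hlog : Real.log H ≤ 4 * Real.log (B+1) := by
    have hpow : H ≤ (B+1)^4 := by
      have h1 := Nat.lt_succ_sqrt (H/2)
      have h2 : H ≤ 2*(H/2) + 1 := by omega
      have h1' : H/2 + 1 ≤ (B+1)*(B+1) := h1
      nlinarith
    have h3 := Real.log_le_log hHR (show (H:ℝ) ≤ ((B:ℝ)+1)^4 by exact_mod_cast hpow)
    rwa [Real.log_pow] at h3
  have hlogB : 0 ≤ Real.log ((B:ℝ)+1) := Real.log_nonneg (by push_cast; linarith [hB1])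
  calc (H:ℝ)^2 * Real.log H / 8 = (H:ℝ)^2/2 * (Real.log H / 4) := by ring
  _ ≤ (H:ℝ)^2/2 * Real.log ((B:ℝ)+1) := by
      apply mul_le_mul_of_nonneg_left _ (by positivity)
      linarith
  _ ≤ (H:ℝ)^2/2 * ∑ n ∈ Finset.Icc 1 B, ((n:ℝ))⁻¹ := by
      apply mul_le_mul_of_nonneg_left _ (by positivity)
      exact_mod_cast hharm
  _ ≤ ((LB H).card : ℝ) := hsum
  _ ≤ ((TS H).card : ℝ) := by exact_mod_cast hcard

def rho (H : ℕ) (b : ℤ) : ℤ := if b = 0 then (H:ℤ) else (H:ℤ)/|b|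

noncomputable def UB (H : ℕ) : Finset (ℤ × ℤ × ℤ) :=
  (Finset.Icc (-(H:ℤ)) H).biUnion (fun b =>
    {b} ×ˢ (Finset.Icc (-(rho H b)) (rho H b)) ×ˢ (Finset.Icc (-(H:ℤ)) H))

lemma TS_subset (H : ℕ) (hH : 2 ≤ H) : TS H ⊆ UB H := by
  intro x hx
  obtain ⟨h1, h2, h3, h4⟩ := (mem_TS hH).mp hx
  obtain ⟨b, r, s⟩ := x
  simp only at h1 h2 h3 h4
  simp only [UB, Finset.mem_biUnion, Finset.mem_product, Finset.mem_singleton, Finset.mem_Icc]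
  have hb := abs_le.mp h1
  have hs := abs_le.mp h4
  refine ⟨b, ⟨by omega, by omega⟩, rfl, ?_, hs⟩
  rw [← abs_le]
  by_cases hb0 : b = 0
  · subst hb0
    simp only [rho, if_pos rfl]
    simpa using h2
  · simp only [rho, if_neg hb0]
    rw [Int.le_ediv_iff_mul_le (abs_pos.mpr hb0)]
    calc |r| * |b| = |b * r| := by rw [abs_mul]; ring
    _ ≤ (H:ℤ) := h3

lemma card_Icc_rho (H : ℕ) (b : ℤ) :
    (Finset.Icc (-(rho H b)) (rho H b)).card = 2 * (rho H b).toNat + 1 := by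
  have h0 : 0 ≤ rho H b := by
    unfold rho
    split
    · positivity
    · exact Int.ediv_nonneg (by positivity) (abs_nonneg _)
  rw [Int.card_Icc]
  omega

lemma TS_card_le (H : ℕ) (hH : 2 ≤ H) : (TS H).card ≤
    (2*H+1) * ((2*H+1) + 2 * ∑ n ∈ Finset.Icc 1 H, (2*((H:ℤ)/(n:ℤ)).toNat + 1)) := by
  have h1 : (TS H).card ≤ (UB H).card := Finset.card_le_card (TS_subset H hH)
  have h2 : (UB H).card ≤ ∑ b ∈ Finset.Icc (-(H:ℤ)) H, (2 * (rho H b).toNat + 1) * (2*H+1) := by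
    refine (Finset.card_biUnion_le).trans (Finset.sum_le_sum fun b _ => ?_)
    rw [Finset.card_product, Finset.card_product, Finset.card_singleton, one_mul,
      card_Icc_rho, Int.card_Icc]
    have : ((H:ℤ) + 1 - -(H:ℤ)).toNat = 2*H+1 := by omega
    rw [this]
  have hsplit : Finset.Icc (-(H:ℤ)) (H:ℤ) = Finset.Icc (-(H:ℤ)) (-1) ∪ Finset.Icc 0 (H:ℤ) := by
    ext x; simp only [Finset.mem_Icc, Finset.mem_union]; omega
  have hdisj : Disjoint (Finset.Icc (-(H:ℤ)) (-1)) (Finset.Icc (0:ℤ) (H:ℤ)) := by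
    rw [Finset.disjoint_left]
    intro a ha hb
    simp only [Finset.mem_Icc] at ha hb
    omega
  have himg1 : Finset.Icc (-(H:ℤ)) (-1) = Finset.image (fun n : ℕ => -(n:ℤ)) (Finset.Icc 1 H) := by
    ext x
    simp only [Finset.mem_image, Finset.mem_Icc]
    constructor
    · intro ⟨ha, hb⟩; exact ⟨(-x).toNat, by omega, by omega⟩
    · rintro ⟨n, hn, rfl⟩; omega
  have himg2 : Finset.Icc (0:ℤ) (H:ℤ) = Finset.image (fun n : ℕ => (n:ℤ)) (Finset.Icc 0 H) := by
    ext x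
    simp only [Finset.mem_image, Finset.mem_Icc]
    constructor
    · intro ⟨ha, hb⟩; exact ⟨x.toNat, by omega, by omega⟩
    · rintro ⟨n, hn, rfl⟩; omega
  have hrho_neg : ∀ n : ℕ, rho H (-(n:ℤ)) = rho H (n:ℤ) := by
    intro n
    unfold rho
    rcases eq_or_ne n 0 with rfl | hn
    · norm_num
    · rw [if_neg (by simpa using hn), if_neg (by exact_mod_cast hn), abs_neg]
  have hrho_pos : ∀ n : ℕ, 1 ≤ n → rho H (n:ℤ) = (H:ℤ)/(n:ℤ) := by
    intro n hn
    rw [rho, if_neg (by exact_mod_cast Nat.one_le_iff_ne_zero.mp hn), abs_of_nonneg (by positivity)]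
  have hsum : ∑ b ∈ Finset.Icc (-(H:ℤ)) H, (2 * (rho H b).toNat + 1) =
      (2*H+1) + 2 * ∑ n ∈ Finset.Icc 1 H, (2*((H:ℤ)/(n:ℤ)).toNat + 1) := by
    rw [hsplit, Finset.sum_union hdisj, himg1, himg2,
      Finset.sum_image (by intro a _ b _ h; simp only at h; omega),
      Finset.sum_image (by intro a _ b _ h; simp only at h; exact_mod_cast h),
      show Finset.Icc 0 H = insert 0 (Finset.Icc 1 H) by ext x; simp [Finset.mem_Icc]; omega,
      Finset.sum_insert (by simp)]
    have e0 : (2 * (rho H ((0:ℕ):ℤ)).toNat + 1) = 2*H+1 := by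
      simp [rho]
    rw [e0]
    have e1 : ∀ n ∈ Finset.Icc 1 H, (2 * (rho H (-(n:ℤ))).toNat + 1) =
        (2*((H:ℤ)/(n:ℤ)).toNat + 1) := by
      intro n hn
      simp only [Finset.mem_Icc] at hn
      rw [hrho_neg, hrho_pos n hn.1]
    have e2 : ∀ n ∈ Finset.Icc 1 H, (2 * (rho H ((n:ℕ):ℤ)).toNat + 1) =
        (2*((H:ℤ)/(n:ℤ)).toNat + 1) := by
      intro n hn
      simp only [Finset.mem_Icc] at hn
      rw [hrho_pos n hn.1]
    rw [Finset.sum_congr rfl e1, Finset.sum_congr rfl e2]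
    ring
  calc (TS H).card ≤ _ := h1
  _ ≤ _ := h2
  _ = (∑ b ∈ Finset.Icc (-(H:ℤ)) H, (2 * (rho H b).toNat + 1)) * (2*H+1) := by
      rw [Finset.sum_mul]
  _ = (2*H+1) * ((2*H+1) + 2 * ∑ n ∈ Finset.Icc 1 H, (2*((H:ℤ)/(n:ℤ)).toNat + 1)) := by
      rw [hsum, mul_comm]

lemma upper_bound (H : ℕ) (hH : 2 ≤ H) :
    ((TS H).card : ℝ) ≤ (27 / Real.log 2 + 12) * ((H:ℝ)^2 * Real.log H) := by
  have hHR : (2:ℝ) ≤ (H:ℝ) := by exact_mod_cast hH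
  have hlogH : Real.log 2 ≤ Real.log H := Real.log_le_log (by norm_num) hHR
  have hlog2 : 0 < Real.log 2 := Real.log_pos (by norm_num)
  have hlogpos : 0 < Real.log H := lt_of_lt_of_le hlog2 hlogH
  set S : ℕ := ∑ n ∈ Finset.Icc 1 H, (2*((H:ℤ)/(n:ℤ)).toNat + 1) with hSdef
  have hc : ((TS H).card : ℝ) ≤ (2*(H:ℝ)+1) * ((2*(H:ℝ)+1) + 2 * (S:ℝ)) := by
    exact_mod_cast TS_card_le H hH
  have hsum : (S:ℝ) ≤ 3*(H:ℝ) + 2*(H:ℝ)*Real.log H := by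
    rw [hSdef, Nat.cast_sum]
    have hterm : ∀ n ∈ Finset.Icc 1 H,
        ((2*((H:ℤ)/(n:ℤ)).toNat + 1 : ℕ) : ℝ) ≤ 2*((H:ℝ)*((n:ℝ))⁻¹) + 1 := by
      intro n hn
      simp only [Finset.mem_Icc] at hn
      have hn0 : (0:ℝ) < (n:ℝ) := by exact_mod_cast hn.1
      set q : ℤ := (H:ℤ)/(n:ℤ) with hq
      have hq0 : 0 ≤ q := Int.ediv_nonneg (by positivity) (by positivity)
      have hmul : q * (n:ℤ) ≤ (H:ℤ) := Int.ediv_mul_le _ (by exact_mod_cast Nat.one_le_iff_ne_zero.mp hn.1)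
      have hmul' : ((q.toNat:ℝ)) * (n:ℝ) ≤ (H:ℝ) := by
        have : (q.toNat : ℤ) * (n:ℤ) ≤ (H:ℤ) := by rwa [Int.toNat_of_nonneg hq0]
        exact_mod_cast this
      have hqle : (q.toNat:ℝ) ≤ (H:ℝ)*((n:ℝ))⁻¹ := by
        rw [← div_eq_mul_inv, le_div_iff₀ hn0]
        exact hmul'
      push_cast
      linarith
    calc ∑ n ∈ Finset.Icc 1 H, ((2*((H:ℤ)/(n:ℤ)).toNat + 1 : ℕ) : ℝ)
        ≤ ∑ n ∈ Finset.Icc 1 H, (2*((H:ℝ)*((n:ℝ))⁻¹) + 1) := Finset.sum_le_sum hterm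
    _ = 2*(H:ℝ) * (∑ n ∈ Finset.Icc 1 H, ((n:ℝ))⁻¹) + (Finset.Icc 1 H).card := by
        rw [Finset.sum_add_distrib, Finset.sum_const, Finset.mul_sum]
        simp [mul_assoc]
    _ ≤ 2*(H:ℝ) * (1 + Real.log H) + H := by
        have hcard : ((Finset.Icc 1 H).card : ℝ) = H := by
          rw [Nat.card_Icc]; simp
        rw [hcard]
        have hharm : (∑ n ∈ Finset.Icc 1 H, ((n:ℝ))⁻¹) ≤ 1 + Real.log H := by
          have h1 := harmonic_le_one_add_log H
          have h2 : ((harmonic H : ℚ) : ℝ) = ∑ n ∈ Finset.Icc 1 H, ((n:ℝ))⁻¹ := by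
            rw [harmonic_eq_sum_Icc]; push_cast; rfl
          rw [h2] at h1
          exact h1
        have : (0:ℝ) ≤ 2*(H:ℝ) := by positivity
        nlinarith
    _ = 3*(H:ℝ) + 2*(H:ℝ)*Real.log H := by ring
  have hS0 : (0:ℝ) ≤ (S:ℝ) := by positivity
  calc ((TS H).card : ℝ) ≤ (2*(H:ℝ)+1) * ((2*(H:ℝ)+1) + 2 * (S:ℝ)) := hc
  _ ≤ (3*(H:ℝ)) * (9*(H:ℝ) + 4*(H:ℝ)*Real.log H) := by nlinarith
  _ = 27*(H:ℝ)^2 + 12*((H:ℝ)^2*Real.log H) := by ring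
  _ ≤ 27*((H:ℝ)^2*Real.log H)/Real.log 2 + 12*((H:ℝ)^2*Real.log H) := by
      have h1 : 27*(H:ℝ)^2 ≤ 27*((H:ℝ)^2*Real.log H)/Real.log 2 := by
        rw [le_div_iff₀ hlog2]
        have : (0:ℝ) ≤ (H:ℝ)^2 := by positivity
        nlinarith
      linarith
  _ = (27 / Real.log 2 + 12) * ((H:ℝ)^2 * Real.log H) := by ring

end AuxStmt4

theorem stmt_4 :
    ∃ c₁ c₂ : ℝ, 0 < c₁ ∧ 0 < c₂ ∧ ∀ H : ℕ, 2 ≤ H →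
      c₁ * (H : ℝ) ^ 2 * Real.log H ≤ (DdMonic 4 H : ℝ) ∧
      (DdMonic 4 H : ℝ) ≤ c₂ * (H : ℝ) ^ 2 * Real.log H := by
  have hlog2 : 0 < Real.log 2 := Real.log_pos (by norm_num)
  refine ⟨1/8, 27 / Real.log 2 + 12, by norm_num, by positivity, fun H hH => ?_⟩
  rw [DdMonic_eq_card H hH]
  constructor
  · have h := lower_bound H hH
    calc (1/8 : ℝ) * (H:ℝ)^2 * Real.log H = (H:ℝ)^2 * Real.log H / 8 := by ring
    _ ≤ _ := h
  · calc ((TS H).card : ℝ) ≤ (27 / Real.log 2 + 12) * ((H:ℝ)^2 * Real.log H) := upper_bound H hH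
    _ = (27 / Real.log 2 + 12) * (H:ℝ)^2 * Real.log H := by ring
end

section
/- Let d ≥ 4 be an integer and let m, n be integers with m ≥ 2, n ≥ 2 and d = mn. If m(m+1) ≤ 2(n-1), then there exists a constant c > 0 (depending only on d) such that for all integers H ≥ 2, D*_d(m,n;H) ≤ c·H^{(m+1)/2 + n/m}, where the exponent (m+1)/2 + n/m is a real number. -/
open Polynomial



lemma eval_natDegree_le_one (p : ℝ[X]) (hp : p.natDegree ≤ 1) (x : ℝ) :
    p.eval x = p.coeff 0 + p.coeff 1 * x := by
  rw [eval_eq_sum_range' (Nat.lt_succ_of_le hp)]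
  simp [Finset.sum_range_succ]

lemma fd_core : ∀ (i : ℕ) (p : ℝ[X]), p.natDegree ≤ i → ∀ (δ W : ℝ),
    (∀ t : ℕ, t ≤ i → |p.eval (t * δ)| ≤ W) →
    |p.coeff i| * (i.factorial) * |δ| ^ i ≤ 2 ^ i * W := by
  intro i
  induction i with
  | zero =>
    intro p hp δ W hW
    have h0 := hW 0 le_rfl
    simp only [Nat.cast_zero, zero_mul] at h0
    have h1 : p.eval 0 = p.coeff 0 := (coeff_zero_eq_eval_zero p).symm
    rw [h1] at h0
    simpa using h0
  | succ i ih =>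
    intro p hp δ W hW
    have hW0 : 0 ≤ W := le_trans (abs_nonneg _) (by simpa using hW 0 (Nat.zero_le _))
    set q : ℝ[X] := taylor δ p - p with hq
    have hqc : ∀ j, i < j → q.coeff j = 0 := by
      intro j hj
      have htc : (taylor δ p).coeff j = (hasseDeriv j p).eval δ := taylor_coeff δ p j
      rcases eq_or_lt_of_le (Nat.succ_le_of_lt hj) with hj' | hj'
      · subst hj'
        have hdeg : (hasseDeriv (i+1) p).natDegree ≤ 1 :=
          le_trans (natDegree_hasseDeriv_le p (i+1)) (by omega)
        have : (hasseDeriv (i+1) p).eval δ = p.coeff (i+1) := by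
          rw [eval_natDegree_le_one _ hdeg]
          have c0 : (hasseDeriv (i+1) p).coeff 0 = p.coeff (i+1) := by
            rw [hasseDeriv_coeff]; simp
          have c1 : (hasseDeriv (i+1) p).coeff 1 = 0 := by
            rw [hasseDeriv_coeff]
            have : p.coeff (1 + (i+1)) = 0 := coeff_eq_zero_of_natDegree_lt (by omega)
            simp [this]
          rw [c0, c1]; ring
        simp [hq, htc, this]
      · have h2 : (taylor δ p).coeff j = 0 := by
          apply coeff_eq_zero_of_natDegree_lt
          rw [natDegree_taylor]; omega
        have h3 : p.coeff j = 0 := coeff_eq_zero_of_natDegree_lt (by omega)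
        simp [hq, h2, h3]
    have hqdeg : q.natDegree ≤ i := natDegree_le_iff_coeff_eq_zero.2 hqc
    have hqi : q.coeff i = (i+1 : ℝ) * p.coeff (i+1) * δ := by
      have htc : (taylor δ p).coeff i = (hasseDeriv i p).eval δ := taylor_coeff δ p i
      have hdeg : (hasseDeriv i p).natDegree ≤ 1 :=
        le_trans (natDegree_hasseDeriv_le p i) (by omega)
      have c0 : (hasseDeriv i p).coeff 0 = p.coeff i := by
        rw [hasseDeriv_coeff]; simp
      have c1 : (hasseDeriv i p).coeff 1 = (i+1 : ℝ) * p.coeff (i+1) := by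
        rw [hasseDeriv_coeff]
        have : (1 + i).choose i = i + 1 := by
          rw [Nat.add_comm]
          exact Nat.choose_succ_self_right i
        rw [this]
        push_cast; ring
      have : q.coeff i = ((hasseDeriv i p).eval δ) - p.coeff i := by simp [hq, htc]
      rw [this, eval_natDegree_le_one _ hdeg, c0, c1]; ring
    have hqval : ∀ t : ℕ, t ≤ i → |q.eval (t * δ)| ≤ 2 * W := by
      intro t ht
      have : q.eval (t * δ) = p.eval ((t+1 : ℕ) * δ) - p.eval (t * δ) := by
        simp only [hq, eval_sub, taylor_eval]
        push_cast; ring_nf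
      rw [this]
      calc |p.eval ((t+1 : ℕ) * δ) - p.eval (t * δ)|
          ≤ |p.eval ((t+1 : ℕ) * δ)| + |p.eval (t * δ)| := abs_sub _ _
        _ ≤ W + W := add_le_add (hW (t+1) (by omega)) (hW t (by omega))
        _ = 2 * W := by ring
    have := ih q hqdeg δ (2 * W) hqval
    rw [hqi] at this
    have habs : |(i+1 : ℝ) * p.coeff (i+1) * δ| = (i+1 : ℝ) * |p.coeff (i+1)| * |δ| := by
      rw [abs_mul, abs_mul]
      congr 1
      rw [abs_of_nonneg (by positivity : (0:ℝ) ≤ (i:ℝ)+1)]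
    rw [habs] at this
    have hfac : ((i+1).factorial : ℝ) = (i+1 : ℝ) * (i.factorial : ℝ) := by
      rw [Nat.factorial_succ]; push_cast; ring
    calc |p.coeff (i+1)| * ((i+1).factorial : ℝ) * |δ| ^ (i+1)
        = ((i+1:ℝ) * |p.coeff (i+1)| * |δ|) * (i.factorial : ℝ) * |δ| ^ i := by
          rw [hfac, pow_succ]; ring
      _ ≤ 2 ^ i * (2 * W) := this
      _ = 2 ^ (i+1) * W := by ring
open Polynomial Finset

lemma trunc_coeff (p : ℝ[X]) (i k : ℕ) :
    (∑ j ∈ Finset.range (i+1), C (p.coeff j) * X^j).coeff k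
      = if k ≤ i then p.coeff k else 0 := by
  rw [finset_sum_coeff]
  have : ∀ j ∈ Finset.range (i+1), (C (p.coeff j) * X^j).coeff k
      = if k = j then p.coeff j else 0 := by
    intro j _
    rw [coeff_C_mul, coeff_X_pow]
    by_cases h : k = j <;> simp [h]
  rw [Finset.sum_congr rfl this, Finset.sum_ite_eq (Finset.range (i+1)) k]
  simp [Nat.lt_succ_iff]

lemma trunc_natDegree (p : ℝ[X]) (i : ℕ) :
    (∑ j ∈ Finset.range (i+1), C (p.coeff j) * X^j).natDegree ≤ i := by
  apply natDegree_le_iff_coeff_eq_zero.2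
  intro k hk
  rw [trunc_coeff]
  simp [Nat.not_le.mpr hk, le_of_lt hk]

lemma trunc_eval (p : ℝ[X]) (i : ℕ) (y : ℝ) :
    (∑ j ∈ Finset.range (i+1), C (p.coeff j) * X^j).eval y
      = ∑ j ∈ Finset.range (i+1), p.coeff j * y^j := by
  rw [eval_finset_sum]
  simp

lemma peel (N : ℕ) (hN : 1 ≤ N) (μ W R : ℝ) (hμ : 1 ≤ μ) (hW : 0 ≤ W) (hR : 1 ≤ R)
    (E : Set ℝ) (p : ℝ[X]) (hpN : p.natDegree ≤ N)
    (hE0 : ∀ y ∈ E, |y| ≤ R * μ)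
    (hEval : ∀ y ∈ E, |p.eval y| ≤ W)
    (hprog : ∀ i, 1 ≤ i → i ≤ N → ∃ δ : ℝ, μ ≤ N * |δ| ∧ ∀ t : ℕ, t ≤ i → (t : ℝ) * δ ∈ E) :
    ∀ i ≤ N, |p.coeff i| * μ ^ i ≤ ((2*N:ℝ)^N * (1 + N * R^N) + 1) ^ (N + 1) * W := by
  set β : ℝ := (2*N:ℝ)^N * (1 + N * R^N) + 1 with hβdef
  have hβ1 : (1:ℝ) ≤ β := by
    have h1 : (0:ℝ) ≤ (2*N:ℝ)^N := by positivity
    have h2 : (0:ℝ) ≤ 1 + N * R^N := by positivity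
    nlinarith
  have hβ0 : (0:ℝ) ≤ β := le_trans zero_le_one hβ1
  have hμ0 : (0:ℝ) ≤ μ := le_trans zero_le_one hμ
  -- the step lemma
  have step : ∀ i ≤ N, (∀ j, i < j → j ≤ N → |p.coeff j| * μ ^ j ≤ β ^ (N - j + 1) * W) →
      |p.coeff i| * μ ^ i ≤ β ^ (N - i + 1) * W := by
    intro i hiN IH
    rcases Nat.eq_zero_or_pos i with hi0 | hi1
    · subst hi0
      obtain ⟨δ, hδ, hmem⟩ := hprog 1 le_rfl hN
      have h0E : (0:ℝ) ∈ E := by simpa using hmem 0 (by omega)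
      have h1 : |p.eval 0| ≤ W := hEval 0 h0E
      rw [← coeff_zero_eq_eval_zero] at h1
      have hb : (1:ℝ) ≤ β^(N-0+1) := one_le_pow₀ hβ1
      simp only [pow_zero, mul_one, Nat.sub_zero]
      calc |p.coeff 0| ≤ W := h1
        _ = 1 * W := (one_mul W).symm
        _ ≤ β^(N+1) * W := mul_le_mul_of_nonneg_right (by simpa using hb) hW
    · -- main case i ≥ 1
      obtain ⟨δ, hδ, hmem⟩ := hprog i hi1 hiN
      set q : ℝ[X] := ∑ j ∈ Finset.range (i+1), C (p.coeff j) * X^j with hq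
      have hqdeg : q.natDegree ≤ i := trunc_natDegree p i
      have hqcoeff : q.coeff i = p.coeff i := by rw [hq, trunc_coeff]; simp
      set Wi : ℝ := W * (1 + (N:ℝ) * R^N * β^(N-i)) with hWi
      have hWi0 : 0 ≤ Wi := by positivity
      have hqval : ∀ t : ℕ, t ≤ i → |q.eval ((t:ℝ) * δ)| ≤ Wi := by
        intro t ht
        set y : ℝ := (t:ℝ) * δ with hy
        have hyE : y ∈ E := hmem t ht
        have hsplit : q.eval y = p.eval y - ∑ j ∈ Finset.Icc (i+1) N, p.coeff j * y^j := by
          have hev : p.eval y = ∑ j ∈ Finset.range (N+1), p.coeff j * y^j :=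
            eval_eq_sum_range' (Nat.lt_succ_of_le hpN) y
          have hsum : ∑ j ∈ Finset.range (i+1), p.coeff j * y^j
              + ∑ j ∈ Finset.Icc (i+1) N, p.coeff j * y^j
              = ∑ j ∈ Finset.range (N+1), p.coeff j * y^j := by
            rw [Finset.range_eq_Ico, Finset.range_eq_Ico, ← Finset.Ico_add_one_right_eq_Icc (i+1) N]
            exact Finset.sum_Ico_consecutive (fun j => p.coeff j * y^j) (by omega : 0 ≤ i+1) (by omega : i+1 ≤ N+1)
          rw [hq, trunc_eval, hev, ← hsum]; ring
        rw [hsplit]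
        have hbound : ∀ j ∈ Finset.Icc (i+1) N, |p.coeff j * y^j| ≤ β^(N-i) * W * R^N := by
          intro j hj
          simp only [Finset.mem_Icc] at hj
          have hyR : |y| ≤ R * μ := hE0 y hyE
          have h1 : |p.coeff j * y^j| = |p.coeff j| * |y|^j := by
            rw [abs_mul, abs_pow]
          have h2 : |y|^j ≤ (R*μ)^j := pow_le_pow_left₀ (abs_nonneg _) hyR j
          have h3 : |p.coeff j| * μ^j ≤ β^(N-j+1) * W := IH j hj.1 hj.2
          have h4 : β^(N-j+1) ≤ β^(N-i) := pow_le_pow_right₀ hβ1 (by omega)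
          have h5 : R^j ≤ R^N := pow_le_pow_right₀ hR hj.2
          calc |p.coeff j * y^j| = |p.coeff j| * |y|^j := h1
            _ ≤ |p.coeff j| * (R*μ)^j := by
                apply mul_le_mul_of_nonneg_left h2 (abs_nonneg _)
            _ = (|p.coeff j| * μ^j) * R^j := by rw [mul_pow]; ring
            _ ≤ (β^(N-j+1) * W) * R^N := by
                apply mul_le_mul h3 h5 (by positivity) (by positivity)
            _ ≤ (β^(N-i) * W) * R^N := by
                apply mul_le_mul_of_nonneg_right _ (by positivity)
                exact mul_le_mul_of_nonneg_right h4 hW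
            _ = β^(N-i) * W * R^N := by ring
        calc |p.eval y - ∑ j ∈ Finset.Icc (i+1) N, p.coeff j * y^j|
            ≤ |p.eval y| + |∑ j ∈ Finset.Icc (i+1) N, p.coeff j * y^j| := abs_sub _ _
          _ ≤ W + ∑ j ∈ Finset.Icc (i+1) N, |p.coeff j * y^j| := by
              apply add_le_add (hEval y hyE) (Finset.abs_sum_le_sum_abs _ _)
          _ ≤ W + (Finset.Icc (i+1) N).card * (β^(N-i) * W * R^N) := by
              apply add_le_add (le_refl W)
              apply Finset.sum_le_card_nsmul _ _ _ hbound |>.trans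
              simp [nsmul_eq_mul]
          _ ≤ W + (N:ℝ) * (β^(N-i) * W * R^N) := by
              apply add_le_add (le_refl W)
              apply mul_le_mul_of_nonneg_right _ (by positivity)
              have : (Finset.Icc (i+1) N).card ≤ N := by
                rw [Nat.card_Icc]; omega
              exact_mod_cast this
          _ = Wi := by rw [hWi]; ring
      have hfd := fd_core i q hqdeg δ Wi hqval
      rw [hqcoeff] at hfd
      -- |p.coeff i| * |δ|^i ≤ 2^i * Wi
      have hfac1 : (1:ℝ) ≤ (i.factorial : ℝ) := by exact_mod_cast Nat.one_le_iff_ne_zero.mpr i.factorial_ne_zero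
      have h6 : |p.coeff i| * |δ|^i ≤ 2^i * Wi := by
        nlinarith [abs_nonneg (p.coeff i), pow_nonneg (abs_nonneg δ) i,
          mul_le_mul_of_nonneg_right hfac1 (mul_nonneg (abs_nonneg (p.coeff i)) (pow_nonneg (abs_nonneg δ) i))]
      have hμδ : μ^i ≤ (N:ℝ)^i * |δ|^i := by
        rw [← mul_pow]
        exact pow_le_pow_left₀ hμ0 hδ i
      have h7 : |p.coeff i| * μ^i ≤ (N:ℝ)^i * (|p.coeff i| * |δ|^i) := by
        calc |p.coeff i| * μ^i ≤ |p.coeff i| * ((N:ℝ)^i * |δ|^i) :=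
              mul_le_mul_of_nonneg_left hμδ (abs_nonneg _)
          _ = (N:ℝ)^i * (|p.coeff i| * |δ|^i) := by ring
      have h8 : |p.coeff i| * μ^i ≤ (2*N:ℝ)^i * Wi := by
        calc |p.coeff i| * μ^i ≤ (N:ℝ)^i * (2^i * Wi) := by
              apply h7.trans
              apply mul_le_mul_of_nonneg_left h6 (by positivity)
          _ = (2*N:ℝ)^i * Wi := by rw [mul_pow]; ring
      have h9 : ((2*N:ℝ))^i ≤ ((2*N:ℝ))^N := by
        apply pow_le_pow_right₀ _ hiN
        have : (1:ℝ) ≤ (N:ℝ) := by exact_mod_cast hN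
        linarith
      calc |p.coeff i| * μ^i ≤ (2*N:ℝ)^i * Wi := h8
        _ ≤ (2*N:ℝ)^N * Wi := mul_le_mul_of_nonneg_right h9 hWi0
        _ = (2*N:ℝ)^N * W * (1 + (N:ℝ) * R^N * β^(N-i)) := by rw [hWi]; ring
        _ ≤ (2*N:ℝ)^N * W * (β^(N-i) * (1 + (N:ℝ) * R^N)) := by
            apply mul_le_mul_of_nonneg_left _ (by positivity)
            have hb : (1:ℝ) ≤ β^(N-i) := one_le_pow₀ hβ1
            nlinarith [pow_nonneg hβ0 (N-i), mul_nonneg (mul_nonneg (Nat.cast_nonneg N : (0:ℝ) ≤ N) (pow_nonneg (by linarith : (0:ℝ) ≤ R) N)) (pow_nonneg hβ0 (N-i))]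
        _ = β^(N-i) * ((2*N:ℝ)^N * (1 + (N:ℝ) * R^N)) * W := by ring
        _ ≤ β^(N-i) * β * W := by
            apply mul_le_mul_of_nonneg_right _ hW
            apply mul_le_mul_of_nonneg_left _ (by positivity)
            rw [hβdef]; linarith
        _ = β^(N-i+1) * W := by rw [pow_succ]
  -- downward induction
  have main : ∀ t, ∀ i, i ≤ N → N ≤ i + t → |p.coeff i| * μ ^ i ≤ β ^ (N - i + 1) * W := by
    intro t
    induction t with
    | zero =>
      intro i h1 h2
      exact step i h1 (fun j hj hjN => by omega)
    | succ t ih =>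
      intro i h1 h2
      by_cases hc : N ≤ i + t
      · exact ih i h1 hc
      · exact step i h1 (fun j hj hjN => ih j hjN (by omega))
  intro i hi
  calc |p.coeff i| * μ^i ≤ β^(N-i+1) * W := main N i hi (by omega)
    _ ≤ β^(N+1) * W := by
      apply mul_le_mul_of_nonneg_right _ hW
      exact pow_le_pow_right₀ hβ1 (by omega)

noncomputable def Beta1 (n : ℕ) : ℝ := ((2*n:ℝ)^n * (1 + (n:ℝ) * (n:ℝ)^n) + 1)^(n+1)
noncomputable def R2c (n : ℕ) : ℝ := ((n:ℝ)+1) * Beta1 n * (n:ℝ)^n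
noncomputable def Beta2 (m n : ℕ) : ℝ := ((2*m:ℝ)^m * (1 + (m:ℝ) * (R2c n)^m) + 1)^(m+1)
noncomputable def Atot (m n d : ℕ) : ℝ := Beta2 m n * (((d:ℝ)+1) * (n:ℝ)^d)

lemma evalcast (p : ℤ[X]) (k : ℤ) :
    (p.map (Int.castRingHom ℝ)).eval (k:ℝ) = ((p.eval k : ℤ) : ℝ) := by
  rw [eval_map]
  have : (k : ℝ) = (Int.castRingHom ℝ) k := rfl
  rw [this, eval₂_at_apply]
  rfl

lemma Beta1_ge_one (n : ℕ) (hn : 1 ≤ n) : 1 ≤ Beta1 n := by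
  unfold Beta1
  apply one_le_pow₀
  have h1 : (0:ℝ) ≤ (2*n:ℝ)^n := by positivity
  have h2 : (0:ℝ) ≤ 1 + (n:ℝ) * (n:ℝ)^n := by positivity
  nlinarith

lemma R2c_ge_one (n : ℕ) (hn : 1 ≤ n) : 1 ≤ R2c n := by
  unfold R2c
  have h1 : (1:ℝ) ≤ Beta1 n := Beta1_ge_one n hn
  have h2 : (1:ℝ) ≤ (n:ℝ)^n := one_le_pow₀ (by exact_mod_cast hn)
  have h3 : (1:ℝ) ≤ (n:ℝ)+1 := by
    have : (0:ℝ) ≤ n := Nat.cast_nonneg n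
    linarith
  have hA : 1 ≤ ((n:ℝ)+1) * Beta1 n := by nlinarith
  nlinarith

lemma key (m n d H : ℕ) (hm : 1 ≤ m) (hn : 1 ≤ n) (hH : 1 ≤ H)
    (f g h : ℤ[X]) (hfd : f.natDegree ≤ d) (hfh : ∀ i, |f.coeff i| ≤ (H:ℤ))
    (hg : g.natDegree ≤ m) (hh : h.natDegree ≤ n) (h0 : h.eval 0 = 0)
    (hcomp : f = g.comp h)
    (v : ℕ) (hv1 : 1 ≤ v)
    (hub : ∀ k : ℕ, k ≤ n → (h.eval (k:ℤ)).natAbs ≤ v)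
    (hattain : ∃ k₀ : ℕ, k₀ ≤ n ∧ (h.eval (k₀:ℤ)).natAbs = v) :
    ∀ i ≤ m, (|(g.coeff i : ℤ)| : ℝ) * (v:ℝ)^i ≤ Atot m n d * H := by
  set φ := Int.castRingHom ℝ with hφ
  set Ph := h.map φ with hPh
  set G := g.map φ with hG
  set Pf := f.map φ with hPf
  have hPhdeg : Ph.natDegree ≤ n := le_trans (natDegree_map_le) hh
  have hGdeg : G.natDegree ≤ m := le_trans (natDegree_map_le) hg
  have hPfdeg : Pf.natDegree ≤ d := le_trans (natDegree_map_le) hfd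
  have hv0 : (0:ℝ) ≤ v := Nat.cast_nonneg v
  have hv1R : (1:ℝ) ≤ (v:ℝ) := by exact_mod_cast hv1
  have hn1R : (1:ℝ) ≤ (n:ℝ) := by exact_mod_cast hn
  have hPh0 : Ph.eval 0 = 0 := by
    have := evalcast h 0
    simp only [Int.cast_zero] at this
    rw [hPh, this, h0]
    simp
  have hPhevalk : ∀ k : ℕ, k ≤ n → |Ph.eval (k:ℝ)| ≤ (v:ℝ) := by
    intro k hk
    have h1 : ((k:ℤ):ℝ) = (k:ℝ) := by push_cast; ring
    have h2 : Ph.eval (k:ℝ) = ((h.eval (k:ℤ) : ℤ) : ℝ) := by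
      rw [← h1, hPh, evalcast]
    rw [h2]
    have h3 := hub k hk
    rw [← Int.cast_abs, Int.abs_eq_natAbs]
    exact_mod_cast h3
  -- Instance 1 : coefficients of Ph
  have inst1 : ∀ i ≤ n, |Ph.coeff i| ≤ Beta1 n * v := by
    have hp := peel n hn 1 (v:ℝ) (n:ℝ) le_rfl hv0 hn1R
      {y : ℝ | ∃ k : ℕ, k ≤ n ∧ y = (k:ℝ)} Ph hPhdeg
      (by rintro y ⟨k, hk, rfl⟩
          rw [abs_of_nonneg (Nat.cast_nonneg k), mul_one]
          exact_mod_cast hk)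
      (by rintro y ⟨k, hk, rfl⟩
          exact hPhevalk k hk)
      (by intro i hi1 hin
          refine ⟨1, by simpa using hn1R, ?_⟩
          intro t ht
          exact ⟨t, le_trans ht hin, by ring⟩)
    intro i hi
    have := hp i hi
    simpa [Beta1] using this
  -- sup bound for Ph on [0,n]
  have hPhsup : ∀ x : ℝ, x ∈ Set.Icc (0:ℝ) (n:ℝ) → |Ph.eval x| ≤ R2c n * v := by
    intro x hx
    obtain ⟨hx0, hxn⟩ := hx
    have hxabs : |x| ≤ (n:ℝ) := by rw [abs_of_nonneg hx0]; exact hxn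
    rw [eval_eq_sum_range' (Nat.lt_succ_of_le hPhdeg)]
    calc |∑ j ∈ Finset.range (n+1), Ph.coeff j * x^j|
        ≤ ∑ j ∈ Finset.range (n+1), |Ph.coeff j * x^j| := Finset.abs_sum_le_sum_abs _ _
      _ ≤ ∑ j ∈ Finset.range (n+1), Beta1 n * v * (n:ℝ)^n := by
          apply Finset.sum_le_sum
          intro j hj
          rw [Finset.mem_range, Nat.lt_succ_iff] at hj
          rw [abs_mul, abs_pow]
          apply mul_le_mul (inst1 j hj) _ (by positivity)
            (le_trans (by positivity) (inst1 j hj))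
          calc |x|^j ≤ (n:ℝ)^j := pow_le_pow_left₀ (abs_nonneg x) hxabs j
            _ ≤ (n:ℝ)^n := pow_le_pow_right₀ hn1R hj
      _ = ((n:ℝ)+1) * (Beta1 n * v * (n:ℝ)^n) := by
          rw [Finset.sum_const, Finset.card_range]
          push_cast; ring
      _ = R2c n * v := by unfold R2c; ring
  -- bound for Pf on [0,n]
  have hPfsup : ∀ x : ℝ, x ∈ Set.Icc (0:ℝ) (n:ℝ) → |Pf.eval x| ≤ ((d:ℝ)+1) * (n:ℝ)^d * H := by
    intro x hx
    obtain ⟨hx0, hxn⟩ := hx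
    have hxabs : |x| ≤ (n:ℝ) := by rw [abs_of_nonneg hx0]; exact hxn
    rw [eval_eq_sum_range' (Nat.lt_succ_of_le hPfdeg)]
    calc |∑ j ∈ Finset.range (d+1), Pf.coeff j * x^j|
        ≤ ∑ j ∈ Finset.range (d+1), |Pf.coeff j * x^j| := Finset.abs_sum_le_sum_abs _ _
      _ ≤ ∑ j ∈ Finset.range (d+1), (H:ℝ) * (n:ℝ)^d := by
          apply Finset.sum_le_sum
          intro j hj
          rw [Finset.mem_range, Nat.lt_succ_iff] at hj
          rw [abs_mul, abs_pow]
          have hc : |Pf.coeff j| ≤ (H:ℝ) := by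
            rw [hPf, coeff_map]
            have := hfh j
            have : |((f.coeff j : ℤ) : ℝ)| ≤ ((H:ℕ):ℝ) := by
              rw [← Int.cast_abs]
              exact_mod_cast this
            exact this
          apply mul_le_mul hc _ (by positivity) (Nat.cast_nonneg H)
          calc |x|^j ≤ (n:ℝ)^j := pow_le_pow_left₀ (abs_nonneg x) hxabs j
            _ ≤ (n:ℝ)^d := pow_le_pow_right₀ hn1R (by
                have : j ≤ d := le_trans hj (le_refl d)
                exact this)
      _ = ((d:ℝ)+1) * ((H:ℝ) * (n:ℝ)^d) := by
          rw [Finset.sum_const, Finset.card_range]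
          push_cast; ring
      _ = ((d:ℝ)+1) * (n:ℝ)^d * H := by ring
  -- Instance 2
  obtain ⟨k₀, hk₀n, hk₀v⟩ := hattain
  have hYval : |Ph.eval ((k₀:ℕ):ℝ)| = (v:ℝ) := by
    have h1 : ((k₀:ℤ):ℝ) = ((k₀:ℕ):ℝ) := by push_cast; ring
    have h2 : Ph.eval ((k₀:ℕ):ℝ) = ((h.eval (k₀:ℤ) : ℤ) : ℝ) := by
      rw [← h1, hPh, evalcast]
    rw [h2, ← Int.cast_abs, Int.abs_eq_natAbs, hk₀v]
    push_cast; ring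
  have hR2 : (1:ℝ) ≤ R2c n := R2c_ge_one n hn
  set W : ℝ := ((d:ℝ)+1) * (n:ℝ)^d * H with hW
  have hW0 : 0 ≤ W := by positivity
  have inst2 : ∀ i ≤ m, |G.coeff i| * (v:ℝ)^i ≤ Beta2 m n * W := by
    have hm1R : (1:ℝ) ≤ (m:ℝ) := by exact_mod_cast hm
    have hp := peel m hm (v:ℝ) W (R2c n) hv1R hW0 hR2
      (Ph.eval '' (Set.Icc (0:ℝ) (n:ℝ))) G hGdeg
      (by rintro y ⟨x, hx, rfl⟩
          exact hPhsup x hx)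
      (by rintro y ⟨x, hx, rfl⟩
          have : G.eval (Ph.eval x) = Pf.eval x := by
            rw [hPf, hcomp, hφ, Polynomial.map_comp, eval_comp]
          rw [this]
          exact hPfsup x hx)
      ?_
    · intro i hi
      have := hp i hi
      simpa [Beta2] using this
    · intro i hi1 him
      set Y : ℝ := Ph.eval ((k₀:ℕ):ℝ) with hY
      refine ⟨Y / i, ?_, ?_⟩
      · have hi0 : (0:ℝ) < (i:ℝ) := by exact_mod_cast hi1
        rw [abs_div, hYval, abs_of_pos hi0]
        have him' : (i:ℝ) ≤ (m:ℝ) := by exact_mod_cast him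
        calc (v:ℝ) = ((v:ℝ) / i) * i := by field_simp
          _ ≤ ((v:ℝ) / i) * m := by
              apply mul_le_mul_of_nonneg_left him' (by positivity)
          _ = (m:ℝ) * ((v:ℝ) / i) := by ring
      · intro t ht
        have hi0 : (0:ℝ) < (i:ℝ) := by exact_mod_cast hi1
        have hmem : (t:ℝ) * (Y / i) ∈ Set.uIcc (0:ℝ) Y := by
          have hc0 : (0:ℝ) ≤ (t:ℝ)/i := by positivity
          have hc1 : (t:ℝ)/i ≤ 1 := by
            rw [div_le_one hi0]
            exact_mod_cast ht
          have heq : (t:ℝ) * (Y / i) = ((t:ℝ)/i) * Y := by ring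
          rw [heq]
          rcases le_total 0 Y with hY0 | hY0
          · rw [Set.uIcc_of_le hY0]
            constructor
            · positivity
            · nlinarith
          · rw [Set.uIcc_of_ge hY0]
            constructor
            · nlinarith
            · exact mul_nonpos_of_nonneg_of_nonpos hc0 hY0
        have hsub : Set.uIcc (0:ℝ) Y ⊆ Ph.eval '' (Set.Icc (0:ℝ) (n:ℝ)) := by
          have hIVT := intermediate_value_uIcc
            (Continuous.continuousOn (Polynomial.continuous Ph) :
              ContinuousOn (fun x => Ph.eval x) (Set.uIcc (0:ℝ) ((k₀:ℕ):ℝ)))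
          have h0' : Ph.eval (0:ℝ) = 0 := hPh0
          have huIcc : Set.uIcc (Ph.eval (0:ℝ)) (Ph.eval ((k₀:ℕ):ℝ)) = Set.uIcc (0:ℝ) Y := by
            rw [h0', hY]
          rw [huIcc] at hIVT
          apply hIVT.trans
          apply Set.image_mono
          have hk0R : (0:ℝ) ≤ ((k₀:ℕ):ℝ) := Nat.cast_nonneg k₀
          rw [Set.uIcc_of_le hk0R]
          apply Set.Icc_subset_Icc le_rfl
          exact_mod_cast hk₀n
        exact hsub hmem
  intro i hi
  have := inst2 i hi
  have hGc : G.coeff i = ((g.coeff i : ℤ) : ℝ) := by rw [hG, coeff_map]; rfl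
  rw [hGc] at this
  calc |((g.coeff i : ℤ) : ℝ)| * (v:ℝ)^i ≤ Beta2 m n * W := this
    _ = Atot m n d * H := by unfold Atot; rw [hW]; ring

lemma normalized_decomp (f : ℤ[X]) (m n : ℕ) (hm : 1 ≤ m) (hn : 1 ≤ n)
    (hex : ∃ g h : ℤ[X], g.natDegree = m ∧ h.natDegree = n ∧ f = g.comp h) :
    ∃ gh : ℤ[X] × ℤ[X], gh.1.natDegree = m ∧ gh.2.natDegree = n ∧ f = gh.1.comp gh.2
      ∧ gh.2.eval 0 = 0 := by
  obtain ⟨g, h, hg, hh, hf⟩ := hex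
  set a : ℤ := h.eval 0 with ha
  refine ⟨⟨g.comp (X + C a), h - C a⟩, ?_, ?_, ?_, ?_⟩
  · simp only [natDegree_comp, natDegree_X_add_C, mul_one, hg]
  · simp only [natDegree_sub_C, hh]
  · have h1 : (X + C a).comp (h - C a) = h := by
      simp [add_comm]
    rw [Polynomial.comp_assoc, h1, hf]
  · simp [ha]

lemma int_poly_eq_on (p q : ℤ[X]) (n : ℕ) (hp : p.natDegree ≤ n) (hq : q.natDegree ≤ n)
    (hev : ∀ k : ℕ, k ≤ n → p.eval (k:ℤ) = q.eval (k:ℤ)) : p = q := by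
  have hcast : Function.Injective (fun k : ℕ => (k:ℤ)) := fun a b hab => by simpa using hab
  have h := eq_zero_of_natDegree_lt_card_of_eval_eq_zero' (p - q)
    ((Finset.range (n+1)).image (fun k : ℕ => (k:ℤ)))
    (by
      intro i hi
      simp only [Finset.mem_image, Finset.mem_range] at hi
      obtain ⟨k, hk, rfl⟩ := hi
      simp [hev k (by omega)])
    (by
      rw [Finset.card_image_of_injective _ hcast, Finset.card_range]
      calc (p - q).natDegree ≤ max p.natDegree q.natDegree := natDegree_sub_le p q
        _ ≤ n := by omega
        _ < n + 1 := by omega)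
  exact sub_eq_zero.mp h

lemma pow_sub_pow_le_real (a b : ℝ) (n : ℕ) (hb : 0 ≤ b) (hba : b ≤ a) :
    a^n - b^n ≤ n * (a - b) * a^(n-1) := by
  have ha : 0 ≤ a := le_trans hb hba
  have hgeo := geom_sum₂_mul a b n
  rw [← hgeo]
  have hsum : (∑ i ∈ Finset.range n, a^i * b^(n-1-i)) ≤ n * a^(n-1) := by
    calc (∑ i ∈ Finset.range n, a^i * b^(n-1-i)) ≤ ∑ i ∈ Finset.range n, a^(n-1) := by
          apply Finset.sum_le_sum
          intro i hi
          rw [Finset.mem_range] at hi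
          calc a^i * b^(n-1-i) ≤ a^i * a^(n-1-i) := by
                apply mul_le_mul_of_nonneg_left (pow_le_pow_left₀ hb hba _) (by positivity)
            _ = a^(n-1) := by
                rw [← pow_add]
                congr 1
                omega
      _ = n * a^(n-1) := by rw [Finset.sum_const, Finset.card_range, nsmul_eq_mul]
  have hab : 0 ≤ a - b := by linarith
  calc (∑ i ∈ Finset.range n, a^i * b^(n-1-i)) * (a - b)
      ≤ (n * a^(n-1)) * (a - b) := mul_le_mul_of_nonneg_right hsum hab
    _ = n * (a - b) * a^(n-1) := by ring


/-- `DStar d m n H` is the number of integer polynomials (not necessarily monic) of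
degree `d` and height at most `H` that are a composition `g ∘ h` with `deg g = m`,
`deg h = n`. -/
noncomputable def DStar (d m n : ℕ) (H : ℕ) : ℕ :=
  Nat.card {f : ℤ[X] // f.natDegree = d ∧ f ≠ 0 ∧ HeightLe f H ∧
    ∃ g h : ℤ[X], g.natDegree = m ∧ h.natDegree = n ∧ f = g.comp h}

theorem stmt_10 (d m n : ℕ) (hd : 4 ≤ d) (hm : 2 ≤ m) (hn : 2 ≤ n) (hmn : d = m * n)
    (hcond : m * (m + 1) ≤ 2 * (n - 1)) :
    ∃ c : ℝ, 0 < c ∧ ∀ H : ℕ, 2 ≤ H →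
      (DStar d m n H : ℝ) ≤ c * (H : ℝ) ^ (((m : ℝ) + 1) / 2 + (n : ℝ) / m) := by
  classical
  have hm1 : 1 ≤ m := by omega
  have hn1 : 1 ≤ n := by omega
  obtain ⟨M, hM⟩ : ∃ M, m * (m+1) = M + M := Nat.even_mul_succ_self m
  have hMn : M ≤ n - 1 := by omega
  set e : ℕ := n - 1 - M with he
  set A : ℕ := ⌈Atot m n d⌉₊ + 1 with hA
  have hA1 : 1 ≤ A := by omega
  have hAtot : Atot m n d ≤ (A:ℝ) := by
    calc Atot m n d ≤ (⌈Atot m n d⌉₊ : ℝ) := Nat.le_ceil _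
      _ ≤ (A:ℝ) := by rw [hA]; push_cast; linarith
  have hA0R : (0:ℝ) < A := by exact_mod_cast hA1
  set q : ℝ := (((e+1:ℕ)):ℝ) / (m:ℝ) with hq
  set c : ℝ := (2*(n:ℝ)) * 3^(n-1) * 3^(m+1) * ((A:ℝ)^(m+1) * (A:ℝ) ^ q) with hc
  have hc0 : 0 < c := by
    rw [hc]
    have h1 : (0:ℝ) < (A:ℝ) ^ q := Real.rpow_pos_of_pos hA0R q
    have h2 : (0:ℝ) < (n:ℝ) := by exact_mod_cast hn1
    positivity
  refine ⟨c, hc0, ?_⟩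
  intro H hH
  have hH1 : 1 ≤ H := by omega
  set AH : ℕ := A * H with hAH
  have hAH1 : 1 ≤ AH := Nat.one_le_iff_ne_zero.2 (by positivity)
  set V' : ℕ := ⌊((AH:ℕ):ℝ) ^ ((1:ℝ)/(m:ℝ))⌋₊ with hV'
  set Wbox : ℕ → Finset (Fin n → ℤ) := fun v =>
    (Fintype.piFinset fun _ => Finset.Icc (-(v:ℤ)) (v:ℤ)) \
    (Fintype.piFinset fun _ => Finset.Icc (-((v:ℤ)-1)) ((v:ℤ)-1)) with hWbox
  set Cbox : ℕ → Finset (Fin (m+1) → ℤ) := fun v =>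
    Fintype.piFinset fun i => Finset.Icc (-((AH:ℤ)/(v:ℤ)^(i:ℕ))) ((AH:ℤ)/(v:ℤ)^(i:ℕ)) with hCbox
  set F : Finset ((Fin n → ℤ) × (Fin (m+1) → ℤ)) :=
    (Finset.Icc 1 V').biUnion (fun v => (Wbox v) ×ˢ (Cbox v)) with hF
  -- Step 1 : DStar ≤ F.card
  have step1 : (DStar d m n H : ℝ) ≤ (F.card : ℝ) := by
    have hcard : DStar d m n H ≤ F.card := by
      set T := {f : ℤ[X] // f.natDegree = d ∧ f ≠ 0 ∧ HeightLe f H ∧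
        ∃ g h : ℤ[X], g.natDegree = m ∧ h.natDegree = n ∧ f = g.comp h} with hT
      have hDS : DStar d m n H = Nat.card T := rfl
      rw [hDS]
      have hDex : ∀ s : T, ∃ gh : ℤ[X] × ℤ[X], gh.1.natDegree = m ∧ gh.2.natDegree = n ∧
          s.val = gh.1.comp gh.2 ∧ gh.2.eval 0 = 0 :=
        fun s => normalized_decomp s.val m n hm1 hn1 s.prop.2.2.2
      choose D hD1 hD2 hD3 hD4 using hDex
      set w : T → (Fin n → ℤ) := fun s k => (D s).2.eval (((k:ℕ)+1 : ℕ) : ℤ) with hw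
      set cc : T → (Fin (m+1) → ℤ) := fun s i => (D s).1.coeff i with hcc
      set vv : T → ℕ := fun s => (Finset.Icc 1 n).sup
        (fun k : ℕ => ((D s).2.eval (k:ℤ)).natAbs) with hvv
      have hub : ∀ s : T, ∀ k : ℕ, k ≤ n → ((D s).2.eval (k:ℤ)).natAbs ≤ vv s := by
        intro s k hk
        rcases Nat.eq_zero_or_pos k with h0 | h1
        · subst h0
          simp only [Nat.cast_zero, hD4 s]
          simp
        · simp only [hvv]
          exact Finset.le_sup (f := fun k : ℕ => ((D s).2.eval (k:ℤ)).natAbs)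
            (Finset.mem_Icc.mpr ⟨h1, hk⟩)
      have hattain : ∀ s : T, ∃ k₀ : ℕ, 1 ≤ k₀ ∧ k₀ ≤ n ∧
          ((D s).2.eval (k₀:ℤ)).natAbs = vv s := by
        intro s
        have hne : (Finset.Icc 1 n).Nonempty := ⟨1, Finset.mem_Icc.mpr ⟨le_rfl, hn1⟩⟩
        obtain ⟨k₀, hk₀mem, hk₀⟩ := Finset.exists_mem_eq_sup (Finset.Icc 1 n) hne
          (fun k : ℕ => ((D s).2.eval (k:ℤ)).natAbs)
        rw [Finset.mem_Icc] at hk₀mem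
        refine ⟨k₀, hk₀mem.1, hk₀mem.2, ?_⟩
        simp only [hvv]
        exact hk₀.symm
      have hv1 : ∀ s : T, 1 ≤ vv s := by
        intro s
        by_contra hcon
        have hv0 : vv s = 0 := by omega
        have hzero : (D s).2 = 0 := by
          apply int_poly_eq_on (D s).2 0 n (le_of_eq (hD2 s)) (by simp)
          intro k hk
          have := hub s k hk
          rw [hv0, Nat.le_zero, Int.natAbs_eq_zero] at this
          simp [this]
        have := hD2 s
        rw [hzero] at this
        simp at this
        omega
      have hgi : ∀ s : T, ∀ i, i ≤ m → |(D s).1.coeff i| * (vv s:ℤ)^i ≤ (AH:ℤ) := by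
        intro s i hi
        have hk := key m n d H hm1 hn1 hH1 s.val (D s).1 (D s).2
          (le_of_eq s.prop.1) s.prop.2.2.1 (le_of_eq (hD1 s)) (le_of_eq (hD2 s))
          (hD4 s) (hD3 s) (vv s) (hv1 s) (fun k hk => hub s k hk)
          (by obtain ⟨k₀, _, hk₀n, hk₀⟩ := hattain s; exact ⟨k₀, hk₀n, hk₀⟩) i hi
        have h2 : Atot m n d * H ≤ ((AH:ℕ):ℝ) := by
          have hAHr : ((AH:ℕ):ℝ) = (A:ℝ) * (H:ℝ) := by rw [hAH, Nat.cast_mul]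
          rw [hAHr]
          exact mul_le_mul_of_nonneg_right hAtot (Nat.cast_nonneg H)
        have h3 : |(((D s).1.coeff i : ℤ) : ℝ)| * ((vv s : ℕ):ℝ)^i ≤ ((AH:ℕ):ℝ) :=
          le_trans hk h2
        have h4 : ((|(D s).1.coeff i| * (vv s:ℤ)^i : ℤ) : ℝ) ≤ ((AH:ℕ):ℝ) := by
          push_cast [Int.cast_abs]
          exact h3
        exact_mod_cast h4
      have hvm : ∀ s : T, (vv s)^m ≤ AH := by
        intro s
        have hgne : (D s).1 ≠ 0 := by
          intro h0
          have := hD1 s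
          rw [h0] at this
          simp at this
          omega
        have hlc : (D s).1.coeff m ≠ 0 := by
          rw [← hD1 s]
          exact Polynomial.leadingCoeff_ne_zero.mpr hgne
        have h1 : (1:ℤ) ≤ |(D s).1.coeff m| := Int.one_le_abs (by exact_mod_cast hlc)
        have h2 : ((vv s:ℤ))^m ≤ (AH:ℤ) := by
          calc ((vv s:ℤ))^m ≤ |(D s).1.coeff m| * (vv s:ℤ)^m := by
                apply le_mul_of_one_le_left (by positivity) h1
            _ ≤ (AH:ℤ) := hgi s m le_rfl
        exact_mod_cast h2
      have hvV : ∀ s : T, vv s ≤ V' := by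
        intro s
        apply Nat.le_floor
        have h1 : ((vv s:ℝ))^m ≤ ((AH:ℕ):ℝ) := by exact_mod_cast hvm s
        have h2 : (((vv s:ℝ))^m) ^ ((1:ℝ)/(m:ℝ)) ≤ ((AH:ℕ):ℝ) ^ ((1:ℝ)/(m:ℝ)) := by
          apply Real.rpow_le_rpow (by positivity) h1 (by positivity)
        have hm0 : (m:ℝ) ≠ 0 := by
          have : (0:ℝ) < m := by exact_mod_cast hm1
          linarith
        have h3 : (((vv s:ℝ))^m) ^ ((1:ℝ)/(m:ℝ)) = ((vv s:ℕ):ℝ) := by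
          rw [← Real.rpow_natCast ((vv s:ℕ):ℝ) m, ← Real.rpow_mul (Nat.cast_nonneg _)]
          rw [mul_one_div, div_self hm0, Real.rpow_one]
        rw [h3] at h2
        exact h2
      have hmem : ∀ s : T, (w s, cc s) ∈ F := by
        intro s
        rw [hF]
        apply Finset.mem_biUnion.mpr
        refine ⟨vv s, Finset.mem_Icc.mpr ⟨hv1 s, hvV s⟩, ?_⟩
        apply Finset.mem_product.mpr
        constructor
        · -- Wbox
          rw [hWbox]
          apply Finset.mem_sdiff.mpr
          constructor
          · apply Fintype.mem_piFinset.mpr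
            intro k
            have hk1 : (k:ℕ)+1 ≤ n := by omega
            have h1 : ((D s).2.eval ((((k:ℕ)+1 : ℕ)):ℤ)).natAbs ≤ vv s := hub s ((k:ℕ)+1) hk1
            have h2 : |w s k| ≤ (vv s : ℤ) := by
              rw [hw]
              simp only []
              rw [Int.abs_eq_natAbs]
              exact_mod_cast h1
            rw [Finset.mem_Icc]
            constructor
            · linarith [(abs_le.mp h2).1]
            · exact (abs_le.mp h2).2
          · intro hsm
            obtain ⟨k₀, hk₀1, hk₀n, hk₀⟩ := hattain s
            set j : Fin n := ⟨k₀ - 1, by omega⟩ with hj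
            have hjmem := Fintype.mem_piFinset.mp hsm j
            rw [Finset.mem_Icc] at hjmem
            have hwj : w s j = (D s).2.eval (k₀:ℤ) := by
              rw [hw]
              simp only [hj]
              congr 1
              push_cast
              omega
            have habs : |w s j| = (vv s : ℤ) := by
              rw [hwj, Int.abs_eq_natAbs, hk₀]
            have h1 : |w s j| ≤ (vv s:ℤ) - 1 := abs_le.mpr ⟨by linarith [hjmem.1], hjmem.2⟩
            rw [habs] at h1
            have := hv1 s
            omega
        · -- Cbox
          rw [hCbox]
          apply Fintype.mem_piFinset.mpr
          intro i
          have hpow : (0:ℤ) < (vv s:ℤ)^(i:ℕ) := by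
            apply pow_pos
            exact_mod_cast hv1 s
          have hile : (i:ℕ) ≤ m := by omega
          have h1 : |cc s i| * (vv s:ℤ)^(i:ℕ) ≤ (AH:ℤ) := hgi s i hile
          have h2 : |cc s i| ≤ (AH:ℤ)/(vv s:ℤ)^(i:ℕ) :=
            (Int.le_ediv_iff_mul_le hpow).mpr h1
          rw [Finset.mem_Icc]
          exact ⟨by linarith [(abs_le.mp h2).1], (abs_le.mp h2).2⟩
      have hinj : Function.Injective (fun s : T => ((w s, cc s) :
          (Fin n → ℤ) × (Fin (m+1) → ℤ))) := by
        intro s t hst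
        simp only [Prod.mk.injEq] at hst
        obtain ⟨hws, hcs⟩ := hst
        have hgeq : (D s).1 = (D t).1 := by
          ext i
          rcases le_or_gt i m with hi | hi
          · have := congrFun hcs ⟨i, by omega⟩
            simpa [hcc] using this
          · rw [Polynomial.coeff_eq_zero_of_natDegree_lt (by rw [hD1 s]; omega),
              Polynomial.coeff_eq_zero_of_natDegree_lt (by rw [hD1 t]; omega)]
        have hheq : (D s).2 = (D t).2 := by
          apply int_poly_eq_on _ _ n (le_of_eq (hD2 s)) (le_of_eq (hD2 t))
          intro k hk
          rcases Nat.eq_zero_or_pos k with h0 | h1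
          · subst h0
            simp only [Nat.cast_zero]
            rw [hD4 s, hD4 t]
          · have := congrFun hws ⟨k - 1, by omega⟩
            simp only [hw] at this
            have hcast : (((k - 1 : ℕ) + 1 : ℕ) : ℤ) = (k:ℤ) := by
              push_cast [Nat.sub_add_cancel h1]
              ring
            rw [hcast] at this
            exact this
        apply Subtype.ext
        rw [hD3 s, hD3 t, hgeq, hheq]
      calc Nat.card T ≤ Nat.card ↥F := by
            apply Nat.card_le_card_of_injective
              (fun s : T => (⟨(w s, cc s), hmem s⟩ : ↥F))
            intro s t hst
            apply hinj
            simpa using congrArg Subtype.val hst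
        _ = F.card := Nat.card_eq_finsetCard F
    exact_mod_cast hcard
  -- Step 2 : card bound
  have step2 : (F.card : ℝ) ≤ c * (H : ℝ) ^ (((m : ℝ) + 1) / 2 + (n : ℝ) / m) := by
    have hMne : M + e = n - 1 := by omega
    have hn1M : n - 1 = M + e := hMne.symm
    have hAHr : ((AH:ℕ):ℝ) = (A:ℝ) * (H:ℝ) := by rw [hAH, Nat.cast_mul]
    have hAH0 : (0:ℝ) ≤ ((AH:ℕ):ℝ) := Nat.cast_nonneg _
    have hm0 : (m:ℝ) ≠ 0 := by
      have : (0:ℝ) < m := by exact_mod_cast hm1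
      linarith
    -- per-v bound on the product card
    have hprodcard : ∀ v : ℕ, v ∈ Finset.Icc 1 V' →
        (((Wbox v) ×ˢ (Cbox v)).card : ℝ) ≤
          (2*(n:ℝ)*3^(n-1)) * (3^(m+1) * ((AH:ℕ):ℝ)^(m+1)) * ((V':ℕ):ℝ)^e := by
      intro v hv
      rw [Finset.mem_Icc] at hv
      obtain ⟨hv1, hvV⟩ := hv
      have hv1R : (1:ℝ) ≤ (v:ℝ) := by exact_mod_cast hv1
      have hv0R : (0:ℝ) < (v:ℝ) := by linarith
      -- v^m ≤ AH
      have hvmR : ((v:ℝ))^m ≤ ((AH:ℕ):ℝ) := by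
        have h1 : (v:ℝ) ≤ ((V':ℕ):ℝ) := by exact_mod_cast hvV
        have h2 : ((V':ℕ):ℝ) ≤ ((AH:ℕ):ℝ) ^ ((1:ℝ)/(m:ℝ)) := by
          rw [hV']
          exact Nat.floor_le (Real.rpow_nonneg hAH0 _)
        have h3 : (v:ℝ) ≤ ((AH:ℕ):ℝ) ^ ((1:ℝ)/(m:ℝ)) := le_trans h1 h2
        calc ((v:ℝ))^m ≤ (((AH:ℕ):ℝ) ^ ((1:ℝ)/(m:ℝ)))^m :=
              pow_le_pow_left₀ (by linarith) h3 m
          _ = ((AH:ℕ):ℝ) := by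
              rw [← Real.rpow_natCast (((AH:ℕ):ℝ) ^ ((1:ℝ)/(m:ℝ))) m,
                ← Real.rpow_mul hAH0, one_div_mul_eq_div, div_self hm0, Real.rpow_one]
      -- Wbox card
      have hWcard : ((Wbox v).card : ℝ) ≤ 2*(n:ℝ)*3^(n-1)*(v:ℝ)^(n-1) := by
        rw [hWbox]
        have hsub : (Fintype.piFinset fun _ : Fin n => Finset.Icc (-((v:ℤ)-1)) ((v:ℤ)-1)) ⊆
            (Fintype.piFinset fun _ : Fin n => Finset.Icc (-(v:ℤ)) (v:ℤ)) := by
          apply Fintype.piFinset_subset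
          intro a
          apply Finset.Icc_subset_Icc <;> omega
        rw [Finset.card_sdiff_of_subset hsub]
        have hbig : (Fintype.piFinset fun _ : Fin n => Finset.Icc (-(v:ℤ)) (v:ℤ)).card
            = (2*v+1)^n := by
          rw [Fintype.card_piFinset]
          have h' : (Finset.Icc (-(v:ℤ)) (v:ℤ)).card = 2*v+1 := by
            rw [Int.card_Icc]; omega
          rw [Finset.prod_const, h', Finset.card_univ, Fintype.card_fin]
        have hsmall : (Fintype.piFinset fun _ : Fin n => Finset.Icc (-((v:ℤ)-1)) ((v:ℤ)-1)).card
            = (2*v-1)^n := by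
          rw [Fintype.card_piFinset]
          have h' : (Finset.Icc (-((v:ℤ)-1)) ((v:ℤ)-1)).card = 2*v-1 := by
            rw [Int.card_Icc]; omega
          rw [Finset.prod_const, h', Finset.card_univ, Fintype.card_fin]
        rw [hbig, hsmall]
        have hle : (2*v-1)^n ≤ (2*v+1)^n := Nat.pow_le_pow_left (by omega) n
        rw [Nat.cast_sub hle]
        have hc1 : ((2*v+1 : ℕ):ℝ) = 2*(v:ℝ)+1 := by push_cast; ring
        have hc2 : ((2*v-1 : ℕ):ℝ) = 2*(v:ℝ)-1 := by
          have : (2*v-1 : ℕ) = 2*(v-1)+1 := by omega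
          rw [this]
          push_cast [Nat.cast_sub hv1]
          ring
        rw [Nat.cast_pow, Nat.cast_pow, hc1, hc2]
        have hkey := pow_sub_pow_le_real (2*(v:ℝ)+1) (2*(v:ℝ)-1) n (by linarith) (by linarith)
        calc (2*(v:ℝ)+1)^n - (2*(v:ℝ)-1)^n
            ≤ (n:ℝ) * ((2*(v:ℝ)+1) - (2*(v:ℝ)-1)) * (2*(v:ℝ)+1)^(n-1) := hkey
          _ = 2*(n:ℝ) * (2*(v:ℝ)+1)^(n-1) := by ring
          _ ≤ 2*(n:ℝ) * (3*(v:ℝ))^(n-1) := by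
              apply mul_le_mul_of_nonneg_left _ (by positivity)
              apply pow_le_pow_left₀ (by linarith) (by linarith)
          _ = 2*(n:ℝ)*3^(n-1)*(v:ℝ)^(n-1) := by rw [mul_pow]; ring
      -- Cbox card
      have hCcard : ((Cbox v).card : ℝ) ≤ 3^(m+1) * ((AH:ℕ):ℝ)^(m+1) / (v:ℝ)^M := by
        rw [hCbox, Fintype.card_piFinset, Nat.cast_prod]
        have hterm : ∀ i : Fin (m+1),
            (((Finset.Icc (-((AH:ℤ)/(v:ℤ)^(i:ℕ))) ((AH:ℤ)/(v:ℤ)^(i:ℕ))).card : ℕ) : ℝ)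
              ≤ 3 * ((AH:ℕ):ℝ) / (v:ℝ)^(i:ℕ) := by
          intro i
          set B : ℤ := (AH:ℤ)/(v:ℤ)^(i:ℕ) with hB
          have hpowpos : (0:ℤ) < (v:ℤ)^(i:ℕ) := by
            apply pow_pos; exact_mod_cast hv1
          have hB0 : (0:ℤ) ≤ B := Int.ediv_nonneg (by positivity) (le_of_lt hpowpos)
          have hcard : (Finset.Icc (-B) B).card = (2*B+1).toNat := by
            rw [Int.card_Icc]; congr 1; ring
          rw [hcard]
          have hcast : (((2*B+1).toNat : ℕ):ℝ) = 2*(B:ℝ)+1 := by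
            have h' : (((2*B+1).toNat : ℕ) : ℤ) = 2*B+1 := Int.toNat_of_nonneg (by omega)
            calc (((2*B+1).toNat : ℕ):ℝ) = ((((2*B+1).toNat : ℕ) : ℤ) : ℝ) := by push_cast; ring
              _ = ((2*B+1 : ℤ) : ℝ) := by rw [h']
              _ = 2*(B:ℝ)+1 := by push_cast; ring
          rw [hcast]
          have hBle : (B:ℝ) ≤ ((AH:ℕ):ℝ) / (v:ℝ)^(i:ℕ) := by
            have h1 : B * (v:ℤ)^(i:ℕ) ≤ (AH:ℤ) := Int.ediv_mul_le _ (ne_of_gt hpowpos)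
            have h2 : (B:ℝ) * (v:ℝ)^(i:ℕ) ≤ ((AH:ℕ):ℝ) := by exact_mod_cast h1
            rw [le_div_iff₀ (by positivity)]
            exact h2
          have hone : (1:ℝ) ≤ ((AH:ℕ):ℝ) / (v:ℝ)^(i:ℕ) := by
            rw [le_div_iff₀ (by positivity), one_mul]
            calc (v:ℝ)^(i:ℕ) ≤ (v:ℝ)^m := pow_le_pow_right₀ hv1R (by omega)
              _ ≤ ((AH:ℕ):ℝ) := hvmR
          calc 2*(B:ℝ)+1 ≤ 2*(((AH:ℕ):ℝ) / (v:ℝ)^(i:ℕ)) + (((AH:ℕ):ℝ) / (v:ℝ)^(i:ℕ)) := by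
                linarith
            _ = 3 * ((AH:ℕ):ℝ) / (v:ℝ)^(i:ℕ) := by ring
        calc (∏ i : Fin (m+1),
              (((Finset.Icc (-((AH:ℤ)/(v:ℤ)^(i:ℕ))) ((AH:ℤ)/(v:ℤ)^(i:ℕ))).card : ℕ) : ℝ))
            ≤ ∏ i : Fin (m+1), (3 * ((AH:ℕ):ℝ) / (v:ℝ)^(i:ℕ)) := by
              apply Finset.prod_le_prod
              · intro i _; exact Nat.cast_nonneg _
              · intro i _; exact hterm i
          _ = (3 * ((AH:ℕ):ℝ))^(m+1) / ∏ i : Fin (m+1), (v:ℝ)^(i:ℕ) := by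
              rw [Finset.prod_div_distrib, Finset.prod_const]
              simp
          _ = 3^(m+1) * ((AH:ℕ):ℝ)^(m+1) / (v:ℝ)^M := by
              rw [Finset.prod_pow_eq_pow_sum]
              have hsum : (∑ i : Fin (m+1), (i:ℕ)) = M := by
                rw [Fin.sum_univ_eq_sum_range (fun i => i) (m+1)]
                have h1 := Finset.sum_range_id_mul_two (m+1)
                have h2 : (m+1) * ((m+1) - 1) = M + M := by
                  rw [Nat.add_sub_cancel, Nat.mul_comm]
                  exact hM
                omega
              rw [hsum, mul_pow]
        -- end hCcard
      calc (((Wbox v) ×ˢ (Cbox v)).card : ℝ)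
          = ((Wbox v).card : ℝ) * ((Cbox v).card : ℝ) := by
            rw [Finset.card_product]; push_cast; ring
        _ ≤ (2*(n:ℝ)*3^(n-1)*(v:ℝ)^(n-1)) * (3^(m+1) * ((AH:ℕ):ℝ)^(m+1) / (v:ℝ)^M) := by
            apply mul_le_mul hWcard hCcard (Nat.cast_nonneg _) (by positivity)
        _ = (2*(n:ℝ)*3^(n-1)) * (3^(m+1) * ((AH:ℕ):ℝ)^(m+1)) * ((v:ℝ)^(n-1) / (v:ℝ)^M) := by
            ring
        _ ≤ (2*(n:ℝ)*3^(n-1)) * (3^(m+1) * ((AH:ℕ):ℝ)^(m+1)) * ((V':ℕ):ℝ)^e := by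
            apply mul_le_mul_of_nonneg_left _ (by positivity)
            have hveq : (v:ℝ)^(n-1) / (v:ℝ)^M = (v:ℝ)^e := by
              rw [hn1M, pow_add]
              field_simp
            rw [hveq]
            apply pow_le_pow_left₀ (by positivity) (by exact_mod_cast hvV)
    -- sum up
    have hsum : (F.card : ℝ) ≤ ((V':ℕ):ℝ) *
        ((2*(n:ℝ)*3^(n-1)) * (3^(m+1) * ((AH:ℕ):ℝ)^(m+1)) * ((V':ℕ):ℝ)^e) := by
      have h1 : F.card ≤ ∑ v ∈ Finset.Icc 1 V', ((Wbox v) ×ˢ (Cbox v)).card := by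
        rw [hF]
        exact Finset.card_biUnion_le
      calc (F.card : ℝ) ≤ (∑ v ∈ Finset.Icc 1 V', (((Wbox v) ×ˢ (Cbox v)).card : ℝ)) := by
            exact_mod_cast h1
        _ ≤ ∑ v ∈ Finset.Icc 1 V',
            ((2*(n:ℝ)*3^(n-1)) * (3^(m+1) * ((AH:ℕ):ℝ)^(m+1)) * ((V':ℕ):ℝ)^e) :=
            Finset.sum_le_sum hprodcard
        _ = ((Finset.Icc 1 V').card : ℝ) *
            ((2*(n:ℝ)*3^(n-1)) * (3^(m+1) * ((AH:ℕ):ℝ)^(m+1)) * ((V':ℕ):ℝ)^e) := by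
            rw [Finset.sum_const, nsmul_eq_mul]
        _ ≤ ((V':ℕ):ℝ) *
            ((2*(n:ℝ)*3^(n-1)) * (3^(m+1) * ((AH:ℕ):ℝ)^(m+1)) * ((V':ℕ):ℝ)^e) := by
            apply mul_le_mul_of_nonneg_right _ (by positivity)
            have : (Finset.Icc 1 V').card ≤ V' := by
              rw [Nat.card_Icc]; omega
            exact_mod_cast this
    -- convert to rpow form
    have hVe : ((V':ℕ):ℝ) * ((V':ℕ):ℝ)^e = ((V':ℕ):ℝ)^(e+1) := by
      rw [pow_succ]; ring
    have hVrpow : ((V':ℕ):ℝ)^(e+1) ≤ ((AH:ℕ):ℝ) ^ q := by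
      have h2 : ((V':ℕ):ℝ) ≤ ((AH:ℕ):ℝ) ^ ((1:ℝ)/(m:ℝ)) := by
        rw [hV']
        exact Nat.floor_le (Real.rpow_nonneg hAH0 _)
      calc ((V':ℕ):ℝ)^(e+1) ≤ (((AH:ℕ):ℝ) ^ ((1:ℝ)/(m:ℝ)))^(e+1) :=
            pow_le_pow_left₀ (Nat.cast_nonneg _) h2 _
        _ = ((AH:ℕ):ℝ) ^ q := by
            rw [← Real.rpow_natCast (((AH:ℕ):ℝ) ^ ((1:ℝ)/(m:ℝ))) (e+1),
              ← Real.rpow_mul hAH0]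
            congr 1
            rw [hq]
            push_cast
            ring
    have hH0 : (0:ℝ) < (H:ℝ) := by
      have : (0:ℕ) < H := by omega
      exact_mod_cast this
    have hexp : ((m:ℝ)+1) + q = ((m : ℝ) + 1) / 2 + (n : ℝ) / m := by
      have hMcast : (M:ℝ) = (m:ℝ)*((m:ℝ)+1)/2 := by
        have : ((m * (m+1) : ℕ) : ℝ) = ((M + M : ℕ) : ℝ) := by rw [hM]
        push_cast at this
        linarith
      have hecast : ((e:ℕ):ℝ) + 1 = (n:ℝ) - (M:ℝ) := by
        have h1 : e + 1 + M = n := by omega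
        have : ((e + 1 + M : ℕ):ℝ) = (n:ℝ) := by rw [h1]
        push_cast at this
        linarith
      rw [hq]
      push_cast
      rw [show ((e:ℝ) + 1) = (n:ℝ) - (M:ℝ) by exact_mod_cast hecast, hMcast]
      field_simp
      ring
    calc (F.card : ℝ) ≤ ((V':ℕ):ℝ) *
        ((2*(n:ℝ)*3^(n-1)) * (3^(m+1) * ((AH:ℕ):ℝ)^(m+1)) * ((V':ℕ):ℝ)^e) := hsum
      _ = (2*(n:ℝ)*3^(n-1)) * 3^(m+1) * ((AH:ℕ):ℝ)^(m+1) * (((V':ℕ):ℝ) * ((V':ℕ):ℝ)^e) := by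
          ring
      _ ≤ (2*(n:ℝ)*3^(n-1)) * 3^(m+1) * ((AH:ℕ):ℝ)^(m+1) * (((AH:ℕ):ℝ) ^ q) := by
          apply mul_le_mul_of_nonneg_left _ (by positivity)
          rw [hVe]
          exact hVrpow
      _ = (2*(n:ℝ)*3^(n-1)) * 3^(m+1) * ((A:ℝ)^(m+1) * ((A:ℝ))^q)
            * ((H:ℝ)^(m+1) * ((H:ℝ))^q) := by
          rw [hAHr, Real.mul_rpow (Nat.cast_nonneg A) (Nat.cast_nonneg H), mul_pow]
          ring
      _ = c * ((H:ℝ)^(m+1) * ((H:ℝ))^q) := by rw [hc]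
      _ = c * (H : ℝ) ^ (((m : ℝ) + 1) / 2 + (n : ℝ) / m) := by
          congr 1
          rw [← Real.rpow_natCast ((H:ℝ)) (m+1), ← Real.rpow_add hH0]
          congr 1
          rw [← hexp]
          push_cast
          ring
  exact le_trans step1 step2
end
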